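/- arXiv:2412.18861 — 6 statements merged into one kernel-verified Lean document; each statement's English description precedes it below -/
import Mathlib

section
/- For every ε > 0 there exist a finite simple connected graph G with at least one edge and an edge-weight function ω : E(G) → ℝ with ω(e) ≥ 0 for all e and ω(G) > 0, such that t_ω(G) < ε · u(G), where u(G) := (|V(G)| − 1)/|E(G)| is the uniform ratio of G. -/
open scoped Classical

noncomputable section

/-- Total weight of a graph: the sum of the weights of its edges. -/
def totalWeight {V : Type*} [Fintype V] (G : SimpleGraph V) (w : Sym2 V → ℝ) : ℝ :=
  ∑ e ∈ G.edgeFinset, w e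

/-- The maximum, over all spanning trees `T` of `G` (subgraphs on the full vertex
set that are trees), of the total weight of `T`. -/
def maxTreeWeight {V : Type*} [Fintype V] (G : SimpleGraph V) (w : Sym2 V → ℝ) : ℝ :=
  sSup {x | ∃ T : SimpleGraph V, T ≤ G ∧ T.IsTree ∧ x = ∑ e ∈ T.edgeFinset, w e}

namespace RatioGapAux

/-- Number of vertices: a path part with `m*m` edges plus a clique on `m` vertices. -/
def Nv (m : ℕ) : ℕ := m * m + m

/-- The graph: vertices `0, …, m*m` form a path, vertices `m*m, …, m*m+m-1` form a clique. -/
def Gr (m : ℕ) : SimpleGraph (Fin (Nv m)) where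
  Adj i j := i ≠ j ∧ (i.val + 1 = j.val ∨ j.val + 1 = i.val ∨ (m * m ≤ i.val ∧ m * m ≤ j.val))
  symm := by
    constructor
    intro i j h
    obtain ⟨h1, h2⟩ := h
    exact ⟨h1.symm, by tauto⟩
  loopless := by
    constructor
    intro i h
    exact h.1 rfl

lemma gr_adj {m : ℕ} {i j : Fin (Nv m)} :
    (Gr m).Adj i j ↔ i ≠ j ∧ (i.val + 1 = j.val ∨ j.val + 1 = i.val ∨ (m * m ≤ i.val ∧ m * m ≤ j.val)) :=
  Iff.rfl

/-- Weights: `1` on clique edges, `0` elsewhere. -/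
def wt (m : ℕ) : Sym2 (Fin (Nv m)) → ℝ :=
  Sym2.lift ⟨fun i j => if m * m ≤ i.val ∧ m * m ≤ j.val then 1 else 0,
    fun i j => by simp [and_comm]⟩

lemma wt_nonneg (m : ℕ) (e : Sym2 (Fin (Nv m))) : 0 ≤ wt m e := by
  induction e using Sym2.ind with
  | _ x y =>
    simp only [wt, Sym2.lift_mk]
    split <;> norm_num

lemma wt_le_one (m : ℕ) (e : Sym2 (Fin (Nv m))) : wt m e ≤ 1 := by
  induction e using Sym2.ind with
  | _ x y =>
    simp only [wt, Sym2.lift_mk]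
    split <;> norm_num

lemma wt_eq_one {m : ℕ} {x y : Fin (Nv m)} (hx : m * m ≤ x.val) (hy : m * m ≤ y.val) :
    wt m s(x, y) = 1 := by
  simp [wt, hx, hy]

lemma wt_eq_zero {m : ℕ} {x y : Fin (Nv m)} (hx : x.val < m * m) :
    wt m s(x, y) = 0 := by
  simp only [wt, Sym2.lift_mk]
  rw [if_neg]
  omega

lemma gr_connected {m : ℕ} (hm : 1 ≤ m) : (Gr m).Connected := by
  have h0 : 0 < Nv m := lt_of_lt_of_le hm (Nat.le_add_left m (m*m))
  have key : ∀ k : ℕ, ∀ i : Fin (Nv m), i.val = k → (Gr m).Reachable ⟨0, h0⟩ i := by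
    intro k
    induction k with
    | zero => intro i hi; exact ⟨SimpleGraph.Walk.nil.copy rfl (by apply Fin.ext; simp [hi])⟩
    | succ k ih =>
      intro i hi
      have hk : k < Nv m := by omega
      have hr := ih ⟨k, hk⟩ rfl
      refine hr.trans (SimpleGraph.Adj.reachable ?_)
      refine ⟨?_, Or.inl (by simp [hi])⟩
      apply Fin.ne_of_val_ne
      simp [hi]
  rw [SimpleGraph.connected_iff]
  exact ⟨fun a b => ((key a.val a rfl).symm).trans (key b.val b rfl), ⟨⟨0, h0⟩⟩⟩


/-- Embedding of the clique vertices. -/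
def emb (m : ℕ) (k : Fin m) : Fin (Nv m) :=
  ⟨m * m + k.val, by have := k.isLt; unfold Nv; omega⟩

lemma emb_injective (m : ℕ) : Function.Injective (emb m) := by
  intro a b h
  apply Fin.ext
  have := congrArg Fin.val h
  simp only [emb] at this
  omega

/-- The set of clique edges. -/
def cliqueEdges (m : ℕ) : Finset (Sym2 (Fin (Nv m))) :=
  ((⊤ : SimpleGraph (Fin m)).edgeFinset).image (Sym2.map (emb m))

lemma card_cliqueEdges (m : ℕ) : (cliqueEdges m).card = m.choose 2 := by
  rw [cliqueEdges, Finset.card_image_of_injective _ (Sym2.map.injective (emb_injective m)),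
    SimpleGraph.card_edgeFinset_top_eq_card_choose_two, Fintype.card_fin]

lemma cliqueEdges_subset (m : ℕ) : cliqueEdges m ⊆ (Gr m).edgeFinset := by
  intro e he
  rw [cliqueEdges, Finset.mem_image] at he
  obtain ⟨e', he', rfl⟩ := he
  induction e' using Sym2.ind with
  | _ x y =>
    rw [SimpleGraph.mem_edgeFinset, SimpleGraph.mem_edgeSet, SimpleGraph.top_adj] at he'
    rw [Sym2.map_pair_eq, SimpleGraph.mem_edgeFinset, SimpleGraph.mem_edgeSet, gr_adj]
    refine ⟨fun hc => he' (emb_injective m hc), Or.inr (Or.inr ?_)⟩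
    constructor <;> simp [emb]

lemma wt_cliqueEdges {m : ℕ} {e : Sym2 (Fin (Nv m))} (he : e ∈ cliqueEdges m) : wt m e = 1 := by
  rw [cliqueEdges, Finset.mem_image] at he
  obtain ⟨e', _, rfl⟩ := he
  induction e' using Sym2.ind with
  | _ x y =>
    rw [Sym2.map_pair_eq]
    exact wt_eq_one (by simp [emb]) (by simp [emb])

lemma mem_cliqueEdges {m : ℕ} {x y : Fin (Nv m)} (hxy : x ≠ y)
    (hx : m * m ≤ x.val) (hy : m * m ≤ y.val) : s(x, y) ∈ cliqueEdges m := by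
  have hx' : x.val - m * m < m := by have := x.isLt; unfold Nv at this; omega
  have hy' : y.val - m * m < m := by have := y.isLt; unfold Nv at this; omega
  rw [cliqueEdges, Finset.mem_image]
  refine ⟨s(⟨x.val - m * m, hx'⟩, ⟨y.val - m * m, hy'⟩), ?_, ?_⟩
  · rw [SimpleGraph.mem_edgeFinset, SimpleGraph.mem_edgeSet, SimpleGraph.top_adj]
    intro hc
    apply hxy
    apply Fin.ext
    have := congrArg Fin.val hc
    simp at this
    omega
  · rw [Sym2.map_pair_eq]
    have e1 : emb m ⟨x.val - m * m, hx'⟩ = x := by apply Fin.ext; simp [emb]; omega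
    have e2 : emb m ⟨y.val - m * m, hy'⟩ = y := by apply Fin.ext; simp [emb]; omega
    rw [e1, e2]

/-- Total weight is at least the number of clique edges. -/
lemma total_ge (m : ℕ) : (m.choose 2 : ℝ) ≤ ∑ e ∈ (Gr m).edgeFinset, wt m e := by
  have h1 : ∑ e ∈ cliqueEdges m, wt m e ≤ ∑ e ∈ (Gr m).edgeFinset, wt m e :=
    Finset.sum_le_sum_of_subset_of_nonneg (cliqueEdges_subset m)
      (fun e _ _ => wt_nonneg m e)
  calc (m.choose 2 : ℝ) = ∑ e ∈ cliqueEdges m, wt m e := by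
        rw [Finset.sum_congr rfl (fun e he => wt_cliqueEdges he), Finset.sum_const,
          card_cliqueEdges]
        simp
    _ ≤ _ := h1


/-- The path edges. -/
def pe (m : ℕ) (i : Fin (m * m)) : Sym2 (Fin (Nv m)) :=
  s((⟨i.val, by have := i.isLt; unfold Nv; omega⟩ : Fin (Nv m)),
    (⟨i.val + 1, by
      have h := i.isLt
      unfold Nv
      rcases Nat.eq_zero_or_pos m with rfl | h0
      · simp at h
      · omega⟩ : Fin (Nv m)))

def pathEdges (m : ℕ) : Finset (Sym2 (Fin (Nv m))) :=
  Finset.image (pe m) Finset.univ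

lemma pe_injective (m : ℕ) : Function.Injective (pe m) := by
  intro a b h
  rw [pe, pe, Sym2.eq_iff] at h
  apply Fin.ext
  rcases h with ⟨h1, h2⟩ | ⟨h1, h2⟩ <;> simp only [Fin.mk.injEq] at h1 h2 <;> omega

lemma card_pathEdges (m : ℕ) : (pathEdges m).card = m * m := by
  rw [pathEdges, Finset.card_image_of_injective _ (pe_injective m), Finset.card_univ,
    Fintype.card_fin]

lemma wt_pathEdges {m : ℕ} {e : Sym2 (Fin (Nv m))} (he : e ∈ pathEdges m) : wt m e = 0 := by
  rw [pathEdges, Finset.mem_image] at he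
  obtain ⟨i, _, rfl⟩ := he
  exact wt_eq_zero i.isLt

/-- Every spanning tree of `Gr m` contains all path edges. -/
lemma pathEdges_subset_tree {m : ℕ} {T : SimpleGraph (Fin (Nv m))} (hle : T ≤ Gr m)
    (hT : T.IsTree) : pathEdges m ⊆ T.edgeFinset := by
  intro e he
  rw [pathEdges, Finset.mem_image] at he
  obtain ⟨i, _, rfl⟩ := he
  have hi := i.isLt
  have hm1 : 1 ≤ m := by rcases Nat.eq_zero_or_pos m with rfl | h <;> omega
  have hb : (m * m : ℕ) < Nv m := by unfold Nv; omega
  obtain ⟨p⟩ := hT.isConnected ⟨i.val, by unfold Nv; omega⟩ ⟨m * m, hb⟩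
  obtain ⟨d, _, hdS, hdS'⟩ := p.exists_boundary_dart {v : Fin (Nv m) | v.val ≤ i.val}
    (by simp) (by simp)
  have hadj := hle d.adj
  rw [gr_adj] at hadj
  simp only [Set.mem_setOf_eq, not_le] at hdS hdS'
  have h1 : d.fst.val = i.val ∧ d.snd.val = i.val + 1 := by
    rcases hadj.2 with h | h | h
    · omega
    · omega
    · omega
  rw [SimpleGraph.mem_edgeFinset, pe, SimpleGraph.mem_edgeSet]
  have e1 : (⟨i.val, by unfold Nv; omega⟩ : Fin (Nv m)) = d.fst := by
    apply Fin.ext; simp [h1.1]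
  have e2 : (⟨i.val + 1, by unfold Nv; omega⟩ : Fin (Nv m)) = d.snd := by
    apply Fin.ext; simp [h1.2]
  rw [e1, e2]
  exact d.adj

/-- The weight of any spanning tree is at most `m - 1`. -/
lemma tree_weight_le {m : ℕ} (hm : 1 ≤ m) {T : SimpleGraph (Fin (Nv m))} (hle : T ≤ Gr m)
    (hT : T.IsTree) : ∑ e ∈ T.edgeFinset, wt m e ≤ (m : ℝ) - 1 := by
  have hsub := pathEdges_subset_tree hle hT
  have hcard : T.edgeFinset.card = m * m + m - 1 := by
    have h2 : T.edgeFinset.card + 1 = Nv m := hT.card_edgeFinset.trans (Fintype.card_fin _)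
    have hNv : Nv m = m * m + m := rfl
    omega
  have hsplit := Finset.sum_sdiff (f := wt m) hsub
  have hzero : ∑ e ∈ pathEdges m, wt m e = 0 :=
    Finset.sum_eq_zero (fun e he => wt_pathEdges he)
  have hbound : ∑ e ∈ T.edgeFinset \ pathEdges m, wt m e ≤
      ((T.edgeFinset \ pathEdges m).card : ℝ) := by
    calc ∑ e ∈ T.edgeFinset \ pathEdges m, wt m e
        ≤ ∑ _e ∈ T.edgeFinset \ pathEdges m, (1 : ℝ) :=
          Finset.sum_le_sum (fun e _ => wt_le_one m e)
      _ = _ := by rw [Finset.sum_const]; simp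
  have hc : (T.edgeFinset \ pathEdges m).card = m - 1 := by
    rw [Finset.card_sdiff_of_subset hsub, hcard, card_pathEdges]
    omega
  have : ∑ e ∈ T.edgeFinset, wt m e ≤ ((m : ℝ) - 1) := by
    rw [← hsplit, hzero, add_zero]
    refine hbound.trans ?_
    rw [hc]
    have : ((m - 1 : ℕ) : ℝ) = (m : ℝ) - 1 := by
      have : (1 : ℕ) ≤ m := hm
      push_cast [this]
      ring
    rw [this]
  exact this

/-- Bound on the number of edges. -/
lemma card_edges_le (m : ℕ) : (Gr m).edgeFinset.card ≤ Nv m + m.choose 2 := by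
  have h1 : ((Gr m).edgeFinset \ cliqueEdges m).card ≤ Nv m := by
    have : ((Gr m).edgeFinset \ cliqueEdges m).card ≤ (Finset.univ : Finset (Fin (Nv m))).card := by
      apply Finset.card_le_card_of_injOn (fun e => Sym2.lift ⟨min, fun a b => min_comm a b⟩ e)
        (fun _ _ => Finset.mem_univ _)
      intro e1 he1 e2 he2 hmin
      have key : ∀ e ∈ (Gr m).edgeFinset \ cliqueEdges m,
          ∃ x y : Fin (Nv m), e = s(x, y) ∧ y.val = x.val + 1 := by
        intro e he
        rw [Finset.mem_sdiff] at he
        obtain ⟨heE, heC⟩ := he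
        induction e using Sym2.ind with
        | _ x y =>
          rw [SimpleGraph.mem_edgeFinset, SimpleGraph.mem_edgeSet, gr_adj] at heE
          rcases heE.2 with h | h | h
          · exact ⟨x, y, rfl, h.symm⟩
          · exact ⟨y, x, Sym2.eq_swap, h.symm⟩
          · exact absurd (mem_cliqueEdges heE.1 h.1 h.2) heC
      obtain ⟨x1, y1, rfl, h1⟩ := key e1 he1
      obtain ⟨x2, y2, rfl, h2⟩ := key e2 he2
      have hm1 : min x1 y1 = x1 := min_eq_left (Fin.le_of_lt (by rw [Fin.lt_def]; omega))
      have hm2 : min x2 y2 = x2 := min_eq_left (Fin.le_of_lt (by rw [Fin.lt_def]; omega))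
      simp only [Sym2.lift_mk, hm1, hm2] at hmin
      subst hmin
      have : y1 = y2 := Fin.ext (by omega)
      rw [this]
    simpa using this
  calc (Gr m).edgeFinset.card ≤ ((Gr m).edgeFinset \ cliqueEdges m).card + (cliqueEdges m).card := by
        calc (Gr m).edgeFinset.card
            ≤ ((Gr m).edgeFinset \ cliqueEdges m ∪ cliqueEdges m).card :=
              Finset.card_le_card (fun e he => by
                by_cases hc : e ∈ cliqueEdges m
                · exact Finset.mem_union_right _ hc
                · exact Finset.mem_union_left _ (Finset.mem_sdiff.mpr ⟨he, hc⟩))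
          _ ≤ _ := Finset.card_union_le _ _
    _ ≤ Nv m + m.choose 2 := by rw [card_cliqueEdges]; omega

end RatioGapAux

open RatioGapAux

/-- For every `ε > 0` there are a finite simple connected graph `G` with at least one
edge and a nonnegative edge-weight function `w` with positive total weight, whose
weighting ratio `t_w(G)` is less than `ε` times the uniform ratio
`u(G) = (|V(G)| - 1)/|E(G)|`. -/
theorem ratio_gap (ε : ℝ) (hε : 0 < ε) :
    ∃ (n : ℕ) (G : SimpleGraph (Fin n)) (w : Sym2 (Fin n) → ℝ),
      G.Connected ∧ G.edgeFinset.Nonempty ∧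
      (∀ e ∈ G.edgeFinset, 0 ≤ w e) ∧ 0 < totalWeight G w ∧
      maxTreeWeight G w / totalWeight G w <
        ε * (((Fintype.card (Fin n) : ℝ) - 1) / (G.edgeFinset.card : ℝ)) := by
  set m : ℕ := ⌈4 / ε⌉₊ + 2 with hmdef
  have hm2 : 2 ≤ m := by omega
  have hm1 : 1 ≤ m := by omega
  have hmR : (2 : ℝ) ≤ (m : ℝ) := by exact_mod_cast hm2
  have hmpos : (0 : ℝ) < (m : ℝ) := by linarith
  have h5 : 4 < ε * m := by
    have h1 : (4 / ε : ℝ) ≤ (⌈4 / ε⌉₊ : ℕ) := Nat.le_ceil _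
    have h2 : ((⌈4 / ε⌉₊ : ℕ) : ℝ) < m := by
      rw [hmdef]; push_cast; linarith
    have : 4 / ε < (m : ℝ) := lt_of_le_of_lt h1 h2
    calc (4 : ℝ) = 4 / ε * ε := by field_simp
      _ < (m : ℝ) * ε := by
          apply mul_lt_mul_of_pos_right this hε
      _ = ε * m := by ring
  refine ⟨Nv m, Gr m, wt m, gr_connected hm1, ?_, fun e _ => wt_nonneg m e, ?_, ?_⟩
  · -- nonempty edge set
    have hCne : (cliqueEdges m).Nonempty := by
      rw [← Finset.card_pos, card_cliqueEdges]
      exact Nat.choose_pos hm2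
    exact hCne.mono (cliqueEdges_subset m)
  · -- positive total weight
    have := total_ge m
    have hcpos : (0 : ℝ) < (m.choose 2 : ℝ) := by
      exact_mod_cast Nat.choose_pos hm2
    rw [totalWeight]
    linarith
  · -- main inequality
    have hchoose : ((m.choose 2 : ℕ) : ℝ) = (m : ℝ) * ((m : ℝ) - 1) / 2 :=
      Nat.cast_choose_two (K := ℝ) m
    have htot : (m : ℝ) * ((m : ℝ) - 1) / 2 ≤ totalWeight (Gr m) (wt m) := by
      rw [totalWeight, ← hchoose]; exact total_ge m
    have htotpos : 0 < totalWeight (Gr m) (wt m) := by nlinarith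
    have hM : maxTreeWeight (Gr m) (wt m) ≤ (m : ℝ) - 1 := by
      rw [maxTreeWeight]
      apply Real.sSup_le
      · rintro x ⟨T, hle, hT, rfl⟩
        exact tree_weight_le hm1 hle hT
      · linarith
    have hNvR : ((Nv m : ℕ) : ℝ) = (m : ℝ) * m + m := by
      have : Nv m = m * m + m := rfl
      rw [this]; push_cast; ring
    have hEpos : 0 < ((Gr m).edgeFinset.card : ℝ) := by
      have hCne : (cliqueEdges m).Nonempty := by
        rw [← Finset.card_pos, card_cliqueEdges]
        exact Nat.choose_pos hm2
      have := Finset.card_pos.mpr (hCne.mono (cliqueEdges_subset m))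
      exact_mod_cast this
    have hEle : ((Gr m).edgeFinset.card : ℝ) ≤ 2 * ((m : ℝ) * m) := by
      have h := card_edges_le m
      have h' : ((Gr m).edgeFinset.card : ℝ) ≤ ((Nv m : ℕ) : ℝ) + ((m.choose 2 : ℕ) : ℝ) := by
        exact_mod_cast h
      rw [hNvR, hchoose] at h'
      nlinarith
    rw [Fintype.card_fin, hNvR]
    have step1 : maxTreeWeight (Gr m) (wt m) / totalWeight (Gr m) (wt m) ≤ 2 / m := by
      rw [div_le_div_iff₀ htotpos hmpos]
      nlinarith [mul_le_mul_of_nonneg_right hM hmpos.le]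
    have hABhalf : (1 : ℝ) / 2 ≤ ((m : ℝ) * m + m - 1) / ((Gr m).edgeFinset.card : ℝ) := by
      rw [div_le_div_iff₀ two_pos hEpos]
      nlinarith
    have step2 : 2 / (m : ℝ) < ε * (((m : ℝ) * m + m - 1) / ((Gr m).edgeFinset.card : ℝ)) := by
      have ha : ε / 2 ≤ ε * (((m : ℝ) * m + m - 1) / ((Gr m).edgeFinset.card : ℝ)) := by
        calc ε / 2 = ε * (1 / 2) := by ring
          _ ≤ _ := mul_le_mul_of_nonneg_left hABhalf hε.le
      have hb : 2 / (m : ℝ) < ε / 2 := by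
        rw [div_lt_div_iff₀ hmpos two_pos]
        linarith
      linarith
    exact lt_of_le_of_lt step1 step2
end
end

section
/- Let G be a finite simple connected graph with at least one edge. Then the infimum, over all edge-weight functions ω : E(G) → ℝ with ω(e) ≥ 0 for all e and ω(G) > 0, of the weighting ratio t_ω(G) equals the minimum, over all edge-weight functions ω : E(G) → {0, 1} with ω(G) > 0, of t_ω(G). In particular, this infimum is attained by a {0,1}-valued weight function. -/
open scoped Classical

noncomputable section

namespace ZeroOneAux

open SimpleGraph Finset

set_option linter.unusedSectionVars false
set_option maxHeartbeats 1000000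

variable {V : Type*} [Fintype V]

/-- Number of connected components. -/
def nc (H : SimpleGraph V) : ℕ := Nat.card H.ConnectedComponent

lemma acyclic_of_le {A B : SimpleGraph V} (h : A ≤ B) (hB : B.IsAcyclic) : A.IsAcyclic := by
  intro v c hc
  exact hB (c.transfer B (fun e he => edgeSet_mono h (c.edges_subset_edgeSet he)))
    (hc.transfer _)

lemma reach_sup_edge {F : SimpleGraph V} {u v x y : V}
    (h : (F ⊔ edge u v).Reachable x y) :
    F.Reachable x y ∨ (F.Reachable x u ∧ F.Reachable v y) ∨
      (F.Reachable x v ∧ F.Reachable u y) := by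
  obtain ⟨p⟩ := h
  induction p with
  | nil => exact Or.inl (Reachable.refl _)
  | @cons a b c hadj q ih =>
    have step : ∀ {z w : V}, F.Reachable z w →
        (F.Reachable w c ∨ (F.Reachable w u ∧ F.Reachable v c) ∨
          (F.Reachable w v ∧ F.Reachable u c)) →
        (F.Reachable z c ∨ (F.Reachable z u ∧ F.Reachable v c) ∨
          (F.Reachable z v ∧ F.Reachable u c)) := by
      rintro z w hzw (h1 | ⟨h1, h2⟩ | ⟨h1, h2⟩)
      · exact Or.inl (hzw.trans h1)
      · exact Or.inr (Or.inl ⟨hzw.trans h1, h2⟩)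
      · exact Or.inr (Or.inr ⟨hzw.trans h1, h2⟩)
    rcases (sup_adj _ _ _ _).mp hadj with hF | hEdge
    · exact step hF.reachable ih
    · rw [edge_adj] at hEdge
      rcases hEdge.1 with ⟨rfl, rfl⟩ | ⟨rfl, rfl⟩
      · rcases ih with h1 | ⟨h1, h2⟩ | ⟨h1, h2⟩
        · exact Or.inr (Or.inl ⟨Reachable.refl _, h1⟩)
        · exact Or.inl ((h1.symm).trans h2)
        · exact Or.inl h2
      · rcases ih with h1 | ⟨h1, h2⟩ | ⟨h1, h2⟩
        · exact Or.inr (Or.inr ⟨Reachable.refl _, h1⟩)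
        · exact Or.inl h2
        · exact Or.inl (h1.symm.trans h2)

lemma acyclic_sup_edge {F : SimpleGraph V} {u v : V} (hF : F.IsAcyclic)
    (hn : ¬F.Reachable u v) : (F ⊔ edge u v).IsAcyclic := by
  intro a c hc
  by_cases he : s(u, v) ∈ c.edges
  · have h2 := (adj_and_reachable_delete_edges_iff_exists_cycle
      (G := F ⊔ edge u v)).mpr ⟨a, c, hc, he⟩
    apply hn
    refine Reachable.mono ?_ h2.2
    intro x y hxy
    rw [deleteEdges_adj] at hxy
    rcases (sup_adj _ _ _ _).mp hxy.1 with h | h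
    · exact h
    · exact absurd ((fromEdgeSet_adj _).mp h).1 hxy.2
  · have hsub : ∀ e ∈ c.edges, e ∈ F.edgeSet := by
      intro e hee
      have h3 := c.edges_subset_edgeSet hee
      rw [edgeSet_sup] at h3
      rcases h3 with h3 | h3
      · exact h3
      · exfalso
        apply he
        have h4 : e ∈ ({s(u,v)} : Set (Sym2 V)) \ Sym2.diagSet := by
          rw [← edgeSet_fromEdgeSet]; exact h3
        rw [Set.mem_diff, Set.mem_singleton_iff] at h4
        rw [← h4.1]; exact hee
    exact hF (c.transfer F hsub) (hc.transfer hsub)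

lemma sdiff_sup_edge_eq {F : SimpleGraph V} {u v : V} (h : F.Adj u v) :
    (F \ fromEdgeSet {s(u,v)}) ⊔ edge u v = F := by
  ext x y
  simp only [sup_adj, sdiff_adj, fromEdgeSet_adj, Set.mem_singleton_iff, edge_adj]
  constructor
  · rintro (⟨ha, -⟩ | ⟨(⟨rfl, rfl⟩ | ⟨rfl, rfl⟩), -⟩)
    · exact ha
    · exact h
    · exact h.symm
  · intro ha
    by_cases hxy : s(x,y) = s(u,v)
    · right
      refine ⟨?_, ha.ne⟩
      rw [Sym2.eq_iff] at hxy
      tauto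
    · exact Or.inl ⟨ha, fun hc => hxy hc.1⟩

lemma nc_le {A B : SimpleGraph V} (h : ∀ x y : V, A.Reachable x y → B.Reachable x y) :
    nc B ≤ nc A := by
  have hsurj : Function.Surjective
      (ConnectedComponent.lift (B.connectedComponentMk)
        (fun v w p _ => ConnectedComponent.sound (h _ _ p.reachable)) :
        A.ConnectedComponent → B.ConnectedComponent) := by
    intro c
    obtain ⟨v, rfl⟩ := c.exists_rep
    exact ⟨A.connectedComponentMk v, rfl⟩
  exact Nat.card_le_card_of_surjective _ hsurj

lemma card_cc_delete {F : SimpleGraph V} {u v : V} (h : F.Adj u v)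
    (hb : ¬(F \ fromEdgeSet {s(u,v)}).Reachable u v) :
    nc (F \ fromEdgeSet {s(u,v)}) = nc F + 1 := by
  set F' := F \ fromEdgeSet {s(u,v)} with hF'
  have hle : F' ≤ F := sdiff_le
  have key : ∀ {a b : V}, F.Reachable a b → F'.Reachable a b ∨
      (F'.Reachable a u ∧ F'.Reachable v b) ∨ (F'.Reachable a v ∧ F'.Reachable u b) := by
    intro a b hab
    exact reach_sup_edge (by rwa [sdiff_sup_edge_eq h])
  have fwd : ∀ (a b : V), F'.Reachable a b →
      (if F'.Reachable a v then (Sum.inr () : F.ConnectedComponent ⊕ Unit)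
        else Sum.inl (F.connectedComponentMk a)) =
      (if F'.Reachable b v then (Sum.inr () : F.ConnectedComponent ⊕ Unit)
        else Sum.inl (F.connectedComponentMk b)) := by
    intro a b hab
    by_cases hav : F'.Reachable a v
    · rw [if_pos hav, if_pos (hab.symm.trans hav)]
    · rw [if_neg hav, if_neg (fun hbv => hav (hab.trans hbv))]
      exact congrArg _ (ConnectedComponent.sound (Reachable.mono hle hab))
  have gwd : ∀ (a b : V), F.Reachable a b →
      (if F'.Reachable a v then F'.connectedComponentMk u else F'.connectedComponentMk a) =
      (if F'.Reachable b v then F'.connectedComponentMk u else F'.connectedComponentMk b) := by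
    intro a b hab
    rcases key hab with h1 | ⟨h1, h2⟩ | ⟨h1, h2⟩
    · by_cases hav : F'.Reachable a v
      · rw [if_pos hav, if_pos (h1.symm.trans hav)]
      · rw [if_neg hav, if_neg (fun hbv => hav (h1.trans hbv))]
        exact ConnectedComponent.sound h1
    · have hav : ¬F'.Reachable a v := fun hav => hb (h1.symm.trans hav)
      rw [if_neg hav, if_pos h2.symm]
      exact ConnectedComponent.sound h1
    · have hbv : ¬F'.Reachable b v := fun hbv => hb (h2.trans hbv)
      rw [if_pos h1, if_neg hbv]
      exact ConnectedComponent.sound h2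
  let f : F'.ConnectedComponent → F.ConnectedComponent ⊕ Unit :=
    ConnectedComponent.lift
      (fun a => if F'.Reachable a v then Sum.inr () else Sum.inl (F.connectedComponentMk a))
      (fun a b p _ => fwd a b p.reachable)
  let g0 : F.ConnectedComponent → F'.ConnectedComponent :=
    ConnectedComponent.lift
      (fun a => if F'.Reachable a v then F'.connectedComponentMk u else F'.connectedComponentMk a)
      (fun a b p _ => gwd a b p.reachable)
  let g : F.ConnectedComponent ⊕ Unit → F'.ConnectedComponent :=
    Sum.elim g0 (fun _ => F'.connectedComponentMk v)
  have hli : Function.LeftInverse g f := by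
    refine ConnectedComponent.ind (fun x => ?_)
    by_cases hxv : F'.Reachable x v
    · simp only [f, ConnectedComponent.lift_mk, if_pos hxv, g, Sum.elim_inr]
      exact ConnectedComponent.sound hxv.symm
    · simp only [f, ConnectedComponent.lift_mk, if_neg hxv, g, Sum.elim_inl, g0]
  have hri : Function.RightInverse g f := by
    rintro (c | ⟨⟩)
    · refine ConnectedComponent.ind (fun x => ?_) c
      by_cases hxv : F'.Reachable x v
      · simp only [g, Sum.elim_inl, g0, ConnectedComponent.lift_mk, if_pos hxv, f]
        simp only [ConnectedComponent.lift_mk, if_neg hb]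
        exact congrArg _ (ConnectedComponent.sound (h.reachable.trans (Reachable.mono hle hxv).symm))
      · simp only [g, Sum.elim_inl, g0, ConnectedComponent.lift_mk, if_neg hxv, f]
    · simp only [g, Sum.elim_inr, f]
      simp only [ConnectedComponent.lift_mk, if_pos (Reachable.refl v)]
  have hcc : Nat.card F'.ConnectedComponent = Nat.card (F.ConnectedComponent ⊕ Unit) :=
    Nat.card_congr ⟨f, g, hli, hri⟩
  rw [nc, nc, hcc, Nat.card_sum]
  simp

lemma nc_bot : nc (⊥ : SimpleGraph V) = Fintype.card V := by
  have : (⊥ : SimpleGraph V).ConnectedComponent ≃ V := by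
    refine (Equiv.ofBijective (⊥ : SimpleGraph V).connectedComponentMk ⟨?_, ?_⟩).symm
    · intro a b hab
      exact reachable_bot.mp (ConnectedComponent.eq.mp hab)
    · intro c; obtain ⟨v, rfl⟩ := c.exists_rep; exact ⟨v, rfl⟩
  rw [nc, Nat.card_congr this, Nat.card_eq_fintype_card]

lemma acyclic_count (F : SimpleGraph V) (hF : F.IsAcyclic) :
    F.edgeSet.ncard + nc F = Fintype.card V := by
  generalize hn : F.edgeSet.ncard = n
  induction n generalizing F with
  | zero =>
    have : F = ⊥ := by
      rw [← edgeSet_eq_empty]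
      exact (Set.ncard_eq_zero (Set.toFinite _)).mp hn
    subst this
    simpa using nc_bot
  | succ n ih =>
    have hne : F.edgeSet.Nonempty := by
      rw [Set.nonempty_iff_ne_empty]
      intro hc
      rw [hc, Set.ncard_empty] at hn
      omega
    obtain ⟨e, he⟩ := hne
    induction e with
    | h u v =>
    rw [mem_edgeSet] at he
    set F' := F \ fromEdgeSet {s(u,v)} with hF'
    have hleF : F' ≤ F := sdiff_le
    have hF'a : F'.IsAcyclic := acyclic_of_le hleF hF
    have hbr : ¬F'.Reachable u v := by
      have := (isAcyclic_iff_forall_adj_isBridge.mp hF) he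
      rw [isBridge_iff] at this
      exact this
    have hedge : F'.edgeSet = F.edgeSet \ {s(u,v)} := by
      ext e'
      simp only [hF', edgeSet_sdiff, Set.mem_diff, edgeSet_fromEdgeSet,
        Set.mem_singleton_iff]
      constructor
      · rintro ⟨h1, h2⟩
        refine ⟨h1, fun hc => h2 ⟨hc, ?_⟩⟩
        rw [hc]
        exact Sym2.mk_isDiag_iff.not.mpr he.ne
      · rintro ⟨h1, h2⟩
        exact ⟨h1, fun hc => h2 hc.1⟩
    have hcard' : F'.edgeSet.ncard = n := by
      rw [hedge, Set.ncard_diff_singleton_of_mem (by rwa [mem_edgeSet]), hn]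
      omega
    have := ih F' hF'a hcard'
    have hnc := card_cc_delete he hbr
    rw [← hF'] at hnc
    omega

lemma filter_imp {α} {s : Finset α} {p q : α → Prop} [DecidablePred p] [DecidablePred q]
    (h : ∀ a ∈ s, p a → q a) :
    s.filter p ⊆ s.filter q := by
  intro x hx
  rw [Finset.mem_filter] at hx ⊢
  exact ⟨hx.1, h x hx.1 hx.2⟩

def forests (S : Finset (Sym2 V)) : Finset (Finset (Sym2 V)) :=
  S.powerset.filter fun t => (fromEdgeSet (↑t : Set (Sym2 V))).IsAcyclic

def rk (S : Finset (Sym2 V)) : ℕ := (forests S).sup Finset.card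

lemma mem_forests {S t : Finset (Sym2 V)} :
    t ∈ forests S ↔ t ⊆ S ∧ (fromEdgeSet (↑t : Set (Sym2 V))).IsAcyclic := by
  simp [forests]

lemma empty_mem_forests (S : Finset (Sym2 V)) : ∅ ∈ forests S := by
  simp only [mem_forests]
  exact ⟨Finset.empty_subset _, by rw [Finset.coe_empty, fromEdgeSet_empty]; exact isAcyclic_bot⟩

lemma card_le_rk {S t : Finset (Sym2 V)} (ht : t ∈ forests S) : t.card ≤ rk S :=
  Finset.le_sup ht

lemma rk_empty : rk (∅ : Finset (Sym2 V)) = 0 := by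
  apply Nat.le_antisymm _ (Nat.zero_le _)
  apply Finset.sup_le
  intro t ht
  rw [mem_forests] at ht
  simp [Finset.subset_empty.mp ht.1]

lemma forests_mono {S S' : Finset (Sym2 V)} (h : S ⊆ S') : forests S ⊆ forests S' := by
  intro t ht
  rw [mem_forests] at ht ⊢
  exact ⟨ht.1.trans h, ht.2⟩

variable {G : SimpleGraph V}

lemma edgeSet_fromEdgeSet_eq {t : Finset (Sym2 V)} (ht : t ⊆ G.edgeFinset) :
    (fromEdgeSet (↑t : Set (Sym2 V))).edgeSet = ↑t := by
  rw [edgeSet_fromEdgeSet]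
  ext e
  simp only [Set.mem_diff, Finset.mem_coe, Set.mem_setOf_eq, and_iff_left_iff_imp]
  intro het
  exact G.not_isDiag_of_mem_edgeSet (mem_edgeFinset.mp (ht het))

lemma edgeFinset_fromEdgeSet {t : Finset (Sym2 V)} (ht : t ⊆ G.edgeFinset)
    {inst : Fintype (fromEdgeSet (↑t : Set (Sym2 V))).edgeSet} :
    @SimpleGraph.edgeFinset V (fromEdgeSet (↑t : Set (Sym2 V))) inst = t := by
  apply Finset.coe_injective
  rw [coe_edgeFinset, edgeSet_fromEdgeSet_eq ht]

lemma forest_count {t : Finset (Sym2 V)} (ht : t ⊆ G.edgeFinset)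
    (ha : (fromEdgeSet (↑t : Set (Sym2 V))).IsAcyclic) :
    t.card + nc (fromEdgeSet (↑t : Set (Sym2 V))) = Fintype.card V := by
  have := acyclic_count _ ha
  rwa [edgeSet_fromEdgeSet_eq ht, Set.ncard_coe_finset] at this

lemma maximal_forest_reach {S t : Finset (Sym2 V)} (ht : t ∈ forests S)
    (hmax : ∀ e ∈ S, (fromEdgeSet (↑(insert e t) : Set (Sym2 V))).IsAcyclic → e ∈ t)
    {x y : V} (h : (fromEdgeSet (↑S : Set (Sym2 V))).Reachable x y) :
    (fromEdgeSet (↑t : Set (Sym2 V))).Reachable x y := by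
  rw [mem_forests] at ht
  have key : ∀ {a b : V}, (fromEdgeSet (↑S : Set (Sym2 V))).Adj a b →
      (fromEdgeSet (↑t : Set (Sym2 V))).Reachable a b := by
    intro a b hadj
    rw [fromEdgeSet_adj, Finset.mem_coe] at hadj
    obtain ⟨heS, hne⟩ := hadj
    by_cases het : s(a, b) ∈ t
    · exact ((fromEdgeSet_adj _).mpr ⟨het, hne⟩).reachable
    · by_cases hr : (fromEdgeSet (↑t : Set (Sym2 V))).Reachable a b
      · exact hr
      · exfalso
        apply het
        apply hmax _ heS
        rw [Finset.coe_insert, Set.insert_eq, fromEdgeSet_union, sup_comm,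
          show fromEdgeSet {s(a,b)} = edge a b from rfl]
        exact acyclic_sup_edge ht.2 hr
  obtain ⟨p⟩ := h
  induction p with
  | nil => exact Reachable.refl _
  | cons hadj q ih => exact (key hadj).trans ih

lemma extend_forest {S t₀ : Finset (Sym2 V)} (hS : S ⊆ G.edgeFinset)
    (ht₀ : t₀ ∈ forests S) :
    ∃ t ∈ forests S, t₀ ⊆ t ∧ t.card = rk S ∧
      nc (fromEdgeSet (↑t : Set (Sym2 V))) = nc (fromEdgeSet (↑S : Set (Sym2 V))) := by
  have hPne : ((forests S).filter fun t => t₀ ⊆ t).Nonempty :=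
    ⟨t₀, by simp [ht₀]⟩
  obtain ⟨t, htP, hmaxc⟩ := Finset.exists_max_image _ Finset.card hPne
  rw [Finset.mem_filter] at htP
  obtain ⟨htf, ht₀t⟩ := htP
  have htf' := htf
  rw [mem_forests] at htf'
  have hmax : ∀ e ∈ S, (fromEdgeSet (↑(insert e t) : Set (Sym2 V))).IsAcyclic → e ∈ t := by
    intro e heS hacy
    by_contra het
    have hmem : insert e t ∈ (forests S).filter fun t' => t₀ ⊆ t' := by
      rw [Finset.mem_filter, mem_forests]
      exact ⟨⟨Finset.insert_subset heS htf'.1, hacy⟩, ht₀t.trans (Finset.subset_insert _ _)⟩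
    have := hmaxc _ hmem
    rw [Finset.card_insert_of_notMem het] at this
    omega
  have hreach := fun x y h => maximal_forest_reach htf hmax (x := x) (y := y) h
  have hncle1 : nc (fromEdgeSet (↑t : Set (Sym2 V))) ≤ nc (fromEdgeSet (↑S : Set (Sym2 V))) :=
    nc_le hreach
  have hncle2 : nc (fromEdgeSet (↑S : Set (Sym2 V))) ≤ nc (fromEdgeSet (↑t : Set (Sym2 V))) :=
    nc_le fun x y h => h.mono (fromEdgeSet_mono (by exact_mod_cast htf'.1))
  have hnceq := Nat.le_antisymm hncle1 hncle2
  refine ⟨t, htf, ht₀t, ?_, hnceq⟩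
  apply Nat.le_antisymm (card_le_rk htf)
  apply Finset.sup_le
  intro t' ht'
  rw [mem_forests] at ht'
  have h1 := forest_count (htf'.1.trans hS) htf'.2
  have h2 := forest_count (ht'.1.trans hS) ht'.2
  have h3 : nc (fromEdgeSet (↑S : Set (Sym2 V))) ≤ nc (fromEdgeSet (↑t' : Set (Sym2 V))) :=
    nc_le fun x y h => h.mono (fromEdgeSet_mono (by exact_mod_cast ht'.1))
  omega

lemma tree_inter_card_le {T : SimpleGraph V} (hT : T ≤ G) (hTa : T.IsAcyclic)
    {S : Finset (Sym2 V)} :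
    (T.edgeFinset ∩ S).card ≤ rk S := by
  apply card_le_rk
  rw [mem_forests]
  refine ⟨Finset.inter_subset_right, ?_⟩
  apply acyclic_of_le _ hTa
  have : (↑(T.edgeFinset ∩ S) : Set (Sym2 V)) ⊆ T.edgeSet := by
    intro e he
    rw [Finset.mem_coe, Finset.mem_inter] at he
    exact mem_edgeFinset.mp he.1
  calc fromEdgeSet (↑(T.edgeFinset ∩ S) : Set (Sym2 V)) ≤ fromEdgeSet T.edgeSet :=
        fromEdgeSet_mono this
    _ = T := fromEdgeSet_edgeSet T

lemma nc_eq_one_of_connected {G : SimpleGraph V} (hG : G.Connected) : nc G = 1 := by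
  have h1 : Subsingleton G.ConnectedComponent := hG.preconnected.subsingleton_connectedComponent
  have h2 : Nonempty G.ConnectedComponent := Nonempty.map G.connectedComponentMk hG.nonempty
  rw [nc, Nat.card_eq_one_iff_unique]
  exact ⟨h1, h2⟩

lemma connected_of_nc_eq_one {H : SimpleGraph V} (h : nc H = 1) : H.Connected := by
  rw [nc, Nat.card_eq_one_iff_unique] at h
  have h1 := h.1
  obtain ⟨c⟩ := h.2
  obtain ⟨v, rfl⟩ := c.exists_rep
  rw [connected_iff]
  refine ⟨fun x y => ?_, ⟨v⟩⟩
  exact ConnectedComponent.eq.mp (Subsingleton.elim _ _)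

lemma chain_tree {G : SimpleGraph V} (hG : G.Connected) (θ : ℕ → Finset (Sym2 V))
    (hanti : ∀ s, θ (s+1) ⊆ θ s) (h0 : θ 0 = G.edgeFinset) {N : ℕ} (hN : θ N = ∅) :
    ∃ T : SimpleGraph V, T ≤ G ∧ T.IsTree ∧
      ∀ s, (T.edgeFinset ∩ θ s).card = rk (θ s) := by
  have hmono : ∀ {i j : ℕ}, i ≤ j → θ j ⊆ θ i := by
    intro i j h
    induction j, h using Nat.le_induction with
    | base => exact Finset.Subset.refl _
    | succ j hij ih => exact (hanti j).trans ih
  have hsubE : ∀ s, θ s ⊆ G.edgeFinset := fun s => h0 ▸ hmono (Nat.zero_le s)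
  have aux : ∀ k, ∃ t ∈ forests (θ (N - k)),
      t.card = rk (θ (N - k)) ∧
      nc (fromEdgeSet (↑t : Set (Sym2 V))) = nc (fromEdgeSet (↑(θ (N - k)) : Set (Sym2 V))) ∧
      ∀ j, N - k ≤ j → (t ∩ θ j).card = rk (θ j) := by
    intro k
    induction k with
    | zero =>
      refine ⟨∅, empty_mem_forests _, ?_, ?_, ?_⟩
      · simp [hN, rk_empty]
      · simp [hN]
      · intro j hj
        have hje : θ j = ∅ := Finset.subset_empty.mp (hN ▸ hmono (by simpa using hj))
        simp [hje, rk_empty]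
    | succ k ih =>
      obtain ⟨t, htf, hcard, hnc, hj⟩ := ih
      have hsub : θ (N - k) ⊆ θ (N - (k+1)) := hmono (Nat.sub_le_sub_left (Nat.le_succ k) N)
      obtain ⟨t', ht'f, htt', hcard', hnc'⟩ := extend_forest (hsubE _) (forests_mono hsub htf)
      refine ⟨t', ht'f, hcard', hnc', ?_⟩
      intro j hjle
      by_cases hcase : N - k ≤ j
      · apply Nat.le_antisymm
        · apply card_le_rk
          rw [mem_forests]
          refine ⟨Finset.inter_subset_right, acyclic_of_le (fromEdgeSet_mono ?_)
            (mem_forests.mp ht'f).2⟩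
          exact_mod_cast (Finset.inter_subset_left : t' ∩ θ j ⊆ t')
        · rw [← hj j hcase]
          exact Finset.card_le_card (Finset.inter_subset_inter htt' (Finset.Subset.refl _))
      · have hjeq : j = N - (k+1) := by omega
        subst hjeq
        rw [Finset.inter_eq_left.mpr (mem_forests.mp ht'f).1]
        exact hcard'
  obtain ⟨t, htf, hcard, hnc, hj⟩ := aux N
  rw [Nat.sub_self] at htf hcard hnc hj
  have htE : t ⊆ G.edgeFinset := h0 ▸ (mem_forests.mp htf).1
  have hGeq : fromEdgeSet (↑(θ 0) : Set (Sym2 V)) = G := by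
    rw [h0, coe_edgeFinset, fromEdgeSet_edgeSet]
  refine ⟨fromEdgeSet (↑t : Set (Sym2 V)), ?_, ⟨?_, (mem_forests.mp htf).2⟩, ?_⟩
  · calc fromEdgeSet (↑t : Set (Sym2 V)) ≤ fromEdgeSet (↑(θ 0) : Set (Sym2 V)) :=
        fromEdgeSet_mono (by exact_mod_cast (mem_forests.mp htf).1)
      _ = G := hGeq
  · apply connected_of_nc_eq_one
    rw [hnc, hGeq]
    exact nc_eq_one_of_connected hG
  · intro s
    rw [edgeFinset_fromEdgeSet htE]
    exact hj s (Nat.zero_le s)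

lemma level_tree {G : SimpleGraph V} (hG : G.Connected) (w : Sym2 V → ℝ) :
    ∃ T : SimpleGraph V, T ≤ G ∧ T.IsTree ∧
      ∀ c : ℝ, 0 < c →
        (T.edgeFinset ∩ (G.edgeFinset.filter fun e => c ≤ w e)).card =
          rk (G.edgeFinset.filter fun e => c ≤ w e) := by
  set E := G.edgeFinset with hE
  set vals := (E.filter fun e => 0 < w e).image w with hvals
  set cnt := fun e => (vals.filter fun v => v ≤ w e).card with hcnt
  set θ := fun s => if s = 0 then E else E.filter fun e => s ≤ cnt e with hθ
  have hanti : ∀ s, θ (s+1) ⊆ θ s := by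
    intro s
    by_cases hs : s = 0
    · subst hs; simp [θ]
    · simp only [θ, if_neg hs, if_neg (Nat.succ_ne_zero s)]
      apply filter_imp
      intro e _ he; omega
  have hN : θ (vals.card + 1) = ∅ := by
    simp only [θ, if_neg (Nat.succ_ne_zero _)]
    apply Finset.filter_false_of_mem
    intro e _
    have : cnt e ≤ vals.card := Finset.card_le_card (Finset.filter_subset _ _)
    omega
  obtain ⟨T, hT, hTt, hopt⟩ := chain_tree hG θ hanti (by simp [θ, hE]) hN
  refine ⟨T, hT, hTt, ?_⟩
  intro c hc
  have hkey : E.filter (fun e => c ≤ w e) = θ ((vals.filter fun v => v < c).card + 1) := by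
    simp only [θ, if_neg (Nat.succ_ne_zero _)]
    apply Finset.filter_congr
    intro e he
    simp only [hcnt]
    constructor
    · intro hcw
      have hwev : w e ∈ vals := by
        apply Finset.mem_image_of_mem
        rw [Finset.mem_filter]
        exact ⟨he, lt_of_lt_of_le hc hcw⟩
      have hss : (vals.filter fun v => v < c) ⊂ (vals.filter fun v => v ≤ w e) := by
        constructor
        · apply filter_imp
          intro v _ hv
          exact le_of_lt (lt_of_lt_of_le hv hcw)
        · intro hcon
          have := hcon (Finset.mem_filter.mpr ⟨hwev, le_refl _⟩)
          rw [Finset.mem_filter] at this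
          exact absurd this.2 (not_lt.mpr hcw)
      have := Finset.card_lt_card hss
      omega
    · intro hcnt'
      by_contra hcon
      rw [not_le] at hcon
      have hsub : (vals.filter fun v => v ≤ w e) ⊆ (vals.filter fun v => v < c) := by
        apply filter_imp
        intro v _ hv
        exact lt_of_le_of_lt hv hcon
      have := Finset.card_le_card hsub
      omega
  rw [hkey]
  exact hopt _

end ZeroOneAux

open ZeroOneAux SimpleGraph Finset in
set_option maxHeartbeats 1000000 in
/-- **0-1 Weighting Function Lemma.** For a finite simple connected graph `G` with at
least one edge, the infimum of the weighting ratio `t_w(G)` over all nonnegative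
edge-weight functions with positive total weight is attained by a `{0,1}`-valued
weight function; in particular it equals the minimum over `{0,1}`-valued weight
functions. -/
theorem zero_one_weighting {V : Type*} [Fintype V] (G : SimpleGraph V)
    (hG : G.Connected) (hE : G.edgeFinset.Nonempty) :
    ∃ w01 : Sym2 V → ℝ,
      (∀ e ∈ G.edgeFinset, w01 e = 0 ∨ w01 e = 1) ∧ 0 < totalWeight G w01 ∧
      IsLeast
        {x | ∃ w : Sym2 V → ℝ, (∀ e ∈ G.edgeFinset, 0 ≤ w e) ∧ 0 < totalWeight G w ∧
          x = maxTreeWeight G w / totalWeight G w}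
        (maxTreeWeight G w01 / totalWeight G w01) := by
  classical
  set E := G.edgeFinset with hEdef
  set 𝒮 := E.powerset.filter (fun S => S.Nonempty) with h𝒮
  have hSne : 𝒮.Nonempty :=
    ⟨E, by rw [h𝒮, Finset.mem_filter, Finset.mem_powerset]; exact ⟨Finset.Subset.refl _, hE⟩⟩
  obtain ⟨S₀, hS₀mem, hmin⟩ := Finset.exists_min_image 𝒮 (fun S => (rk S : ℝ) / S.card) hSne
  rw [h𝒮, Finset.mem_filter, Finset.mem_powerset] at hS₀mem
  obtain ⟨hS₀E, hS₀ne⟩ := hS₀mem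
  have hS₀pos : 0 < (S₀.card : ℝ) := by exact_mod_cast Finset.card_pos.mpr hS₀ne
  set w01 : Sym2 V → ℝ := fun e => if e ∈ S₀ then 1 else 0 with hw01
  have hsum01 : ∀ t : Finset (Sym2 V), (∑ e ∈ t, w01 e) = ((t ∩ S₀).card : ℝ) := by
    intro t
    rw [hw01]
    rw [← Finset.sum_filter, Finset.sum_const, Finset.filter_mem_eq_inter]
    simp
  have htw01 : totalWeight G w01 = (S₀.card : ℝ) := by
    rw [totalWeight, ← hEdef, hsum01, Finset.inter_eq_right.mpr hS₀E]
  have htw01pos : 0 < totalWeight G w01 := by rw [htw01]; exact hS₀pos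
  have hbdd : ∀ w : Sym2 V → ℝ, (∀ e ∈ E, 0 ≤ w e) →
      ∀ x ∈ {x | ∃ T : SimpleGraph V, T ≤ G ∧ T.IsTree ∧ x = ∑ e ∈ T.edgeFinset, w e},
        x ≤ totalWeight G w := by
    rintro w hw0 x ⟨T, hT, hTt, rfl⟩
    apply Finset.sum_le_sum_of_subset_of_nonneg (edgeFinset_mono hT)
    intro e he _
    exact hw0 e he
  obtain ⟨T₀, hT₀, hT₀t, hopt₀⟩ := level_tree hG w01
  have hfilter01 : E.filter (fun e => (1:ℝ) ≤ w01 e) = S₀ := by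
    ext e
    simp only [Finset.mem_filter, hw01]
    constructor
    · rintro ⟨he, h1⟩
      by_contra hc
      rw [if_neg hc] at h1
      linarith
    · intro he
      exact ⟨hS₀E he, by rw [if_pos he]⟩
  have hM01 : maxTreeWeight G w01 = (rk S₀ : ℝ) := by
    rw [maxTreeWeight]
    apply IsGreatest.csSup_eq
    constructor
    · have h1 := hopt₀ 1 one_pos
      rw [hfilter01] at h1
      exact ⟨T₀, hT₀, hT₀t, by rw [hsum01, h1]⟩
    · rintro x ⟨T, hT, hTt, rfl⟩
      rw [hsum01]
      exact_mod_cast tree_inter_card_le hT hTt.IsAcyclic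
  have IND : ∀ (m : ℕ) (w : Sym2 V → ℝ), (∀ e ∈ E, 0 ≤ w e) →
      ((E.filter fun e => 0 < w e).image w).card = m →
      ∀ T : SimpleGraph V, T ≤ G →
      (∀ c : ℝ, 0 < c → ((T.edgeFinset ∩ (E.filter fun e => c ≤ w e)).card
          = rk (E.filter fun e => c ≤ w e))) →
      T.edgeFinset ⊆ E →
      (rk S₀ : ℝ) / S₀.card * (∑ e ∈ E, w e) ≤ ∑ e ∈ T.edgeFinset, w e := by
    intro m
    induction m with
    | zero =>
      intro w hw0 hm T hT hopt hTE
      have hz : ∀ e ∈ E, w e = 0 := by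
        intro e he
        by_contra hne
        have hpos : 0 < w e := lt_of_le_of_ne (hw0 e he) (Ne.symm hne)
        have hmem : w e ∈ (E.filter fun e => 0 < w e).image w :=
          Finset.mem_image_of_mem _ (Finset.mem_filter.mpr ⟨he, hpos⟩)
        rw [Finset.card_eq_zero.mp hm] at hmem
        simp at hmem
      rw [Finset.sum_eq_zero hz, mul_zero]
      exact le_of_eq (Finset.sum_eq_zero (fun e he => hz e (hTE he))).symm
    | succ m ih =>
      intro w hw0 hm T hT hopt hTE
      set S := E.filter fun e => 0 < w e with hS
      set vals := S.image w with hvals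
      have hvne : vals.Nonempty := Finset.card_pos.mp (by omega)
      set a := vals.min' hvne with ha
      have hamem : a ∈ vals := vals.min'_mem hvne
      have hapos : 0 < a := by
        obtain ⟨e, heS, hwe⟩ := Finset.mem_image.mp hamem
        rw [hS, Finset.mem_filter] at heS
        linarith [heS.2]
      have haleval : ∀ e ∈ S, a ≤ w e := fun e heS =>
        vals.min'_le _ (Finset.mem_image_of_mem w heS)
      have hSfilter : S = E.filter fun e => a ≤ w e := by
        ext e
        rw [hS, Finset.mem_filter, Finset.mem_filter]
        constructor
        · rintro ⟨he, hpos⟩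
          exact ⟨he, haleval e (by rw [hS, Finset.mem_filter]; exact ⟨he, hpos⟩)⟩
        · rintro ⟨he, hge⟩
          exact ⟨he, lt_of_lt_of_le hapos hge⟩
      set w' := fun e => if e ∈ S then w e - a else 0 with hw'
      have hw'0 : ∀ e ∈ E, 0 ≤ w' e := by
        intro e he
        simp only [hw']
        by_cases heS : e ∈ S
        · rw [if_pos heS]; linarith [haleval e heS]
        · rw [if_neg heS]
      have hwzero : ∀ e ∈ E, e ∉ S → w e = 0 := by
        intro e he heS
        rw [hS, Finset.mem_filter] at heS
        push_neg at heS
        linarith [hw0 e he, heS he]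
      have hsplit : ∀ e ∈ E, w e = w' e + a * (if e ∈ S then 1 else 0) := by
        intro e he
        simp only [hw']
        by_cases heS : e ∈ S
        · rw [if_pos heS, if_pos heS]; ring
        · rw [if_neg heS, if_neg heS, hwzero e he heS]; ring
      have hsupp' : E.filter (fun e => 0 < w' e) = E.filter (fun e => a < w e) := by
        ext e
        rw [Finset.mem_filter, Finset.mem_filter]
        constructor
        · rintro ⟨he, hpos⟩
          refine ⟨he, ?_⟩
          simp only [hw'] at hpos
          by_cases heS : e ∈ S
          · rw [if_pos heS] at hpos; linarith
          · rw [if_neg heS] at hpos; linarith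
        · rintro ⟨he, hlt⟩
          have heS : e ∈ S := by rw [hS, Finset.mem_filter]; exact ⟨he, lt_trans hapos hlt⟩
          refine ⟨he, ?_⟩
          simp only [hw', if_pos heS]
          linarith
      have himg : (E.filter fun e => 0 < w' e).image w' = (vals.erase a).image (fun v => v - a) := by
        rw [hsupp']
        have h1 : Set.EqOn w' ((fun v => v - a) ∘ w) ↑(E.filter (fun e => a < w e)) := by
          intro e he
          rw [Finset.mem_coe, Finset.mem_filter] at he
          simp only [hw', if_pos (show e ∈ S by rw [hS, Finset.mem_filter]; exact ⟨he.1, lt_trans hapos he.2⟩)]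
          rfl
        rw [Finset.image_congr h1, ← Finset.image_image]
        congr 1
        ext v
        rw [Finset.mem_image, Finset.mem_erase]
        constructor
        · rintro ⟨e, he, rfl⟩
          rw [Finset.mem_filter] at he
          refine ⟨ne_of_gt he.2, ?_⟩
          rw [hvals]
          exact Finset.mem_image_of_mem w
            (by rw [hS, Finset.mem_filter]; exact ⟨he.1, lt_trans hapos he.2⟩)
        · rintro ⟨hne, hv⟩
          rw [hvals] at hv
          obtain ⟨e, heS, rfl⟩ := Finset.mem_image.mp hv
          have heS' := heS
          rw [hS, Finset.mem_filter] at heS'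
          refine ⟨e, ?_, rfl⟩
          rw [Finset.mem_filter]
          exact ⟨heS'.1, lt_of_le_of_ne (haleval e heS) (Ne.symm hne)⟩
      have hm' : ((E.filter fun e => 0 < w' e).image w').card = m := by
        have hinj : Function.Injective (fun v : ℝ => v - a) := by
          intro x y hxy
          simpa using congrArg (fun z => z + a) hxy
        rw [himg, Finset.card_image_of_injective _ hinj, Finset.card_erase_of_mem hamem]
        omega
      have hopt' : ∀ c : ℝ, 0 < c →
          ((T.edgeFinset ∩ (E.filter fun e => c ≤ w' e)).card
            = rk (E.filter fun e => c ≤ w' e)) := by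
        intro c hc
        have hlev : E.filter (fun e => c ≤ w' e) = E.filter (fun e => c + a ≤ w e) := by
          ext e
          rw [Finset.mem_filter, Finset.mem_filter]
          constructor
          · rintro ⟨he, hcw⟩
            refine ⟨he, ?_⟩
            simp only [hw'] at hcw
            by_cases heS : e ∈ S
            · rw [if_pos heS] at hcw; linarith
            · rw [if_neg heS] at hcw; linarith
          · rintro ⟨he, hcw⟩
            have heS : e ∈ S := by
              rw [hS, Finset.mem_filter]
              exact ⟨he, by linarith⟩
            refine ⟨he, ?_⟩
            simp only [hw', if_pos heS]
            linarith
        rw [hlev]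
        exact hopt (c + a) (by linarith)
      have hIH := ih w' hw'0 hm' T hT hopt' hTE
      have hsum_split : ∀ t : Finset (Sym2 V), t ⊆ E →
          ∑ e ∈ t, w e = ∑ e ∈ t, w' e + a * ((t ∩ S).card : ℝ) := by
        intro t htE'
        have h1 : ∑ e ∈ t, w e = ∑ e ∈ t, (w' e + a * (if e ∈ S then 1 else 0)) :=
          Finset.sum_congr rfl (fun e he => hsplit e (htE' he))
        rw [h1, Finset.sum_add_distrib, ← Finset.mul_sum]
        congr 2
        rw [← Finset.sum_filter, Finset.sum_const, Finset.filter_mem_eq_inter]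
        simp
      have hTS : ((T.edgeFinset ∩ S).card : ℝ) = (rk S : ℝ) := by
        have := hopt a hapos
        rw [← hSfilter] at this
        exact_mod_cast this
      have hSne' : S.Nonempty := by
        obtain ⟨e, heS, _⟩ := Finset.mem_image.mp hamem
        exact ⟨e, heS⟩
      have hS𝒮 : S ∈ 𝒮 := by
        rw [h𝒮, Finset.mem_filter, Finset.mem_powerset]
        exact ⟨Finset.filter_subset _ _, hSne'⟩
      have hScard : 0 < (S.card : ℝ) := by exact_mod_cast Finset.card_pos.mpr hSne'
      have hrho : (rk S₀ : ℝ) / S₀.card * S.card ≤ rk S := by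
        have h2 := hmin S hS𝒮
        calc (rk S₀:ℝ)/S₀.card * S.card ≤ (rk S:ℝ)/S.card * S.card :=
              mul_le_mul_of_nonneg_right h2 (le_of_lt hScard)
          _ = rk S := div_mul_cancel₀ _ (ne_of_gt hScard)
      rw [hsum_split E (Finset.Subset.refl _), hsum_split T.edgeFinset hTE,
        Finset.inter_eq_right.mpr (Finset.filter_subset _ _), hTS]
      have h1 : (rk S₀:ℝ)/S₀.card * (a * S.card) ≤ a * rk S := by
        rw [show (rk S₀:ℝ)/S₀.card * (a * S.card) = a * ((rk S₀:ℝ)/S₀.card * S.card) by ring]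
        exact mul_le_mul_of_nonneg_left hrho (le_of_lt hapos)
      rw [mul_add]
      linarith [hIH, h1]
  have hlower : ∀ w : Sym2 V → ℝ, (∀ e ∈ E, 0 ≤ w e) → 0 < totalWeight G w →
      (rk S₀ : ℝ) / S₀.card ≤ maxTreeWeight G w / totalWeight G w := by
    intro w hw0 hwpos
    obtain ⟨T, hT, hTt, hopt⟩ := level_tree hG w
    have hTE : T.edgeFinset ⊆ E := edgeFinset_mono hT
    have h1 := IND _ w hw0 rfl T hT hopt hTE
    have h2 : (∑ e ∈ T.edgeFinset, w e) ≤ maxTreeWeight G w := by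
      apply le_csSup ⟨totalWeight G w, fun x hx => hbdd w hw0 x hx⟩
      exact ⟨T, hT, hTt, rfl⟩
    rw [le_div_iff₀ hwpos]
    calc (rk S₀ : ℝ) / S₀.card * totalWeight G w ≤ ∑ e ∈ T.edgeFinset, w e := h1
      _ ≤ maxTreeWeight G w := h2
  refine ⟨w01, ?_, htw01pos, ⟨⟨w01, ?_, htw01pos, rfl⟩, ?_⟩⟩
  · intro e _
    simp only [hw01]
    by_cases h : e ∈ S₀
    · right; rw [if_pos h]
    · left; rw [if_neg h]
  · intro e _
    simp only [hw01]
    split_ifs <;> norm_num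
  · rintro x ⟨w, hw0, hwpos, rfl⟩
    rw [hM01, htw01]
    exact hlower w hw0 hwpos
end
end

section
/- Let G be a finite simple connected graph with at least two vertices. Then the infimum, over all edge-weight functions ω : E(G) → ℝ with ω(e) ≥ 0 for all e and ω(G) > 0, of the weighting ratio t_ω(G) equals the minimum over all S ∈ Co(G) of (|S| − 1)/e(G[S]), and this minimum is attained. -/
open scoped Classical

noncomputable section

set_option maxHeartbeats 1000000

/-- The number of edges of the induced subgraph `G[S]`, i.e. the number of edges of
`G` with both endpoints in `S`. -/
def inducedEdgeCount {V : Type*} [Fintype V] (G : SimpleGraph V) (S : Finset V) : ℕ :=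
  (G.edgeFinset.filter (fun e => ∀ v ∈ e, v ∈ S)).card

namespace SpanningAux

set_option linter.unusedSectionVars false

open SimpleGraph Finset

variable {V : Type*} [Fintype V]

/-- Number of connected components. -/
def ncomp (H : SimpleGraph V) : ℕ := Nat.card H.ConnectedComponent

lemma hout (e : Sym2 V) : s(e.out.1, e.out.2) = e := e.out_eq

lemma ncard_edgeSet (B : SimpleGraph V) : B.edgeSet.ncard = B.edgeFinset.card := by
  rw [← SimpleGraph.coe_edgeFinset, Set.ncard_coe_finset]

lemma ncard_inter (T : SimpleGraph V) (F : Finset (Sym2 V)) :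
    (T.edgeSet ∩ (F : Set (Sym2 V))).ncard = (T.edgeFinset ∩ F).card := by
  rw [← SimpleGraph.coe_edgeFinset, ← Finset.coe_inter, Set.ncard_coe_finset]

lemma nat_card_option (α : Type*) [Finite α] : Nat.card (Option α) = Nat.card α + 1 := by
  have e : Option α ≃ α ⊕ (PUnit : Type) := Equiv.optionEquivSumPUnit α
  rw [Nat.card_congr e, Nat.card_sum]
  congr 1
  exact Nat.card_unique

lemma reach_sup_edge {H : SimpleGraph V} {u v x y : V}
    (h : (H ⊔ SimpleGraph.fromEdgeSet {s(u, v)}).Reachable x y) :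
    H.Reachable x y ∨ (H.Reachable x u ∧ H.Reachable v y) ∨
      (H.Reachable x v ∧ H.Reachable u y) := by
  obtain ⟨p⟩ := h
  induction p with
  | nil => exact Or.inl (Reachable.refl _)
  | @cons a b c hadj p ih =>
    rw [SimpleGraph.sup_adj] at hadj
    rcases hadj with hH | hE
    · rcases ih with h1 | ⟨h1, h2⟩ | ⟨h1, h2⟩
      · exact Or.inl (hH.reachable.trans h1)
      · exact Or.inr (Or.inl ⟨hH.reachable.trans h1, h2⟩)
      · exact Or.inr (Or.inr ⟨hH.reachable.trans h1, h2⟩)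
    · rw [SimpleGraph.fromEdgeSet_adj] at hE
      have hab := hE.1
      rw [Set.mem_singleton_iff, Sym2.eq_iff] at hab
      rcases hab with ⟨rfl, rfl⟩ | ⟨rfl, rfl⟩
      · rcases ih with h1 | ⟨h1, h2⟩ | ⟨h1, h2⟩
        · exact Or.inr (Or.inl ⟨Reachable.refl _, h1⟩)
        · exact Or.inl (h1.symm.trans h2)
        · exact Or.inl h2
      · rcases ih with h1 | ⟨h1, h2⟩ | ⟨h1, h2⟩
        · exact Or.inr (Or.inr ⟨Reachable.refl _, h1⟩)
        · exact Or.inl h2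
        · exact Or.inl (h1.symm.trans h2)

lemma fromEdgeSet_single_le {H : SimpleGraph V} {u v : V} (h : H.Adj u v) :
    SimpleGraph.fromEdgeSet {s(u, v)} ≤ H := by
  intro a b hab
  rw [SimpleGraph.fromEdgeSet_adj, Set.mem_singleton_iff, Sym2.eq_iff] at hab
  rcases hab.1 with ⟨rfl, rfl⟩ | ⟨rfl, rfl⟩
  · exact h
  · exact h.symm

lemma ncomp_sup_edge {H : SimpleGraph V} {u v : V} (hne : u ≠ v) (hnr : ¬H.Reachable u v) :
    ncomp (H ⊔ SimpleGraph.fromEdgeSet {s(u, v)}) + 1 = ncomp H := by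
  classical
  set H' := H ⊔ SimpleGraph.fromEdgeSet {s(u, v)} with hH'
  let φ : H.ConnectedComponent → H'.ConnectedComponent :=
    SimpleGraph.ConnectedComponent.map (SimpleGraph.Hom.ofLE le_sup_left)
  have hφmk : ∀ x : V, φ (H.connectedComponentMk x) = H'.connectedComponentMk x := fun x => rfl
  have hadj : H'.Adj u v := by
    rw [hH', SimpleGraph.sup_adj, SimpleGraph.fromEdgeSet_adj]
    exact Or.inr ⟨rfl, hne⟩
  have hkey : ∀ x y : V, φ (H.connectedComponentMk x) = φ (H.connectedComponentMk y) →
      H.connectedComponentMk x = H.connectedComponentMk y ∨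
      (H.connectedComponentMk x = H.connectedComponentMk u ∧
        H.connectedComponentMk y = H.connectedComponentMk v) ∨
      (H.connectedComponentMk x = H.connectedComponentMk v ∧
        H.connectedComponentMk y = H.connectedComponentMk u) := by
    intro x y h
    rw [hφmk, hφmk, SimpleGraph.ConnectedComponent.eq] at h
    rcases reach_sup_edge h with h1 | ⟨h1, h2⟩ | ⟨h1, h2⟩
    · exact Or.inl (SimpleGraph.ConnectedComponent.sound h1)
    · exact Or.inr (Or.inl ⟨SimpleGraph.ConnectedComponent.sound h1,
        SimpleGraph.ConnectedComponent.sound h2.symm⟩)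
    · exact Or.inr (Or.inr ⟨SimpleGraph.ConnectedComponent.sound h1,
        SimpleGraph.ConnectedComponent.sound h2.symm⟩)
  have hresinj : Function.Injective
      (fun c : {c : H.ConnectedComponent // c ≠ H.connectedComponentMk v} => φ c.1) := by
    rintro ⟨c₁, hc₁⟩ ⟨c₂, hc₂⟩ h
    obtain ⟨x, rfl⟩ := Quot.exists_rep c₁
    obtain ⟨y, rfl⟩ := Quot.exists_rep c₂
    simp only at h
    rcases hkey x y h with h1 | ⟨h1, h2⟩ | ⟨h1, h2⟩
    · exact Subtype.ext h1
    · exact absurd h2 hc₂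
    · exact absurd h1 hc₁
  have hressurj : Function.Surjective
      (fun c : {c : H.ConnectedComponent // c ≠ H.connectedComponentMk v} => φ c.1) := by
    intro c'
    obtain ⟨y, rfl⟩ := Quot.exists_rep c'
    by_cases hy : H.connectedComponentMk y = H.connectedComponentMk v
    · refine ⟨⟨H.connectedComponentMk u, fun h =>
        hnr (SimpleGraph.ConnectedComponent.exact h)⟩, ?_⟩
      have h1 : H'.connectedComponentMk y = H'.connectedComponentMk v :=
        SimpleGraph.ConnectedComponent.sound
          (SimpleGraph.Reachable.mono le_sup_left (SimpleGraph.ConnectedComponent.exact hy))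
      have h2 : H'.connectedComponentMk u = H'.connectedComponentMk v :=
        SimpleGraph.ConnectedComponent.sound hadj.reachable
      show φ (H.connectedComponentMk u) = _
      rw [hφmk, h2, ← h1]
      rfl
    · exact ⟨⟨H.connectedComponentMk y, hy⟩, hφmk y⟩
  have heq : Nat.card {c : H.ConnectedComponent // c ≠ H.connectedComponentMk v} = ncomp H' :=
    le_antisymm (Nat.card_le_card_of_injective _ hresinj)
      (Nat.card_le_card_of_surjective _ hressurj)
  have hopt : ncomp H
      = Nat.card {c : H.ConnectedComponent // c ≠ H.connectedComponentMk v} + 1 := by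
    rw [ncomp, ← Nat.card_congr (Equiv.optionSubtypeNe (H.connectedComponentMk v))]
    exact nat_card_option _
  omega

lemma isAcyclic_mono {H K : SimpleGraph V} (h : H ≤ K) (hK : K.IsAcyclic) : H.IsAcyclic :=
  fun _ c hc => hK (c.mapLe h) (hc.mapLe h)

lemma isAcyclic_sup_edge {H : SimpleGraph V} {u v : V} (hac : H.IsAcyclic) (hne : u ≠ v)
    (hnr : ¬ H.Reachable u v) : (H ⊔ SimpleGraph.fromEdgeSet {s(u, v)}).IsAcyclic := by
  have hnadj : ¬ H.Adj u v := fun h => hnr h.reachable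
  have hdel : (H ⊔ SimpleGraph.fromEdgeSet {s(u, v)}) \ SimpleGraph.fromEdgeSet {s(u, v)} = H := by
    apply SimpleGraph.edgeSet_injective
    rw [SimpleGraph.edgeSet_sdiff, SimpleGraph.edgeSet_sup]
    ext e
    simp only [Set.mem_diff, Set.mem_union]
    constructor
    · rintro ⟨h1 | h2, h3⟩
      · exact h1
      · exact absurd h2 h3
    · intro h
      refine ⟨Or.inl h, fun hmem => ?_⟩
      rw [SimpleGraph.edgeSet_fromEdgeSet] at hmem
      obtain ⟨hmem, -⟩ := hmem
      rw [Set.mem_singleton_iff] at hmem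
      subst hmem
      rw [SimpleGraph.mem_edgeSet] at h
      exact hnadj h
  have hadj' : (H ⊔ SimpleGraph.fromEdgeSet {s(u, v)}).Adj u v := by
    rw [SimpleGraph.sup_adj, SimpleGraph.fromEdgeSet_adj]
    exact Or.inr ⟨rfl, hne⟩
  have hbridge : (H ⊔ SimpleGraph.fromEdgeSet {s(u, v)}).IsBridge s(u, v) := by
    rw [SimpleGraph.isBridge_iff]
    rw [SimpleGraph.deleteEdges]
    rw [hdel]
    exact hnr
  intro x c hc
  have hnot := ((SimpleGraph.isBridge_iff_adj_and_forall_cycle_notMem hadj').mp hbridge) c hc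
  have hsub : ∀ f ∈ c.edges, f ∈ H.edgeSet := by
    intro f hf
    have hfB := c.edges_subset_edgeSet hf
    rw [SimpleGraph.edgeSet_sup, SimpleGraph.edgeSet_fromEdgeSet] at hfB
    rcases hfB with h | ⟨h, -⟩
    · exact h
    · rw [Set.mem_singleton_iff] at h
      subst h
      exact absurd hf hnot
  exact hac (c.transfer H hsub) (hc.transfer hsub)

lemma edgeSet_sup_edge {H : SimpleGraph V} {u v : V} (hne : u ≠ v) :
    (H ⊔ SimpleGraph.fromEdgeSet {s(u, v)}).edgeSet = insert s(u, v) H.edgeSet := by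
  rw [SimpleGraph.edgeSet_sup, SimpleGraph.edgeSet_fromEdgeSet]
  ext e
  simp only [Set.mem_union, Set.mem_diff, Set.mem_singleton_iff, Set.mem_setOf_eq,
    Set.mem_insert_iff]
  constructor
  · rintro (h | ⟨rfl, -⟩)
    · exact Or.inr h
    · exact Or.inl rfl
  · rintro (rfl | h)
    · exact Or.inr ⟨rfl, by simp [Sym2.isDiag_iff_proj_eq, hne]⟩
    · exact Or.inl h

lemma exists_spanning_forest_aux :
    ∀ (n : ℕ) (H K : SimpleGraph V), ncomp H ≤ n → H ≤ K → H.IsAcyclic →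
      ∃ B, H ≤ B ∧ B ≤ K ∧ B.IsAcyclic ∧ (∀ x y, K.Reachable x y → B.Reachable x y) := by
  intro n
  induction n with
  | zero =>
    intro H K hn hHK hac
    have hV : IsEmpty V := by
      by_contra h
      rw [not_isEmpty_iff] at h
      obtain ⟨x⟩ := h
      have h0 : Nat.card H.ConnectedComponent ≠ 0 :=
        Nat.card_ne_zero.mpr ⟨⟨H.connectedComponentMk x⟩, inferInstance⟩
      exact h0 (Nat.le_zero.mp hn)
    exact ⟨H, le_rfl, hHK, hac, fun x y _ => isEmptyElim x⟩
  | succ n ih =>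
    intro H K hn hHK hac
    by_cases hall : ∀ x y : V, K.Adj x y → H.Reachable x y
    · refine ⟨H, le_rfl, hHK, hac, fun x y hr => ?_⟩
      obtain ⟨p⟩ := hr
      induction p with
      | nil => exact Reachable.refl _
      | cons ha p ihp => exact (hall _ _ ha).trans ihp
    · push_neg at hall
      obtain ⟨u, v, hKadj, hnr⟩ := hall
      have hne : u ≠ v := hKadj.ne
      have hcard := ncomp_sup_edge hne hnr
      obtain ⟨B, hB1, hB2, hB3, hB4⟩ := ih (H ⊔ SimpleGraph.fromEdgeSet {s(u, v)}) K
        (by omega) (sup_le hHK (fromEdgeSet_single_le hKadj)) (isAcyclic_sup_edge hac hne hnr)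
      exact ⟨B, le_trans le_sup_left hB1, hB2, hB3, hB4⟩

lemma ncomp_le_of_le {B K : SimpleGraph V} (hBK : B ≤ K) : ncomp K ≤ ncomp B := by
  have hsurj : Function.Surjective
      (SimpleGraph.ConnectedComponent.map (SimpleGraph.Hom.ofLE hBK)) := by
    intro c
    obtain ⟨x, rfl⟩ := Quot.exists_rep c
    exact ⟨B.connectedComponentMk x, rfl⟩
  exact Nat.card_le_card_of_surjective _ hsurj

lemma ncomp_eq_of_reach_iff {B K : SimpleGraph V} (hBK : B ≤ K)
    (h : ∀ x y, K.Reachable x y → B.Reachable x y) : ncomp B = ncomp K := by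
  refine le_antisymm ?_ (ncomp_le_of_le hBK)
  have hsurj : Function.Surjective (fun c : K.ConnectedComponent =>
      Quot.lift (fun x => B.connectedComponentMk x)
        (fun a b (hr : K.Reachable a b) =>
          SimpleGraph.ConnectedComponent.sound (h a b hr)) c) := by
    intro c
    obtain ⟨x, rfl⟩ := Quot.exists_rep c
    exact ⟨K.connectedComponentMk x, rfl⟩
  exact Nat.card_le_card_of_surjective _ hsurj

lemma forest_card_aux :
    ∀ (n : ℕ) (H : SimpleGraph V), H.edgeSet.ncard ≤ n → H.IsAcyclic →
      H.edgeSet.ncard + ncomp H = Fintype.card V := by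
  intro n
  induction n with
  | zero =>
    intro H h0 _
    have he : H.edgeSet = ∅ := (Set.ncard_eq_zero (Set.toFinite _)).mp (Nat.le_zero.mp h0)
    have hbot : H = ⊥ := SimpleGraph.edgeSet_eq_empty.mp he
    subst hbot
    have hbij : Function.Bijective
        (fun x : V => (⊥ : SimpleGraph V).connectedComponentMk x) := by
      constructor
      · intro a b hab
        exact (SimpleGraph.reachable_bot).mp (SimpleGraph.ConnectedComponent.exact hab)
      · intro c
        exact Quot.exists_rep c
    have hcomp : ncomp (⊥ : SimpleGraph V) = Fintype.card V := by
      rw [ncomp, ← Nat.card_eq_fintype_card (α := V)]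
      exact (Nat.card_eq_of_bijective _ hbij).symm
    rw [he, hcomp]
    simp
  | succ n ih =>
    intro H hcard hac
    by_cases h0 : H.edgeSet.ncard ≤ n
    · exact ih H h0 hac
    · have hpos : H.edgeSet.ncard ≠ 0 := by omega
      obtain ⟨e, he⟩ := Set.nonempty_of_ncard_ne_zero hpos
      revert he
      induction e using Sym2.ind with
      | _ u v =>
        intro he
        rw [SimpleGraph.mem_edgeSet] at he
        have hne : u ≠ v := he.ne
        have hsup : (H \ SimpleGraph.fromEdgeSet {s(u, v)})
            ⊔ SimpleGraph.fromEdgeSet {s(u, v)} = H :=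
          sdiff_sup_cancel (fromEdgeSet_single_le he)
        have hbridge : ¬ (H \ SimpleGraph.fromEdgeSet {s(u, v)}).Reachable u v := by
          have hb := (SimpleGraph.isAcyclic_iff_forall_adj_isBridge.mp hac) he
          rw [SimpleGraph.isBridge_iff] at hb
          exact hb
        have hacH' : (H \ SimpleGraph.fromEdgeSet {s(u, v)}).IsAcyclic :=
          isAcyclic_mono sdiff_le hac
        have hcomp : ncomp H + 1 = ncomp (H \ SimpleGraph.fromEdgeSet {s(u, v)}) := by
          have h2 := ncomp_sup_edge hne hbridge
          rwa [hsup] at h2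
        have hedges : H.edgeSet
            = insert s(u, v) (H \ SimpleGraph.fromEdgeSet {s(u, v)}).edgeSet := by
          conv_lhs => rw [← hsup]
          exact edgeSet_sup_edge hne
        have hnotmem : s(u, v) ∉ (H \ SimpleGraph.fromEdgeSet {s(u, v)}).edgeSet := by
          intro hmem
          rw [SimpleGraph.mem_edgeSet] at hmem
          exact hbridge hmem.reachable
        have hcard' : (H \ SimpleGraph.fromEdgeSet {s(u, v)}).edgeSet.ncard + 1
            = H.edgeSet.ncard := by
          rw [hedges, Set.ncard_insert_of_notMem hnotmem]
        have hih := ih (H \ SimpleGraph.fromEdgeSet {s(u, v)}) (by omega) hacH'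
        omega

lemma exists_spanning_forest (H K : SimpleGraph V) (hHK : H ≤ K) (hH : H.IsAcyclic) :
    ∃ B, H ≤ B ∧ B ≤ K ∧ B.IsAcyclic ∧ (∀ x y, K.Reachable x y → B.Reachable x y) ∧
      B.edgeSet.ncard + ncomp K = Fintype.card V := by
  obtain ⟨B, h1, h2, h3, h4⟩ := exists_spanning_forest_aux (ncomp H) H K le_rfl hHK hH
  refine ⟨B, h1, h2, h3, h4, ?_⟩
  have hfc := forest_card_aux B.edgeSet.ncard B le_rfl h3
  rwa [ncomp_eq_of_reach_iff h2 h4] at hfc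

lemma induce_supp_connected (K : SimpleGraph V) (C : K.ConnectedComponent) :
    (K.induce C.supp).Connected := by
  obtain ⟨u, hu⟩ := Quot.exists_rep C
  have huC : u ∈ C.supp := by
    rw [SimpleGraph.ConnectedComponent.mem_supp_iff]
    exact hu
  apply SimpleGraph.induce_connected_of_patches u huC
  intro v hv
  rw [SimpleGraph.ConnectedComponent.mem_supp_iff] at hv
  have hreach : K.Reachable u v := by
    apply SimpleGraph.ConnectedComponent.exact
    rw [hv]
    exact hu
  obtain ⟨p⟩ := hreach
  refine ⟨{x | x ∈ p.support}, ?_, p.start_mem_support, p.end_mem_support, ?_⟩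
  · intro z hz
    have hr : K.Reachable u z := (p.takeUntil z hz).reachable
    rw [SimpleGraph.ConnectedComponent.mem_supp_iff, ← hu]
    exact SimpleGraph.ConnectedComponent.sound hr.symm
  · exact (p.connected_induce_support).preconnected ⟨u, p.start_mem_support⟩
      ⟨v, p.end_mem_support⟩

lemma rank_lemma (G : SimpleGraph V) (t : ℝ) (ht : 0 ≤ t)
    (hmin : ∀ S : Finset V, 2 ≤ S.card → (G.induce (S : Set V)).Connected →
      t * (inducedEdgeCount G S : ℝ) ≤ (S.card : ℝ) - 1)
    (F : Finset (Sym2 V)) (hF : F ⊆ G.edgeFinset) :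
    t * (F.card : ℝ) + (ncomp (SimpleGraph.fromEdgeSet (F : Set (Sym2 V))) : ℝ)
      ≤ (Fintype.card V : ℝ) := by
  classical
  set K := SimpleGraph.fromEdgeSet (F : Set (Sym2 V)) with hK
  have hKG : K ≤ G := by
    rw [hK]
    have h1 : (F : Set (Sym2 V)) ⊆ G.edgeSet := by
      intro e he
      exact SimpleGraph.mem_edgeFinset.mp (hF he)
    calc SimpleGraph.fromEdgeSet (F : Set (Sym2 V)) ≤ SimpleGraph.fromEdgeSet G.edgeSet :=
          SimpleGraph.fromEdgeSet_mono h1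
      _ = G := SimpleGraph.fromEdgeSet_edgeSet G
  have hKadj : ∀ e ∈ F, K.Adj e.out.1 e.out.2 := by
    intro e he
    have hGadj : G.Adj e.out.1 e.out.2 := by
      rw [← SimpleGraph.mem_edgeSet, hout e]
      exact SimpleGraph.mem_edgeFinset.mp (hF he)
    rw [hK, SimpleGraph.fromEdgeSet_adj, hout e]
    exact ⟨he, hGadj.ne⟩
  set g : Sym2 V → K.ConnectedComponent := fun e => K.connectedComponentMk e.out.1 with hg
  have hVsum : Fintype.card V
      = ∑ C : K.ConnectedComponent, (Finset.univ.filter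
          fun x => K.connectedComponentMk x = C).card := by
    rw [← Finset.card_univ]
    exact Finset.card_eq_sum_card_fiberwise (fun x _ => Finset.mem_univ _)
  have hFsum : F.card = ∑ C : K.ConnectedComponent, (F.filter fun e => g e = C).card :=
    Finset.card_eq_sum_card_fiberwise (fun e _ => Finset.mem_univ _)
  have hper : ∀ C : K.ConnectedComponent,
      t * ((F.filter fun e => g e = C).card : ℝ) + 1
        ≤ ((Finset.univ.filter fun x => K.connectedComponentMk x = C).card : ℝ) := by
    intro C
    set S := Finset.univ.filter (fun x => K.connectedComponentMk x = C) with hS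
    obtain ⟨x₀, hx₀⟩ := Quot.exists_rep C
    have hx₀S : x₀ ∈ S := by
      rw [hS, Finset.mem_filter]
      exact ⟨Finset.mem_univ _, hx₀⟩
    by_cases hf : (F.filter fun e => g e = C).card = 0
    · rw [hf]
      have h1 : 1 ≤ S.card := Finset.card_pos.mpr ⟨x₀, hx₀S⟩
      have h1' : (1 : ℝ) ≤ (S.card : ℝ) := by exact_mod_cast h1
      push_cast
      linarith
    · obtain ⟨e, heF⟩ := Finset.card_pos.mp (Nat.pos_of_ne_zero hf)
      rw [Finset.mem_filter] at heF
      obtain ⟨heF, heC⟩ := heF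
      have hadjK := hKadj e heF
      have h1S : e.out.1 ∈ S := by
        rw [hS, Finset.mem_filter]
        exact ⟨Finset.mem_univ _, heC⟩
      have h2S : e.out.2 ∈ S := by
        rw [hS, Finset.mem_filter]
        refine ⟨Finset.mem_univ _, ?_⟩
        rw [← heC]
        exact SimpleGraph.ConnectedComponent.sound hadjK.symm.reachable
      have h2card : 2 ≤ S.card := Finset.one_lt_card.mpr ⟨_, h1S, _, h2S, hadjK.ne⟩
      have hSsupp : (S : Set V) = C.supp := by
        ext z
        simp [hS, SimpleGraph.ConnectedComponent.mem_supp_iff]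
      have hconnK : (K.induce (S : Set V)).Connected := by
        rw [hSsupp]
        exact induce_supp_connected K C
      have hconnG : (G.induce (S : Set V)).Connected :=
        hconnK.mono (fun a b hab => hKG hab)
      have hsubF : (F.filter fun e' => g e' = C)
          ⊆ G.edgeFinset.filter (fun e' => ∀ z ∈ e', z ∈ S) := by
        intro e' he'
        rw [Finset.mem_filter] at he' ⊢
        obtain ⟨he'F, he'C⟩ := he'
        have hadjK' := hKadj e' he'F
        refine ⟨hF he'F, fun z hz => ?_⟩
        have hz' : z = e'.out.1 ∨ z = e'.out.2 := by
          rw [← hout e', Sym2.mem_iff] at hz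
          exact hz
        rcases hz' with rfl | rfl
        · rw [hS, Finset.mem_filter]
          exact ⟨Finset.mem_univ _, he'C⟩
        · rw [hS, Finset.mem_filter]
          refine ⟨Finset.mem_univ _, ?_⟩
          rw [← he'C]
          exact SimpleGraph.ConnectedComponent.sound hadjK'.symm.reachable
      have hcardle : (F.filter fun e' => g e' = C).card ≤ inducedEdgeCount G S :=
        Finset.card_le_card hsubF
      have hm := hmin S h2card hconnG
      have hmul : t * ((F.filter fun e' => g e' = C).card : ℝ)
          ≤ t * (inducedEdgeCount G S : ℝ) := by
        apply mul_le_mul_of_nonneg_left _ ht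
        exact_mod_cast hcardle
      linarith
  have hsum2 : ∑ C : K.ConnectedComponent,
      (t * ((F.filter fun e => g e = C).card : ℝ) + 1)
      = t * (F.card : ℝ) + (ncomp K : ℝ) := by
    rw [Finset.sum_add_distrib, ← Finset.mul_sum]
    congr 1
    · congr 1
      rw [← Nat.cast_sum, ← hFsum]
    · rw [Finset.sum_const, nsmul_eq_mul, mul_one]
      norm_cast
      rw [ncomp, Nat.card_eq_fintype_card, Finset.card_univ]
  have hsum3 : (Fintype.card V : ℝ) = ∑ C : K.ConnectedComponent,
      ((Finset.univ.filter fun x => K.connectedComponentMk x = C).card : ℝ) := by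
    rw [← Nat.cast_sum]
    exact_mod_cast congrArg (Nat.cast (R := ℝ)) hVsum
  rw [← hsum2, hsum3]
  exact Finset.sum_le_sum (fun C _ => hper C)

lemma tree_inter_bound (T : SimpleGraph V) (hT : T.IsAcyclic) (F : Finset (Sym2 V))
    (hFdiag : ∀ e ∈ F, ¬ e.IsDiag) :
    (T.edgeSet ∩ (F : Set (Sym2 V))).ncard
      + ncomp (SimpleGraph.fromEdgeSet (F : Set (Sym2 V))) ≤ Fintype.card V := by
  set KF := SimpleGraph.fromEdgeSet (F : Set (Sym2 V)) with hKF
  have hBac : (T ⊓ KF).IsAcyclic := isAcyclic_mono inf_le_left hT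
  have hcount := forest_card_aux (T ⊓ KF).edgeSet.ncard (T ⊓ KF) le_rfl hBac
  have hncomp : ncomp KF ≤ ncomp (T ⊓ KF) := ncomp_le_of_le inf_le_right
  have hBedges : (T ⊓ KF).edgeSet = T.edgeSet ∩ (F : Set (Sym2 V)) := by
    rw [SimpleGraph.edgeSet_inf, hKF, SimpleGraph.edgeSet_fromEdgeSet]
    ext e
    simp only [Set.mem_inter_iff, Set.mem_diff, Set.mem_setOf_eq]
    constructor
    · rintro ⟨h1, h2, -⟩
      exact ⟨h1, h2⟩
    · rintro ⟨h1, h2⟩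
      exact ⟨h1, h2, hFdiag e h2⟩
  rw [← hBedges]
  omega

lemma reach_in_fromEdgeSet {F : Finset (Sym2 V)} {S : Finset V}
    (hFS : ∀ e ∈ F, ∀ v ∈ e, v ∈ S) {x y : V}
    (h : (SimpleGraph.fromEdgeSet (F : Set (Sym2 V))).Reachable x y) :
    x = y ∨ (x ∈ S ∧ y ∈ S) := by
  have hadjS : ∀ {a b : V}, (SimpleGraph.fromEdgeSet (F : Set (Sym2 V))).Adj a b →
      a ∈ S ∧ b ∈ S := by
    intro a b hab
    rw [SimpleGraph.fromEdgeSet_adj] at hab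
    have hmem := hab.1
    exact ⟨hFS _ hmem a (Sym2.mem_mk_left a b), hFS _ hmem b (Sym2.mem_mk_right a b)⟩
  obtain ⟨p⟩ := h
  induction p with
  | nil => exact Or.inl rfl
  | cons ha p ihp =>
    have h1 := hadjS ha
    rcases ihp with rfl | h2
    · exact Or.inr ⟨h1.1, h1.2⟩
    · exact Or.inr ⟨h1.1, h2.2⟩

lemma ncomp_induced (G : SimpleGraph V) (S : Finset V)
    (hconn : (G.induce (S : Set V)).Connected) (hS : S.Nonempty) :
    ncomp (SimpleGraph.fromEdgeSet
        ((G.edgeFinset.filter (fun e => ∀ v ∈ e, v ∈ S)) : Set (Sym2 V))) + S.card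
      = Fintype.card V + 1 := by
  classical
  set FS := G.edgeFinset.filter (fun e => ∀ v ∈ e, v ∈ S) with hFS
  set K := SimpleGraph.fromEdgeSet (FS : Set (Sym2 V)) with hK
  obtain ⟨s₀, hs₀⟩ := hS
  have hFSmem : ∀ e ∈ FS, ∀ v ∈ e, v ∈ S := by
    intro e he v hv
    exact (Finset.mem_filter.mp he).2 v hv
  have hhom : ∀ x ∈ S, K.Reachable s₀ x := by
    intro x hx
    have hr := hconn.preconnected ⟨s₀, hs₀⟩ ⟨x, hx⟩
    have hmap : ∀ {a b : (S : Set V)}, (G.induce (S : Set V)).Adj a b → K.Adj a.1 b.1 := by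
      intro a b hab
      have hGadj : G.Adj a.1 b.1 := hab
      rw [hK, SimpleGraph.fromEdgeSet_adj]
      refine ⟨?_, hGadj.ne⟩
      refine Finset.mem_coe.mpr
        (Finset.mem_filter.mpr ⟨SimpleGraph.mem_edgeFinset.mpr hGadj, ?_⟩)
      intro z hz
      rcases Sym2.mem_iff.mp hz with rfl | rfl
      · exact a.2
      · exact b.2
    exact hr.map ⟨Subtype.val, hmap⟩
  have hcard : Nat.card K.ConnectedComponent = Nat.card (Option {x : V // x ∉ S}) := by
    apply Nat.card_congr
    let f : V → Option {x : V // x ∉ S} := fun x => if hx : x ∈ S then none else some ⟨x, hx⟩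
    have hresp : ∀ a b : V, K.Reachable a b → f a = f b := by
      intro a b hr
      rcases reach_in_fromEdgeSet hFSmem hr with rfl | ⟨hh1, hh2⟩
      · rfl
      · simp only [f]
        rw [dif_pos hh1, dif_pos hh2]
    refine ⟨Quot.lift f hresp,
      fun o => o.elim (K.connectedComponentMk s₀) (fun x => K.connectedComponentMk x.1),
      ?_, ?_⟩
    · intro cc
      obtain ⟨x, rfl⟩ := Quot.exists_rep cc
      show Option.elim (f x) (K.connectedComponentMk s₀)
        (fun x => K.connectedComponentMk x.1) = Quot.mk K.Reachable x
      by_cases hx : x ∈ S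
      · have hfx : f x = none := dif_pos hx
        rw [hfx]
        exact SimpleGraph.ConnectedComponent.sound (hhom x hx)
      · have hfx : f x = some ⟨x, hx⟩ := dif_neg hx
        rw [hfx]
        rfl
    · intro o
      cases o with
      | none =>
        show f s₀ = none
        exact dif_pos hs₀
      | some xh =>
        show f xh.1 = some xh
        exact dif_neg xh.2
  have h1 : Nat.card (Option {x : V // x ∉ S}) = Nat.card {x : V // x ∉ S} + 1 :=
    nat_card_option _
  have h2 : Nat.card {x : V // x ∈ S} = S.card := Nat.card_eq_finsetCard S
  have h3 : Nat.card {x : V // x ∈ S} + Nat.card {x : V // ¬ x ∈ S} = Fintype.card V := by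
    rw [← Nat.card_sum, Nat.card_congr (Equiv.sumCompl (· ∈ S)), Nat.card_eq_fintype_card]
  rw [ncomp, hcard, h1]
  omega

lemma exists_adj_of_reachable_ne {W : Type*} {G' : SimpleGraph W} {x y : W}
    (h : G'.Reachable x y) (hne : x ≠ y) : ∃ z, G'.Adj x z := by
  obtain ⟨p⟩ := h
  cases p with
  | nil => exact absurd rfl hne
  | cons ha _ => exact ⟨_, ha⟩

lemma inducedEdgeCount_pos (G : SimpleGraph V) {S : Finset V} (h2 : 2 ≤ S.card)
    (hc : (G.induce (S : Set V)).Connected) : 0 < inducedEdgeCount G S := by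
  obtain ⟨x, hx, y, hy, hxy⟩ := Finset.one_lt_card.mp h2
  have hr : (G.induce (S : Set V)).Reachable ⟨x, hx⟩ ⟨y, hy⟩ := hc.preconnected _ _
  obtain ⟨z, hz⟩ := exists_adj_of_reachable_ne hr (fun h => hxy (congrArg Subtype.val h))
  have hGadj : G.Adj x z.1 := hz
  apply Finset.card_pos.mpr
  refine ⟨s(x, z.1), Finset.mem_filter.mpr ⟨SimpleGraph.mem_edgeFinset.mpr hGadj, ?_⟩⟩
  intro v hv
  rcases Sym2.mem_iff.mp hv with rfl | rfl
  · exact hx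
  · exact z.2

lemma key_lemma (G : SimpleGraph V) (hG : G.Connected) (t : ℝ) (ht : 0 ≤ t)
    (hmin : ∀ S : Finset V, 2 ≤ S.card → (G.induce (S : Set V)).Connected →
      t * (inducedEdgeCount G S : ℝ) ≤ (S.card : ℝ) - 1) :
    ∀ (n : ℕ) (w : Sym2 V → ℝ), (∀ e ∈ G.edgeFinset, 0 ≤ w e) →
      ((G.edgeFinset.image w).filter (fun x => 0 < x)).card ≤ n →
      ∀ H : SimpleGraph V, H ≤ G → H.IsAcyclic →
        (∀ e ∈ H.edgeSet, ∀ e' ∈ G.edgeFinset, w e' ≤ w e) →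
      ∃ T : SimpleGraph V, T ≤ G ∧ T.IsTree ∧ H ≤ T ∧
        t * totalWeight G w ≤ ∑ e ∈ T.edgeFinset, w e := by
  intro n
  induction n with
  | zero =>
    intro w hw hcard H hHG hHac hHmax
    have hzero : ∀ e ∈ G.edgeFinset, w e = 0 := by
      intro e he
      by_contra h
      have hpos : 0 < w e := lt_of_le_of_ne (hw e he) (Ne.symm h)
      have hmem : w e ∈ (G.edgeFinset.image w).filter (fun x => 0 < x) :=
        Finset.mem_filter.mpr ⟨Finset.mem_image_of_mem w he, hpos⟩
      have := Finset.card_pos.mpr ⟨w e, hmem⟩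
      omega
    obtain ⟨B, h1, h2, h3, h4, -⟩ := exists_spanning_forest H G hHG hHac
    haveI := hG.nonempty
    refine ⟨B, h2, ⟨⟨fun x y => h4 x y (hG.preconnected x y)⟩, h3⟩, h1, ?_⟩
    have htw : totalWeight G w = 0 := Finset.sum_eq_zero hzero
    rw [htw, mul_zero]
    apply Finset.sum_nonneg
    intro e he
    exact hw e (SimpleGraph.edgeFinset_mono h2 he)
  | succ n ih =>
    intro w hw hcard H hHG hHac hHmax
    by_cases hPne : ((G.edgeFinset.image w).filter (fun x => 0 < x)).Nonempty
    · set P := (G.edgeFinset.image w).filter (fun x => 0 < x) with hP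
      set c := P.max' hPne with hc
      have hcP : c ∈ P := P.max'_mem hPne
      have hc0 : 0 < c := (Finset.mem_filter.mp hcP).2
      obtain ⟨e₀, he₀G, he₀w⟩ := Finset.mem_image.mp (Finset.mem_filter.mp hcP).1
      have hmax : ∀ e ∈ G.edgeFinset, w e ≤ c := by
        intro e he
        by_cases h : 0 < w e
        · exact P.le_max' _ (Finset.mem_filter.mpr ⟨Finset.mem_image_of_mem w he, h⟩)
        · push_neg at h
          linarith
      set F := G.edgeFinset.filter (fun e => c ≤ w e) with hF
      have hFsub : F ⊆ G.edgeFinset := Finset.filter_subset _ _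
      have he₀F : e₀ ∈ F := Finset.mem_filter.mpr ⟨he₀G, he₀w.ge⟩
      set KF := SimpleGraph.fromEdgeSet (F : Set (Sym2 V)) with hKF
      have hKFG : KF ≤ G := by
        rw [hKF]
        have h1 : (F : Set (Sym2 V)) ⊆ G.edgeSet := by
          intro e he
          exact SimpleGraph.mem_edgeFinset.mp (hFsub he)
        calc SimpleGraph.fromEdgeSet (F : Set (Sym2 V))
            ≤ SimpleGraph.fromEdgeSet G.edgeSet := SimpleGraph.fromEdgeSet_mono h1
          _ = G := SimpleGraph.fromEdgeSet_edgeSet G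
      have hHKF : H ≤ KF := by
        intro a b hab
        rw [hKF, SimpleGraph.fromEdgeSet_adj]
        refine ⟨?_, hab.ne⟩
        have habG : s(a, b) ∈ G.edgeFinset := SimpleGraph.mem_edgeFinset.mpr (hHG hab)
        have habH : s(a, b) ∈ H.edgeSet := (SimpleGraph.mem_edgeSet H).mpr hab
        have hge := hHmax _ habH e₀ he₀G
        refine Finset.mem_coe.mpr (Finset.mem_filter.mpr ⟨habG, ?_⟩)
        rw [← he₀w]
        exact hge
      obtain ⟨B, hHB, hBKF, hBac, hBreach, hBcount⟩ := exists_spanning_forest H KF hHKF hHac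
      have hBsubF : ∀ e ∈ B.edgeSet, e ∈ F := by
        intro e he
        have hmem2 : e ∈ KF.edgeSet := (SimpleGraph.edgeSet_mono hBKF) he
        rw [hKF, SimpleGraph.edgeSet_fromEdgeSet] at hmem2
        exact Finset.mem_coe.mp hmem2.1
      set Q := P.erase c with hQ
      obtain ⟨m, hm0, hmc, hQbound, hmQ⟩ : ∃ m : ℝ, 0 ≤ m ∧ m < c ∧
          (∀ x ∈ P, x ≠ c → x ≤ m) ∧ (0 < m → m ∈ Q) := by
        by_cases hQne : Q.Nonempty
        · refine ⟨Q.max' hQne, ?_, ?_, ?_, fun _ => Q.max'_mem hQne⟩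
          · have h1 := Q.max'_mem hQne
            have h2 := (Finset.mem_filter.mp (Finset.mem_of_mem_erase h1)).2
            linarith
          · have hmem := Q.max'_mem hQne
            have h1 : Q.max' hQne ∈ P := Finset.mem_of_mem_erase hmem
            have h2 := Finset.ne_of_mem_erase hmem
            exact lt_of_le_of_ne (P.le_max' _ h1) h2
          · intro x hx hxc
            exact Q.le_max' x (Finset.mem_erase.mpr ⟨hxc, hx⟩)
        · refine ⟨0, le_rfl, hc0, ?_, fun h => absurd rfl (ne_of_gt h)⟩
          intro x hx hxc
          exact absurd ⟨x, Finset.mem_erase.mpr ⟨hxc, hx⟩⟩ hQne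
      have hsplit : ∀ e ∈ G.edgeFinset, w e ≤ m ∨ w e = c := by
        intro e he
        by_cases h : 0 < w e
        · have hP' : w e ∈ P := Finset.mem_filter.mpr ⟨Finset.mem_image_of_mem w he, h⟩
          by_cases hc' : w e = c
          · exact Or.inr hc'
          · exact Or.inl (hQbound _ hP' hc')
        · push_neg at h
          exact Or.inl (by linarith)
      have hwF : ∀ e ∈ F, w e = c := fun e he =>
        le_antisymm (hmax e (hFsub he)) (Finset.mem_filter.mp he).2
      have hnotF : ∀ e ∈ G.edgeFinset, e ∉ F → w e ≤ m := by
        intro e he hne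
        rcases hsplit e he with h | h
        · exact h
        · exact absurd (Finset.mem_filter.mpr ⟨he, h.ge⟩) hne
      set w' : Sym2 V → ℝ := fun e => min (w e) m with hw'
      have hw'nonneg : ∀ e ∈ G.edgeFinset, 0 ≤ w' e := fun e he => le_min (hw e he) hm0
      have hw'card : ((G.edgeFinset.image w').filter (fun x => 0 < x)).card ≤ n := by
        have hsub : (G.edgeFinset.image w').filter (fun x => 0 < x) ⊆ Q := by
          intro x hx
          rw [Finset.mem_filter] at hx
          obtain ⟨hx1, hx2⟩ := hx
          obtain ⟨e, he, rfl⟩ := Finset.mem_image.mp hx1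
          by_cases h : w e ≤ m
          · have hwe : w' e = w e := min_eq_left h
            rw [hQ]
            refine Finset.mem_erase.mpr ⟨?_, ?_⟩
            · rw [hwe]
              exact ne_of_lt (lt_of_le_of_lt h hmc)
            · rw [hwe]
              refine Finset.mem_filter.mpr ⟨Finset.mem_image_of_mem w he, ?_⟩
              rwa [hwe] at hx2
          · push_neg at h
            have hwe : w' e = m := min_eq_right h.le
            rw [hwe] at hx2 ⊢
            exact hmQ hx2
        calc ((G.edgeFinset.image w').filter (fun x => 0 < x)).card
            ≤ Q.card := Finset.card_le_card hsub
          _ = P.card - 1 := by rw [hQ, Finset.card_erase_of_mem hcP]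
          _ ≤ n := by
              have hPn : P.card ≤ n + 1 := hcard
              omega
      have hBmax : ∀ e ∈ B.edgeSet, ∀ e' ∈ G.edgeFinset, w' e' ≤ w' e := by
        intro e he e' he'
        have heF := hBsubF e he
        have h1 : w' e = m := by
          simp only [hw']
          exact min_eq_right (by rw [hwF e heF]; exact hmc.le)
        rw [h1]
        exact min_le_right _ _
      obtain ⟨T, hTG, hTtree, hBT, hTbound⟩ :=
        ih w' hw'nonneg hw'card B (le_trans hBKF hKFG) hBac hBmax
      refine ⟨T, hTG, hTtree, le_trans hHB hBT, ?_⟩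
      have hTsub : T.edgeFinset ⊆ G.edgeFinset := SimpleGraph.edgeFinset_mono hTG
      have hident : ∀ e ∈ G.edgeFinset, w e = w' e + (if e ∈ F then c - m else 0) := by
        intro e he
        by_cases h : e ∈ F
        · rw [if_pos h]
          have hw'e : w' e = m := by
            simp only [hw']
            exact min_eq_right (by rw [hwF e h]; exact hmc.le)
          rw [hw'e, hwF e h]
          ring
        · rw [if_neg h, add_zero]
          simp only [hw']
          exact (min_eq_left (hnotF e he h)).symm
      have hTW : totalWeight G w = totalWeight G w' + (c - m) * (F.card : ℝ) := by
        rw [totalWeight, totalWeight, Finset.sum_congr rfl hident, Finset.sum_add_distrib]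
        congr 1
        rw [Finset.sum_ite_mem, Finset.inter_eq_right.mpr hFsub, Finset.sum_const,
          nsmul_eq_mul, mul_comm]
      have hTsum : ∑ e ∈ T.edgeFinset, w e
          = (∑ e ∈ T.edgeFinset, w' e) + (c - m) * ((T.edgeFinset ∩ F).card : ℝ) := by
        rw [Finset.sum_congr rfl (fun e he => hident e (hTsub he)), Finset.sum_add_distrib]
        congr 1
        rw [Finset.sum_ite_mem, Finset.sum_const, nsmul_eq_mul, mul_comm]
      have hcount : B.edgeFinset.card ≤ (T.edgeFinset ∩ F).card := by
        apply Finset.card_le_card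
        intro e he
        exact Finset.mem_inter.mpr
          ⟨SimpleGraph.edgeFinset_mono hBT he, hBsubF e (SimpleGraph.mem_edgeFinset.mp he)⟩
      have hrank := rank_lemma G t ht hmin F hFsub
      rw [← hKF] at hrank
      have hBcard : B.edgeFinset.card + ncomp KF = Fintype.card V := by
        rw [← ncard_edgeSet]
        exact hBcount
      have hc1 : (B.edgeFinset.card : ℝ) + (ncomp KF : ℝ) = (Fintype.card V : ℝ) := by
        exact_mod_cast hBcard
      have hrank' : t * (F.card : ℝ) ≤ (B.edgeFinset.card : ℝ) := by
        linarith
      calc t * totalWeight G w = t * totalWeight G w' + (c - m) * (t * (F.card : ℝ)) := by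
            rw [hTW]; ring
        _ ≤ (∑ e ∈ T.edgeFinset, w' e) + (c - m) * ((T.edgeFinset ∩ F).card : ℝ) := by
            apply add_le_add hTbound
            apply mul_le_mul_of_nonneg_left _ (by linarith : (0:ℝ) ≤ c - m)
            calc t * (F.card : ℝ) ≤ (B.edgeFinset.card : ℝ) := hrank'
              _ ≤ ((T.edgeFinset ∩ F).card : ℝ) := by exact_mod_cast hcount
        _ = ∑ e ∈ T.edgeFinset, w e := hTsum.symm
    · refine ih w hw ?_ H hHG hHac hHmax
      rw [Finset.not_nonempty_iff_eq_empty] at hPne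
      rw [hPne]
      simp

end SpanningAux

open SpanningAux Finset

/-- For a finite simple connected graph `G` with at least two vertices, the infimum of
the weighting ratio `t_w(G)` over all nonnegative edge-weight functions `w` with
positive total weight equals `min_{S ∈ Co(G)} (|S| - 1)/e(G[S])`, and both the
infimum and the minimum are attained. -/
theorem inf_ratio_eq_min_connected_subsets {V : Type*} [Fintype V]
    (G : SimpleGraph V) (hG : G.Connected) (hV : 2 ≤ Fintype.card V) :
    ∃ S : Finset V, 2 ≤ S.card ∧ (G.induce (S : Set V)).Connected ∧
      IsLeast
        {x | ∃ w : Sym2 V → ℝ, (∀ e ∈ G.edgeFinset, 0 ≤ w e) ∧ 0 < totalWeight G w ∧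
          x = maxTreeWeight G w / totalWeight G w}
        (((S.card : ℝ) - 1) / (inducedEdgeCount G S : ℝ)) ∧
      (∀ S' : Finset V, 2 ≤ S'.card → (G.induce (S' : Set V)).Connected →
        ((S.card : ℝ) - 1) / (inducedEdgeCount G S : ℝ) ≤
          ((S'.card : ℝ) - 1) / (inducedEdgeCount G S' : ℝ)) := by
  classical
  obtain ⟨a, b, hab⟩ := Fintype.exists_pair_of_one_lt_card (by omega : 1 < Fintype.card V)
  obtain ⟨z, hz⟩ : ∃ z, G.Adj a z :=
    exists_adj_of_reachable_ne (hG.preconnected a b) hab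
  set 𝒮 := (Finset.univ : Finset (Finset V)).filter
    (fun S : Finset V => 2 ≤ S.card ∧ (G.induce (S : Set V)).Connected) with h𝒮
  have h𝒮ne : 𝒮.Nonempty := by
    refine ⟨{a, z}, Finset.mem_filter.mpr ⟨Finset.mem_univ _, ?_, ?_⟩⟩
    · rw [Finset.card_insert_of_notMem (by simp [hz.ne]), Finset.card_singleton]
    · have hcoe : ((({a, z} : Finset V) : Set V)) = ({a, z} : Set V) := by simp
      rw [hcoe]
      exact SimpleGraph.induce_pair_connected_of_adj hz
  obtain ⟨S, hS𝒮, hSmin⟩ := Finset.exists_min_image 𝒮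
    (fun S : Finset V => ((S.card : ℝ) - 1) / (inducedEdgeCount G S : ℝ)) h𝒮ne
  rw [h𝒮, Finset.mem_filter] at hS𝒮
  obtain ⟨-, hS2, hSconn⟩ := hS𝒮
  have hmin' : ∀ S' : Finset V, 2 ≤ S'.card → (G.induce (S' : Set V)).Connected →
      ((S.card : ℝ) - 1) / (inducedEdgeCount G S : ℝ)
        ≤ ((S'.card : ℝ) - 1) / (inducedEdgeCount G S' : ℝ) := by
    intro S' h1 h2
    exact hSmin S' (Finset.mem_filter.mpr ⟨Finset.mem_univ _, h1, h2⟩)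
  set t := ((S.card : ℝ) - 1) / (inducedEdgeCount G S : ℝ) with htdef
  have hE := inducedEdgeCount_pos G hS2 hSconn
  have hScast : (2 : ℝ) ≤ (S.card : ℝ) := by exact_mod_cast hS2
  have ht : 0 ≤ t := div_nonneg (by linarith) (Nat.cast_nonneg _)
  have hminmul : ∀ S' : Finset V, 2 ≤ S'.card → (G.induce (S' : Set V)).Connected →
      t * (inducedEdgeCount G S' : ℝ) ≤ (S'.card : ℝ) - 1 := by
    intro S' h1 h2
    have hE' := inducedEdgeCount_pos G h1 h2
    have hE'cast : (0 : ℝ) < (inducedEdgeCount G S' : ℝ) := by exact_mod_cast hE'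
    have hle := hmin' S' h1 h2
    rw [htdef] at hle ⊢
    exact (le_div_iff₀ hE'cast).mp hle
  -- attainment witness
  set FS := G.edgeFinset.filter (fun e => ∀ v ∈ e, v ∈ S) with hFS
  have hIE : inducedEdgeCount G S = FS.card := rfl
  have hFSdiag : ∀ e ∈ FS, ¬ e.IsDiag := fun e he =>
    SimpleGraph.not_isDiag_of_mem_edgeFinset (Finset.mem_filter.mp he).1
  set KS := SimpleGraph.fromEdgeSet (FS : Set (Sym2 V)) with hKS
  have hKSG : KS ≤ G := by
    rw [hKS]
    have h1 : (FS : Set (Sym2 V)) ⊆ G.edgeSet := by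
      intro e he
      exact SimpleGraph.mem_edgeFinset.mp ((Finset.filter_subset _ _) he)
    calc SimpleGraph.fromEdgeSet (FS : Set (Sym2 V))
        ≤ SimpleGraph.fromEdgeSet G.edgeSet := SimpleGraph.fromEdgeSet_mono h1
      _ = G := SimpleGraph.fromEdgeSet_edgeSet G
  obtain ⟨B, -, hBKS, hBac, -, hBcount⟩ :=
    exists_spanning_forest (⊥ : SimpleGraph V) KS bot_le SimpleGraph.isAcyclic_bot
  obtain ⟨T, hBT, hTG, hTac, hTreach⟩ :=
    exists_spanning_forest_aux (ncomp B) B G le_rfl (le_trans hBKS hKSG) hBac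
  haveI := hG.nonempty
  have hTtree : T.IsTree :=
    ⟨⟨fun x y => hTreach x y (hG.preconnected x y)⟩, hTac⟩
  have hScount : ncomp KS + S.card = Fintype.card V + 1 := by
    rw [hKS, hFS]
    exact ncomp_induced G S hSconn (Finset.card_pos.mp (by omega))
  have hBsubFS : B.edgeFinset ⊆ FS := by
    intro e he
    have hmem : e ∈ B.edgeSet := SimpleGraph.mem_edgeFinset.mp he
    have hmem2 : e ∈ KS.edgeSet := (SimpleGraph.edgeSet_mono hBKS) hmem
    rw [hKS, SimpleGraph.edgeSet_fromEdgeSet] at hmem2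
    exact Finset.mem_coe.mp hmem2.1
  have hBcard : B.edgeFinset.card + ncomp KS = Fintype.card V := by
    rw [← ncard_edgeSet]
    exact hBcount
  have hTF_ub' := tree_inter_bound T hTac FS hFSdiag
  rw [← hKS, ncard_inter] at hTF_ub'
  have hTF_lb : B.edgeFinset.card ≤ (T.edgeFinset ∩ FS).card := by
    apply Finset.card_le_card
    intro e he
    exact Finset.mem_inter.mpr ⟨SimpleGraph.edgeFinset_mono hBT he, hBsubFS he⟩
  have hTFcard : (T.edgeFinset ∩ FS).card + 1 = S.card := by omega
  set w₀ : Sym2 V → ℝ := fun e => if e ∈ FS then 1 else 0 with hw₀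
  have hw₀nonneg : ∀ e ∈ G.edgeFinset, 0 ≤ w₀ e := by
    intro e he
    simp only [hw₀]
    split_ifs <;> norm_num
  have hsum : ∀ s : Finset (Sym2 V), ∑ e ∈ s, w₀ e = ((s ∩ FS).card : ℝ) := by
    intro s
    simp only [hw₀]
    rw [Finset.sum_ite_mem, Finset.sum_const, nsmul_eq_mul, mul_one]
  have htw₀ : totalWeight G w₀ = (inducedEdgeCount G S : ℝ) := by
    rw [totalWeight, hsum, Finset.inter_eq_right.mpr (Finset.filter_subset _ _), hIE]
  have htw₀pos : 0 < totalWeight G w₀ := by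
    rw [htw₀]
    exact_mod_cast hE
  have hbdd : ∀ w : Sym2 V → ℝ,
      BddAbove {x | ∃ T' : SimpleGraph V, T' ≤ G ∧ T'.IsTree ∧
        x = ∑ e ∈ T'.edgeFinset, w e} := by
    intro w
    apply Set.Finite.bddAbove
    apply Set.Finite.subset
      (Finset.finite_toSet ((G.edgeFinset.powerset).image (fun s => ∑ e ∈ s, w e)))
    rintro x ⟨T', hT'G, -, rfl⟩
    exact Finset.mem_coe.mpr (Finset.mem_image.mpr ⟨T'.edgeFinset,
      Finset.mem_powerset.mpr (SimpleGraph.edgeFinset_mono hT'G), rfl⟩)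
  have hA : IsGreatest
      {x | ∃ T' : SimpleGraph V, T' ≤ G ∧ T'.IsTree ∧ x = ∑ e ∈ T'.edgeFinset, w₀ e}
      ((S.card : ℝ) - 1) := by
    constructor
    · refine ⟨T, hTG, hTtree, ?_⟩
      rw [hsum]
      have hcast : ((T.edgeFinset ∩ FS).card : ℝ) + 1 = (S.card : ℝ) := by
        exact_mod_cast hTFcard
      linarith
    · rintro x ⟨T', hT'G, hT'tree, rfl⟩
      rw [hsum]
      have hub := tree_inter_bound T' hT'tree.IsAcyclic FS hFSdiag
      rw [← hKS, ncard_inter] at hub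
      have hle : (T'.edgeFinset ∩ FS).card + 1 ≤ S.card := by omega
      have hcast : ((T'.edgeFinset ∩ FS).card : ℝ) + 1 ≤ (S.card : ℝ) := by
        exact_mod_cast hle
      linarith
  have hmtw : maxTreeWeight G w₀ = (S.card : ℝ) - 1 := hA.csSup_eq
  refine ⟨S, hS2, hSconn, ⟨?_, ?_⟩, hmin'⟩
  · exact ⟨w₀, hw₀nonneg, htw₀pos, by rw [hmtw, htw₀]⟩
  · rintro x ⟨w, hw, hwpos, rfl⟩
    obtain ⟨T', hT'G, hT'tree, -, hT'w⟩ := key_lemma G hG t ht hminmul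
      ((G.edgeFinset.image w).filter (fun x => 0 < x)).card w hw le_rfl
      ⊥ bot_le SimpleGraph.isAcyclic_bot
      (fun e he _ _ => absurd he (by simp))
    have hle : ∑ e ∈ T'.edgeFinset, w e ≤ maxTreeWeight G w :=
      le_csSup (hbdd w) ⟨T', hT'G, hT'tree, rfl⟩
    rw [le_div_iff₀ hwpos]
    exact le_trans hT'w hle
end
end

section
/- Let κ ≥ 2 and let G = K_κ be the complete graph on κ vertices. Then the infimum, over all edge-weight functions ω : E(G) → ℝ with ω(e) ≥ 0 for all e and ω(G) > 0, of the weighting ratio t_ω(G) equals 2/κ. -/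
open scoped Classical

noncomputable section

open Finset SimpleGraph

/-- The star graph with center `c`. -/
def starG {n : ℕ} (c : Fin n) : SimpleGraph (Fin n) where
  Adj a b := a ≠ b ∧ (a = c ∨ b = c)
  symm := ⟨fun a b h => ⟨h.1.symm, h.2.symm⟩⟩
  loopless := ⟨fun a h => h.1 rfl⟩

lemma not_reachable_of_isolated {V : Type*} {G : SimpleGraph V} {x z : V}
    (hiso : ∀ y, ¬ G.Adj x y) (hxz : x ≠ z) : ¬ G.Reachable x z := by
  rintro ⟨p⟩
  cases p with
  | nil => exact hxz rfl
  | cons h _ => exact hiso _ h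

lemma starG_isolated {n : ℕ} {c x : Fin n} (hxc : x ≠ c) (y : Fin n) :
    ¬ (starG c \ SimpleGraph.fromEdgeSet {s(x, c)}).Adj x y := by
  rintro ⟨⟨hxy, hor⟩, hnot⟩
  have hyc : y = c := hor.resolve_left hxc
  subst hyc
  exact hnot (by simp [SimpleGraph.fromEdgeSet_adj, hxy])

lemma starG_isTree {n : ℕ} (c : Fin n) : (starG c).IsTree := by
  haveI : Nonempty (Fin n) := ⟨c⟩
  have hreach : ∀ a : Fin n, (starG c).Reachable a c := by
    intro a
    by_cases ha : a = c
    · exact ha ▸ SimpleGraph.Reachable.refl a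
    · exact SimpleGraph.Adj.reachable ⟨ha, Or.inr rfl⟩
  constructor
  · exact ⟨fun a b => (hreach a).trans (hreach b).symm⟩
  · rw [isAcyclic_iff_forall_adj_isBridge]
    intro a b hab
    rw [SimpleGraph.isBridge_iff]
    show ¬ (starG c \ SimpleGraph.fromEdgeSet {s(a, b)}).Reachable a b
    rcases hab.2 with hac | hbc
    · have hbc' : b ≠ c := fun h => hab.1 (hac.trans h.symm)
      have he : s(a, b) = s(b, c) := by rw [Sym2.eq_swap, hac]
      rw [he]
      exact fun hr => not_reachable_of_isolated (starG_isolated hbc') (Ne.symm hab.1) hr.symm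
    · have hac' : a ≠ c := fun h => hab.1 (h.trans hbc.symm)
      have he : s(a, b) = s(a, c) := by rw [hbc]
      rw [he]
      exact fun hr => not_reachable_of_isolated (starG_isolated hac') (hbc ▸ hab.1) hr

lemma starG_edgeFinset {n : ℕ} (c : Fin n) :
    (starG c).edgeFinset = (⊤ : SimpleGraph (Fin n)).incidenceFinset c := by
  ext e
  induction e with
  | _ a b =>
    rw [SimpleGraph.mem_edgeFinset, SimpleGraph.mem_incidenceFinset,
      SimpleGraph.mk'_mem_incidenceSet_iff]
    simp only [SimpleGraph.mem_edgeSet, SimpleGraph.top_adj, starG]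
    constructor
    · rintro ⟨h1, h2⟩
      exact ⟨h1, h2.imp Eq.symm Eq.symm⟩
    · rintro ⟨h1, h2⟩
      exact ⟨h1, h2.imp Eq.symm Eq.symm⟩

lemma bddAbove_treeWeights {V : Type*} [Fintype V] (G : SimpleGraph V) (w : Sym2 V → ℝ) :
    BddAbove {x | ∃ T : SimpleGraph V, T ≤ G ∧ T.IsTree ∧ x = ∑ e ∈ T.edgeFinset, w e} := by
  have hfin : ({x | ∃ T : SimpleGraph V, T ≤ G ∧ T.IsTree ∧
      x = ∑ e ∈ T.edgeFinset, w e} : Set ℝ).Finite := by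
    have : {x | ∃ T : SimpleGraph V, T ≤ G ∧ T.IsTree ∧ x = ∑ e ∈ T.edgeFinset, w e} ⊆
        (fun T : SimpleGraph V => ∑ e ∈ T.edgeFinset, w e) '' Set.univ := by
      rintro x ⟨T, _, _, rfl⟩
      exact ⟨T, Set.mem_univ T, rfl⟩
    exact (Set.finite_univ.image _).subset this
  exact hfin.bddAbove

/-- For the complete graph `K_κ` with `κ ≥ 2`, the infimum of the weighting ratio
`t_w(K_κ)` over all nonnegative edge-weight functions with positive total weight
equals `2/κ`. -/
theorem complete_graph_ratio (κ : ℕ) (hκ : 2 ≤ κ) :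
    IsGLB
      {x | ∃ w : Sym2 (Fin κ) → ℝ,
        (∀ e ∈ (⊤ : SimpleGraph (Fin κ)).edgeFinset, 0 ≤ w e) ∧
        0 < totalWeight (⊤ : SimpleGraph (Fin κ)) w ∧
        x = maxTreeWeight (⊤ : SimpleGraph (Fin κ)) w /
              totalWeight (⊤ : SimpleGraph (Fin κ)) w}
      (2 / (κ : ℝ)) := by
  have hκ1 : 1 ≤ κ := le_trans one_le_two hκ
  have hκR : (0 : ℝ) < κ := by
    have : 0 < κ := by omega
    exact_mod_cast this
  haveI : Nonempty (Fin κ) := ⟨⟨0, by omega⟩⟩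
  have key : ∀ w : Sym2 (Fin κ) → ℝ,
      2 * totalWeight (⊤ : SimpleGraph (Fin κ)) w / κ ≤
        maxTreeWeight (⊤ : SimpleGraph (Fin κ)) w := by
    intro w
    have hsum : ∑ c : Fin κ, ∑ e ∈ (starG c).edgeFinset, w e
        = 2 * totalWeight (⊤ : SimpleGraph (Fin κ)) w := by
      have h1 : ∀ c : Fin κ, ∑ e ∈ (starG c).edgeFinset, w e
          = ∑ e ∈ (⊤ : SimpleGraph (Fin κ)).edgeFinset, if c ∈ e then w e else 0 := by
        intro c
        rw [starG_edgeFinset, SimpleGraph.incidenceFinset_eq_filter, Finset.sum_filter]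
      simp_rw [h1]
      rw [Finset.sum_comm, totalWeight, Finset.mul_sum]
      refine Finset.sum_congr (by congr!) fun e he => ?_
      revert he
      refine Sym2.ind (fun a b => ?_) e
      intro hab
      simp only [SimpleGraph.mem_edgeFinset, SimpleGraph.mem_edgeSet, SimpleGraph.top_adj] at hab
      have hf : (Finset.univ.filter (fun c : Fin κ => c ∈ s(a, b))) = {a, b} := by
        ext c
        simp [Sym2.mem_iff]
      rw [← Finset.sum_filter, hf, Finset.sum_const, Finset.card_pair hab, nsmul_eq_mul]
      norm_num
    have hexists : ∃ c : Fin κ,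
        2 * totalWeight (⊤ : SimpleGraph (Fin κ)) w / κ ≤ ∑ e ∈ (starG c).edgeFinset, w e := by
      have h2 := Finset.exists_le_of_sum_le (s := Finset.univ)
        (f := fun _ : Fin κ => 2 * totalWeight (⊤ : SimpleGraph (Fin κ)) w / κ)
        (g := fun c => ∑ e ∈ (starG c).edgeFinset, w e) Finset.univ_nonempty ?_
      · obtain ⟨c, _, hc⟩ := h2
        exact ⟨c, hc⟩
      · rw [hsum, Finset.sum_const, Finset.card_univ, Fintype.card_fin, nsmul_eq_mul]
        rw [mul_div_assoc', mul_comm, mul_div_assoc, div_self (ne_of_gt hκR), mul_one]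
    obtain ⟨c, hc⟩ := hexists
    exact hc.trans (le_csSup (bddAbove_treeWeights _ _)
      ⟨starG c, le_top, starG_isTree c, rfl⟩)
  constructor
  · rintro x ⟨w, hw, hpos, rfl⟩
    rw [le_div_iff₀ hpos]
    calc (2 / (κ:ℝ)) * totalWeight (⊤ : SimpleGraph (Fin κ)) w
        = 2 * totalWeight (⊤ : SimpleGraph (Fin κ)) w / κ := by ring
      _ ≤ maxTreeWeight (⊤ : SimpleGraph (Fin κ)) w := key w
  · intro b hb
    apply hb
    have hT : totalWeight (⊤ : SimpleGraph (Fin κ)) (fun _ => 1) = ((κ.choose 2 : ℕ) : ℝ) := by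
      have h := SimpleGraph.card_edgeFinset_top_eq_card_choose_two (V := Fin κ)
      rw [Fintype.card_fin] at h
      rw [totalWeight, Finset.sum_const, nsmul_eq_mul, mul_one, ← h]
      congr!
    have hchoose : ((κ.choose 2 : ℕ) : ℝ) = κ * (κ - 1) / 2 := Nat.cast_choose_two (K := ℝ) κ
    have h2R : (2:ℝ) ≤ κ := by exact_mod_cast hκ
    have hTpos : 0 < totalWeight (⊤ : SimpleGraph (Fin κ)) (fun _ => 1) := by
      rw [hT, hchoose]
      nlinarith
    have hset : {x | ∃ T : SimpleGraph (Fin κ), T ≤ ⊤ ∧ T.IsTree ∧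
        x = ∑ e ∈ T.edgeFinset, (fun _ => (1:ℝ)) e} = {((κ:ℝ) - 1)} := by
      ext x
      simp only [Set.mem_setOf_eq, Set.mem_singleton_iff]
      constructor
      · rintro ⟨T, -, hTree, rfl⟩
        rw [Finset.sum_const, nsmul_eq_mul, mul_one]
        have hcard := hTree.card_edgeFinset
        rw [Fintype.card_fin] at hcard
        have h2 : T.edgeFinset.card = κ - 1 := by omega
        rw [h2, Nat.cast_sub hκ1, Nat.cast_one]
      · rintro rfl
        refine ⟨starG ⟨0, by omega⟩, le_top, starG_isTree _, ?_⟩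
        rw [Finset.sum_const, nsmul_eq_mul, mul_one, starG_edgeFinset,
          SimpleGraph.card_incidenceFinset_eq_degree, SimpleGraph.complete_graph_degree,
          Fintype.card_fin, Nat.cast_sub hκ1, Nat.cast_one]
    have hM : maxTreeWeight (⊤ : SimpleGraph (Fin κ)) (fun _ => 1) = (κ:ℝ) - 1 := by
      rw [maxTreeWeight, hset, csSup_singleton]
    refine ⟨fun _ => 1, fun e _ => zero_le_one, hTpos, ?_⟩
    rw [hM, hT, hchoose]
    have hκne : (κ:ℝ) ≠ 0 := ne_of_gt hκR
    have hκ1ne : (κ:ℝ) - 1 ≠ 0 := by linarith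
    field_simp
end
end

section
/- Let G be a finite simple connected chordal graph with at least two vertices and let s be the clique number of G (so s ≥ 2). Then 1/(s − 1) ≤ min over S ∈ Co(G) of (|S| − 1)/e(G[S]) ≤ 2/s. Equivalently, the infimum over all nonnegative, not identically zero edge-weight functions ω of the weighting ratio t_ω(G) lies between 1/(s − 1) and 2/s. -/
open scoped Classical

noncomputable section

/-- A simple graph is chordal if it has no induced cycle of length at least 4. -/
def IsChordal {V : Type*} (G : SimpleGraph V) : Prop :=
  ∀ n : ℕ, 4 ≤ n → IsEmpty (SimpleGraph.cycleGraph n ↪g G)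

namespace ChordalAux

open SimpleGraph

variable {V : Type*}

lemma getVert_mem_support (G : SimpleGraph V) {x y : V} (p : G.Walk x y) {k : ℕ}
    (hk : k ≤ p.length) : p.getVert k ∈ p.support :=
  SimpleGraph.Walk.mem_support_iff_exists_getVert.2 ⟨k, rfl, hk⟩

lemma exists_segment (G : SimpleGraph V) {x y : V} (p : G.Walk x y) (i j : ℕ) (hij : i ≤ j)
    (hj : j ≤ p.length) :
    ∃ q : G.Walk (p.getVert i) (p.getVert j), q.length = j - i ∧
      ∀ v ∈ q.support, ∃ k, i ≤ k ∧ k ≤ j ∧ p.getVert k = v := by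
  induction j, hij using Nat.le_induction with
  | base =>
      refine ⟨SimpleGraph.Walk.nil, by simp, ?_⟩
      intro v hv
      simp only [SimpleGraph.Walk.support_nil, List.mem_singleton] at hv
      exact ⟨i, le_rfl, le_rfl, hv.symm⟩
  | succ j hij ih =>
      obtain ⟨q, hl, hs⟩ := ih (by omega)
      refine ⟨q.concat (p.adj_getVert_succ (by omega)), ?_, ?_⟩
      · rw [SimpleGraph.Walk.length_concat, hl]; omega
      · intro v hv
        rw [SimpleGraph.Walk.support_concat, List.mem_append,
          List.mem_singleton] at hv
        rcases hv with h | h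
        · obtain ⟨k, h1, h2, h3⟩ := hs v h
          exact ⟨k, h1, by omega, h3⟩
        · exact ⟨j + 1, by omega, le_rfl, h.symm⟩

lemma getVert_ne_of_isPath (G : SimpleGraph V) {x y : V} (p : G.Walk x y) (hp : p.IsPath) :
    ∀ i j, i < j → j ≤ p.length → p.getVert i ≠ p.getVert j := by
  induction p with
  | nil =>
      intro i j hij hj
      simp only [SimpleGraph.Walk.length_nil] at hj
      omega
  | @cons u v w h q ih =>
      intro i j hij hj
      rw [SimpleGraph.Walk.length_cons] at hj
      rcases i with _ | i
      · rw [SimpleGraph.Walk.getVert_zero]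
        intro he
        have hxs : u ∉ q.support := (SimpleGraph.Walk.cons_isPath_iff h q).1 hp |>.2
        have hmem : q.getVert (j - 1) ∈ q.support := getVert_mem_support G q (by omega)
        have : (SimpleGraph.Walk.cons h q).getVert j = q.getVert (j - 1) :=
          SimpleGraph.Walk.getVert_cons q h (by omega)
        rw [this] at he
        exact hxs (he ▸ hmem)
      · rcases j with _ | j
        · omega
        · have := ih ((SimpleGraph.Walk.cons_isPath_iff h q).1 hp).1 i j (by omega) (by omega)
          simpa [SimpleGraph.Walk.getVert_cons_succ] using this

lemma exists_min_path (G : SimpleGraph V) (C : V → Prop) {x y : V}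
    (h : ∃ p : G.Walk x y, ∀ v ∈ p.support, C v) :
    ∃ p : G.Walk x y, p.IsPath ∧ (∀ v ∈ p.support, C v) ∧
      ∀ q : G.Walk x y, (∀ v ∈ q.support, C v) → p.length ≤ q.length := by
  have hex : ∃ n, ∃ p : G.Walk x y, p.length = n ∧ ∀ v ∈ p.support, C v := by
    obtain ⟨p, hp⟩ := h; exact ⟨p.length, p, rfl, hp⟩
  obtain ⟨p, hlen, hC⟩ := Nat.find_spec hex
  refine ⟨p.bypass, p.bypass_isPath,
    fun v hv => hC v (p.support_bypass_subset hv), fun q hq => ?_⟩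
  calc p.bypass.length ≤ p.length := p.length_bypass_le
    _ = Nat.find hex := hlen
    _ ≤ q.length := Nat.find_min' hex ⟨q, rfl, hq⟩

lemma min_path_not_adj {G : SimpleGraph V} {C : V → Prop} {x y : V} {p : G.Walk x y}
    (hC : ∀ v ∈ p.support, C v)
    (hmin : ∀ q : G.Walk x y, (∀ v ∈ q.support, C v) → p.length ≤ q.length)
    (i j : ℕ) (hij : i + 1 < j) (hj : j ≤ p.length) :
    ¬ G.Adj (p.getVert i) (p.getVert j) := by
  intro hadj
  obtain ⟨q1, hl1, hs1⟩ := exists_segment G p 0 i (by omega) (by omega)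
  obtain ⟨q2, hl2, hs2⟩ := exists_segment G p j p.length (by omega) le_rfl
  let q : G.Walk x y :=
    (q1.append (SimpleGraph.Walk.cons hadj q2)).copy p.getVert_zero p.getVert_length
  have hlen : q.length = i + (1 + (p.length - j)) := by
    simp only [q, SimpleGraph.Walk.length_copy, SimpleGraph.Walk.length_append,
      SimpleGraph.Walk.length_cons, hl1, hl2]
    omega
  have hsup : ∀ v ∈ q.support, C v := by
    intro v hv
    simp only [q, SimpleGraph.Walk.support_copy] at hv
    rw [SimpleGraph.Walk.mem_support_append_iff] at hv
    have hmem : ∃ k, k ≤ p.length ∧ p.getVert k = v := by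
      rcases hv with h | h
      · obtain ⟨k, _, h2, h3⟩ := hs1 v h
        exact ⟨k, by omega, h3⟩
      · rw [SimpleGraph.Walk.support_cons, List.mem_cons] at h
        rcases h with h | h
        · exact ⟨i, by omega, h.symm⟩
        · obtain ⟨k, _, h2, h3⟩ := hs2 v h
          exact ⟨k, h2, h3⟩
    obtain ⟨k, hk, rfl⟩ := hmem
    exact hC _ (getVert_mem_support G p hk)
  have := hmin q hsup
  omega


lemma sub_val_char {m : ℕ} (u v : Fin (m + 2)) :
    u - v = 1 ↔ (u.val = v.val + 1 ∨ (u.val = 0 ∧ v.val = m + 1)) := by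
  have hu := u.isLt
  have hv := v.isLt
  rw [Fin.ext_iff, Fin.sub_def]
  simp only [Fin.val_one]
  rcases le_or_gt v.val u.val with h | h
  · have heq : m + 2 - v.val + u.val = (u.val - v.val) + (m + 2) := by omega
    rw [heq, Nat.add_mod_right, Nat.mod_eq_of_lt (by omega)]
    omega
  · rw [Nat.mod_eq_of_lt (by omega)]
    omega

lemma chordal_no_cycle {G : SimpleGraph V} (hch : IsChordal G) {n : ℕ} (hn : 4 ≤ n) (g : ℕ → V)
    (hinj : ∀ i j, i < j → j < n → g i ≠ g j)
    (hadj : ∀ i j, i < j → j < n → (G.Adj (g i) (g j) ↔ (j = i + 1 ∨ (i = 0 ∧ j = n - 1)))) :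
    False := by
  obtain ⟨m, rfl⟩ : ∃ m, n = m + 2 := ⟨n - 2, by omega⟩
  refine (hch (m + 2) hn).false ⟨⟨fun u => g u.val, ?_⟩, ?_⟩
  · intro u v huv
    by_contra hne
    rcases Nat.lt_or_ge u.val v.val with h | h
    · exact hinj u.val v.val h v.isLt huv
    · have h' : v.val < u.val := by
        rcases Nat.lt_or_ge v.val u.val with h2 | h2
        · exact h2
        · exact absurd (Fin.ext (le_antisymm h2 h)) hne
      exact hinj v.val u.val h' u.isLt huv.symm
  · intro u v
    show G.Adj (g u.val) (g v.val) ↔ (cycleGraph (m + 2)).Adj u v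
    rw [SimpleGraph.cycleGraph_adj, sub_val_char, sub_val_char]
    rcases lt_trichotomy u.val v.val with h | h | h
    · rw [hadj u.val v.val h v.isLt]
      have := u.isLt; have := v.isLt
      omega
    · have huv : u = v := Fin.ext h
      subst huv
      simp only [SimpleGraph.irrefl, false_iff]
      have := u.isLt
      omega
    · rw [SimpleGraph.adj_comm, hadj v.val u.val h u.isLt]
      have := u.isLt; have := v.isLt
      omega


lemma no_double_path {G : SimpleGraph V} (hch : IsChordal G) {x y : V}
    (hne : x ≠ y) (hxy : ¬ G.Adj x y) {P Q : V → Prop}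
    (hPQ : ∀ a b, P a → Q b → ¬ G.Adj a b ∧ a ≠ b)
    (hxP : ¬ P x) (hyP : ¬ P y) (hxQ : ¬ Q x) (hyQ : ¬ Q y)
    (hp : ∃ p : G.Walk x y, ∀ v ∈ p.support, v = x ∨ v = y ∨ P v)
    (hq : ∃ q : G.Walk x y, ∀ v ∈ q.support, v = x ∨ v = y ∨ Q v) : False := by
  obtain ⟨p, hpPath, hpC, hpMin⟩ := exists_min_path G _ hp
  obtain ⟨q, hqPath, hqC, hqMin⟩ := exists_min_path G _ hq
  set k := p.length with hkdef
  set m := q.length with hmdef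
  have hk : 2 ≤ k := by
    have hk0 : k ≠ 0 := by
      intro h00
      apply hne
      have hl0 : p.length = 0 := by omega
      have := p.getVert_length
      rwa [hl0, p.getVert_zero] at this
    have hk1 : k ≠ 1 := by
      intro h1
      have hl1 : p.length = 1 := by omega
      have hadj := p.adj_getVert_succ (i := 0) (by omega)
      rw [p.getVert_zero] at hadj
      have h2 : p.getVert (0 + 1) = y := by
        rw [show (0 + 1 : ℕ) = p.length from by omega]
        exact p.getVert_length
      rw [h2] at hadj
      exact hxy hadj
    omega
  have hm : 2 ≤ m := by
    have hm0 : m ≠ 0 := by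
      intro h00
      apply hne
      have hl0 : q.length = 0 := by omega
      have := q.getVert_length
      rwa [hl0, q.getVert_zero] at this
    have hm1 : m ≠ 1 := by
      intro h1
      have hl1 : q.length = 1 := by omega
      have hadj := q.adj_getVert_succ (i := 0) (by omega)
      rw [q.getVert_zero] at hadj
      have h2 : q.getVert (0 + 1) = y := by
        rw [show (0 + 1 : ℕ) = q.length from by omega]
        exact q.getVert_length
      rw [h2] at hadj
      exact hxy hadj
    omega
  have hpInt : ∀ i, 0 < i → i < k → P (p.getVert i) := by
    intro i h1 h2
    rcases hpC _ (getVert_mem_support G p (k := i) (by omega)) with h | h | h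
    · exfalso
      have := getVert_ne_of_isPath G p hpPath 0 i h1 (by omega)
      rw [p.getVert_zero] at this
      exact this h.symm
    · exfalso
      have := getVert_ne_of_isPath G p hpPath i k h2 (by omega)
      rw [show p.getVert k = y from by rw [hkdef]; exact p.getVert_length] at this
      exact this h
    · exact h
  have hqInt : ∀ i, 0 < i → i < m → Q (q.getVert i) := by
    intro i h1 h2
    rcases hqC _ (getVert_mem_support G q (k := i) (by omega)) with h | h | h
    · exfalso
      have := getVert_ne_of_isPath G q hqPath 0 i h1 (by omega)
      rw [q.getVert_zero] at this
      exact this h.symm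
    · exfalso
      have := getVert_ne_of_isPath G q hqPath i m h2 (by omega)
      rw [show q.getVert m = y from by rw [hmdef]; exact q.getVert_length] at this
      exact this h
    · exact h
  set n := k + m with hndef
  set g : ℕ → V := fun i => if i ≤ k then p.getVert i else q.getVert (n - i) with hgdef
  have hgp : ∀ i, i ≤ k → g i = p.getVert i := by
    intro i h; simp only [hgdef, if_pos h]
  have hgq : ∀ i, k ≤ i → i ≤ n → g i = q.getVert (n - i) := by
    intro i h1 h2
    by_cases h : i ≤ k
    · have hik : i = k := le_antisymm h h1
      rw [hgp i h]
      have e1 : p.getVert i = y := by rw [hik, hkdef]; exact p.getVert_length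
      have e2 : n - i = m := by omega
      rw [e1, e2, show q.getVert m = y from by rw [hmdef]; exact q.getVert_length]
    · simp only [hgdef, if_neg h]
  have hx0 : g 0 = q.getVert 0 := by
    rw [hgp 0 (by omega), p.getVert_zero, q.getVert_zero]
  have key : ∀ i j, i < j → j < n → (G.Adj (g i) (g j) ↔ (j = i + 1 ∨ (i = 0 ∧ j = n - 1))) := by
    intro i j hij hjn
    constructor
    · intro hA
      by_contra hcon
      push_neg at hcon
      obtain ⟨hne1, hne2⟩ := hcon
      rcases le_or_gt j k with hjk | hjk
      · rw [hgp i (by omega), hgp j hjk] at hA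
        have hij2 : i + 1 < j := by omega
        exact min_path_not_adj hpC hpMin i j hij2 (by omega) hA
      · rcases le_or_gt k i with hki | hki
        · rw [hgq i hki (by omega), hgq j (by omega) (by omega)] at hA
          exact min_path_not_adj hqC hqMin (n - j) (n - i) (by omega) (by omega) hA.symm
        · rcases Nat.eq_zero_or_pos i with h0 | h0
          · subst h0
            rw [hx0, hgq j (by omega) (by omega)] at hA
            have hj2 : j ≠ n - 1 := hne2 rfl
            exact min_path_not_adj hqC hqMin 0 (n - j) (by omega) (by omega) hA
          · have hP : P (g i) := by rw [hgp i (by omega)]; exact hpInt i h0 (by omega)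
            have hQ : Q (g j) := by
              rw [hgq j (by omega) (by omega)]
              exact hqInt (n - j) (by omega) (by omega)
            exact (hPQ _ _ hP hQ).1 hA
    · intro hc
      rcases hc with rfl | ⟨h0, hj⟩
      · rcases le_or_gt (i + 1) k with h | h
        · rw [hgp i (by omega), hgp (i + 1) h]
          exact p.adj_getVert_succ (by omega)
        · rw [hgq i (by omega) (by omega), hgq (i + 1) (by omega) (by omega)]
          have heq : n - i = (n - (i + 1)) + 1 := by omega
          rw [heq]
          exact (q.adj_getVert_succ (by omega)).symm
      · subst h0
        subst hj
        rw [hx0, hgq (n - 1) (by omega) (by omega)]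
        have heq : n - (n - 1) = 1 := by omega
        rw [heq]
        exact q.adj_getVert_succ (by omega)
  have hinj : ∀ i j, i < j → j < n → g i ≠ g j := by
    intro i j hij hjn
    rcases le_or_gt j k with hjk | hjk
    · rw [hgp i (by omega), hgp j hjk]
      exact getVert_ne_of_isPath G p hpPath i j hij (by omega)
    · rcases le_or_gt k i with hki | hki
      · rw [hgq i hki (by omega), hgq j (by omega) (by omega)]
        exact (getVert_ne_of_isPath G q hqPath (n - j) (n - i) (by omega) (by omega)).symm
      · rcases Nat.eq_zero_or_pos i with h0 | h0
        · subst h0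
          rw [hx0, hgq j (by omega) (by omega)]
          exact getVert_ne_of_isPath G q hqPath 0 (n - j) (by omega) (by omega)
        · have hP : P (g i) := by rw [hgp i (by omega)]; exact hpInt i h0 (by omega)
          rcases le_or_gt j (n - 1) with hj1 | hj1
          · rcases Nat.eq_or_lt_of_le hjk with hjk2 | hjk2
            · have hQ : Q (g j) := by
                rw [hgq j (by omega) (by omega)]
                exact hqInt (n - j) (by omega) (by omega)
              exact (hPQ _ _ hP hQ).2
            · have hQ : Q (g j) := by
                rw [hgq j (by omega) (by omega)]
                exact hqInt (n - j) (by omega) (by omega)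
              exact (hPQ _ _ hP hQ).2
          · have hQ : Q (g j) := by
              rw [hgq j (by omega) (by omega)]
              exact hqInt (n - j) (by omega) (by omega)
            exact (hPQ _ _ hP hQ).2
  exact chordal_no_cycle hch (by omega : 4 ≤ n) g hinj key


def RI (G : SimpleGraph V) (W : Finset V) (x y : V) : Prop :=
  ∃ p : G.Walk x y, ∀ v ∈ p.support, v ∈ W

lemma RI.refl {G : SimpleGraph V} {W : Finset V} {x : V} (hx : x ∈ W) : RI G W x x :=
  ⟨SimpleGraph.Walk.nil, by simp [hx]⟩

lemma RI.symm {G : SimpleGraph V} {W : Finset V} {x y : V} (h : RI G W x y) : RI G W y x := by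
  obtain ⟨p, hp⟩ := h
  refine ⟨p.reverse, ?_⟩
  intro v hv
  rw [SimpleGraph.Walk.support_reverse, List.mem_reverse] at hv
  exact hp v hv

lemma RI.trans {G : SimpleGraph V} {W : Finset V} {x y z : V} (h1 : RI G W x y)
    (h2 : RI G W y z) : RI G W x z := by
  obtain ⟨p, hp⟩ := h1
  obtain ⟨q, hq⟩ := h2
  refine ⟨p.append q, ?_⟩
  intro v hv
  rw [SimpleGraph.Walk.mem_support_append_iff] at hv
  rcases hv with h | h
  · exact hp v h
  · exact hq v h

lemma RI.adj {G : SimpleGraph V} {W : Finset V} {x y : V} (h : G.Adj x y) (hx : x ∈ W)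
    (hy : y ∈ W) : RI G W x y :=
  ⟨SimpleGraph.Walk.cons h SimpleGraph.Walk.nil, by
    intro v hv
    simp only [SimpleGraph.Walk.support_cons, SimpleGraph.Walk.support_nil, List.mem_cons,
      List.mem_singleton] at hv
    rcases hv with rfl | hv
    · exact hx
    · rcases hv with rfl | hv
      · exact hy
      · simp at hv⟩

lemma RI.mem_left {G : SimpleGraph V} {W : Finset V} {x y : V} (h : RI G W x y) : x ∈ W := by
  obtain ⟨p, hp⟩ := h
  exact hp x p.start_mem_support

lemma RI.mem_right {G : SimpleGraph V} {W : Finset V} {x y : V} (h : RI G W x y) : y ∈ W := by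
  obtain ⟨p, hp⟩ := h
  exact hp y p.end_mem_support

/-- `v` is a simplicial-type vertex relative to the vertex set `S`. -/
def Simp (G : SimpleGraph V) (S : Finset V) (v : V) : Prop :=
  ∀ x ∈ S, ∀ y ∈ S, G.Adj v x → G.Adj v y → x ≠ y → G.Adj x y

lemma dirac (G : SimpleGraph V) (hch : IsChordal G) (S : Finset V) :
    S.Nonempty → (∃ v ∈ S, Simp G S v) ∧
      (∀ a ∈ S, ∀ b ∈ S, a ≠ b → ¬ G.Adj a b →
        ∃ v ∈ S, ∃ w ∈ S, v ≠ w ∧ ¬ G.Adj v w ∧ Simp G S v ∧ Simp G S w) := by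
  induction S using Finset.strongInduction with
  | _ S IH => ?_
  intro hS
  have key : ∀ a ∈ S, ∀ b ∈ S, a ≠ b → ¬ G.Adj a b →
      ∃ v ∈ S, ∃ w ∈ S, v ≠ w ∧ ¬ G.Adj v w ∧ Simp G S v ∧ Simp G S w := by
    intro a ha b hb hab hnadj
    -- the collection of separators
    set sep : Finset (Finset V) :=
      ((S \ {a, b}).powerset).filter (fun T => ¬ RI G (S \ T) a b) with hsepdef
    have hsepne : sep.Nonempty := by
      refine ⟨S \ {a, b}, ?_⟩
      rw [hsepdef, Finset.mem_filter]
      refine ⟨Finset.mem_powerset_self _, ?_⟩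
      rintro ⟨p, hp⟩
      have hpnil : 0 < p.length := by
        by_contra h0
        push_neg at h0
        have hl0 : p.length = 0 := by omega
        have := p.getVert_length
        rw [hl0, p.getVert_zero] at this
        exact hab this
      have hadj := p.adj_getVert_succ (i := 0) hpnil
      rw [p.getVert_zero] at hadj
      have hmem := hp _ (getVert_mem_support G p (k := 1) (by omega))
      simp only [Finset.mem_sdiff, Finset.mem_sdiff, Finset.mem_insert,
        Finset.mem_singleton] at hmem
      have : p.getVert 1 = a ∨ p.getVert 1 = b := by tauto
      rcases this with h | h
      · rw [h] at hadj; exact G.irrefl hadj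
      · rw [h] at hadj; exact hnadj hadj
    obtain ⟨T, hTsep, hTmin⟩ := Finset.exists_min_image sep Finset.card hsepne
    rw [hsepdef, Finset.mem_filter, Finset.mem_powerset] at hTsep
    obtain ⟨hTsub, hTsepr⟩ := hTsep
    have haT : a ∉ T := by
      intro h
      have := hTsub h
      simp [Finset.mem_sdiff] at this
    have hbT : b ∉ T := by
      intro h
      have := hTsub h
      simp [Finset.mem_sdiff] at this
    have haST : a ∈ S \ T := Finset.mem_sdiff.2 ⟨ha, haT⟩
    have hbST : b ∈ S \ T := Finset.mem_sdiff.2 ⟨hb, hbT⟩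
    set A : Finset V := (S \ T).filter (fun v => RI G (S \ T) a v) with hAdef
    set B : Finset V := (S \ T).filter (fun v => RI G (S \ T) b v) with hBdef
    have haA : a ∈ A := by
      rw [hAdef, Finset.mem_filter]
      exact ⟨haST, RI.refl haST⟩
    have hbB : b ∈ B := by
      rw [hBdef, Finset.mem_filter]
      exact ⟨hbST, RI.refl hbST⟩
    have hAsub : A ⊆ S \ T := Finset.filter_subset _ _
    have hBsub : B ⊆ S \ T := Finset.filter_subset _ _
    have hAB : ∀ u ∈ A, ∀ w ∈ B, ¬ G.Adj u w ∧ u ≠ w := by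
      intro u hu w hw
      rw [hAdef, Finset.mem_filter] at hu
      rw [hBdef, Finset.mem_filter] at hw
      constructor
      · intro hadj
        exact hTsepr (hu.2.trans ((RI.adj hadj hu.1 hw.1).trans hw.2.symm))
      · intro hEq
        subst hEq
        exact hTsepr (hu.2.trans hw.2.symm)
    -- propagation along walks avoiding `T.erase t`
    have prop : ∀ t ∈ T, ∀ (c : V) (C' : Finset V),
        (∀ u, u ∈ C' ↔ u ∈ S \ T ∧ RI G (S \ T) c u) → c ∈ C' →
        (∀ u ∈ C', ¬ G.Adj t u) → ∀ (z : V) (w : G.Walk c z),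
        (∀ v ∈ w.support, v ∈ S \ T.erase t) → z ∈ C' := by
      intro t ht c C' hchar hc hno z w hw
      have main : ∀ kk, kk ≤ w.length → w.getVert kk ∈ C' := by
        intro kk
        induction kk with
        | zero => intro _; rw [w.getVert_zero]; exact hc
        | succ kk ih =>
          intro hkk
          have hprev := ih (by omega)
          have hadj := w.adj_getVert_succ (i := kk) (by omega)
          have hnextS : w.getVert (kk + 1) ∈ S \ T.erase t :=
            hw _ (getVert_mem_support G w (k := kk + 1) hkk)
          have hnt : w.getVert (kk + 1) ≠ t := by
            intro hEq
            rw [hEq] at hadj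
            exact hno _ hprev hadj.symm
          have hnext : w.getVert (kk + 1) ∈ S \ T := by
            rw [Finset.mem_sdiff] at hnextS ⊢
            refine ⟨hnextS.1, ?_⟩
            intro hmemT
            exact hnextS.2 (Finset.mem_erase.2 ⟨hnt, hmemT⟩)
          have hprevC := (hchar _).1 hprev
          exact (hchar _).2 ⟨hnext, hprevC.2.trans (RI.adj hadj hprevC.1 hnext)⟩
      have := main w.length le_rfl
      rwa [w.getVert_length] at this
    -- every separator vertex has a neighbour in A and in B
    have hnbrA : ∀ t ∈ T, ∃ u ∈ A, G.Adj t u := by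
      intro t ht
      by_contra hno
      push_neg at hno
      have hno' : ∀ u ∈ A, ¬ G.Adj t u := fun u hu hadj => (hno u hu) hadj
      have hsep' : T.erase t ∈ sep := by
        rw [hsepdef, Finset.mem_filter, Finset.mem_powerset]
        refine ⟨(Finset.erase_subset _ _).trans hTsub, ?_⟩
        rintro ⟨p, hp⟩
        have hbA : b ∈ A := prop t ht a A (fun u => by rw [hAdef, Finset.mem_filter]) haA hno' b p hp
        exact (hAB b hbA b hbB).2 rfl
      have := hTmin _ hsep'
      have hlt : (T.erase t).card < T.card := Finset.card_erase_lt_of_mem ht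
      omega
    have hnbrB : ∀ t ∈ T, ∃ u ∈ B, G.Adj t u := by
      intro t ht
      by_contra hno
      push_neg at hno
      have hno' : ∀ u ∈ B, ¬ G.Adj t u := fun u hu hadj => (hno u hu) hadj
      have hsep' : T.erase t ∈ sep := by
        rw [hsepdef, Finset.mem_filter, Finset.mem_powerset]
        refine ⟨(Finset.erase_subset _ _).trans hTsub, ?_⟩
        rintro ⟨p, hp⟩
        have hp' : ∀ v ∈ p.reverse.support, v ∈ S \ T.erase t := by
          intro v hv
          rw [SimpleGraph.Walk.support_reverse, List.mem_reverse] at hv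
          exact hp v hv
        have haB : a ∈ B :=
          prop t ht b B (fun u => by rw [hBdef, Finset.mem_filter]) hbB hno' a p.reverse hp'
        exact (hAB a haA a haB).2 rfl
      have := hTmin _ hsep'
      have hlt : (T.erase t).card < T.card := Finset.card_erase_lt_of_mem ht
      omega
    -- reach-prefix lemma: everything on a walk inside S\T starting in A is in A
    have hwalkA : ∀ (u1 u2 : V), u1 ∈ A → u2 ∈ A →
        ∃ w : G.Walk u1 u2, ∀ v ∈ w.support, v ∈ A := by
      intro u1 u2 h1 h2
      rw [hAdef, Finset.mem_filter] at h1 h2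
      obtain ⟨w, hw⟩ := h1.2.symm.trans h2.2
      refine ⟨w, ?_⟩
      intro v hv
      rw [SimpleGraph.Walk.mem_support_iff_exists_getVert] at hv
      obtain ⟨kk, rfl, hkk⟩ := hv
      obtain ⟨w1, hl1, hs1⟩ := exists_segment G w 0 kk (by omega) hkk
      have hri : RI G (S \ T) u1 (w.getVert kk) := by
        refine ⟨w1.copy w.getVert_zero rfl, ?_⟩
        intro v hv
        rw [SimpleGraph.Walk.support_copy] at hv
        obtain ⟨k2, _, hk2, rfl⟩ := hs1 v hv
        exact hw _ (getVert_mem_support G w (by omega))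
      rw [hAdef, Finset.mem_filter]
      exact ⟨hri.mem_right, h1.2.trans hri⟩
    have hwalkB : ∀ (u1 u2 : V), u1 ∈ B → u2 ∈ B →
        ∃ w : G.Walk u1 u2, ∀ v ∈ w.support, v ∈ B := by
      intro u1 u2 h1 h2
      rw [hBdef, Finset.mem_filter] at h1 h2
      obtain ⟨w, hw⟩ := h1.2.symm.trans h2.2
      refine ⟨w, ?_⟩
      intro v hv
      rw [SimpleGraph.Walk.mem_support_iff_exists_getVert] at hv
      obtain ⟨kk, rfl, hkk⟩ := hv
      obtain ⟨w1, hl1, hs1⟩ := exists_segment G w 0 kk (by omega) hkk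
      have hri : RI G (S \ T) u1 (w.getVert kk) := by
        refine ⟨w1.copy w.getVert_zero rfl, ?_⟩
        intro v hv
        rw [SimpleGraph.Walk.support_copy] at hv
        obtain ⟨k2, _, hk2, rfl⟩ := hs1 v hv
        exact hw _ (getVert_mem_support G w (by omega))
      rw [hBdef, Finset.mem_filter]
      exact ⟨hri.mem_right, h1.2.trans hri⟩
    -- T is a clique
    have hTcl : ∀ t1 ∈ T, ∀ t2 ∈ T, t1 ≠ t2 → G.Adj t1 t2 := by
      intro t1 h1 t2 h2 hne12
      by_contra hnadj12
      obtain ⟨u1, hu1A, hadj1⟩ := hnbrA t1 h1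
      obtain ⟨u2, hu2A, hadj2⟩ := hnbrA t2 h2
      obtain ⟨w1, hw1B, hadjB1⟩ := hnbrB t1 h1
      obtain ⟨w2, hw2B, hadjB2⟩ := hnbrB t2 h2
      have ht1A : ∀ z, z ∈ A ∨ z ∈ B → z ≠ t1 ∧ z ≠ t2 := by
        intro z hz
        have hzST : z ∈ S \ T := by
          rcases hz with h | h
          · exact hAsub h
          · exact hBsub h
        rw [Finset.mem_sdiff] at hzST
        constructor
        · intro hEq; rw [hEq] at hzST; exact hzST.2 h1
        · intro hEq; rw [hEq] at hzST; exact hzST.2 h2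
      refine no_double_path hch hne12 hnadj12 (P := fun v => v ∈ A) (Q := fun v => v ∈ B)
        (fun a' b' ha' hb' => hAB a' ha' b' hb') ?_ ?_ ?_ ?_ ?_ ?_
      · exact fun h => (ht1A t1 (Or.inl h)).1 rfl
      · exact fun h => (ht1A t2 (Or.inl h)).2 rfl
      · exact fun h => (ht1A t1 (Or.inr h)).1 rfl
      · exact fun h => (ht1A t2 (Or.inr h)).2 rfl
      · obtain ⟨w, hw⟩ := hwalkA u1 u2 hu1A hu2A
        refine ⟨SimpleGraph.Walk.cons hadj1 (w.concat hadj2.symm), ?_⟩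
        intro v hv
        rw [SimpleGraph.Walk.support_cons, List.mem_cons] at hv
        rcases hv with rfl | hv
        · exact Or.inl rfl
        · rw [SimpleGraph.Walk.support_concat, List.mem_append,
            List.mem_singleton] at hv
          rcases hv with hv | rfl
          · exact Or.inr (Or.inr (hw v hv))
          · exact Or.inr (Or.inl rfl)
      · obtain ⟨w, hw⟩ := hwalkB w1 w2 hw1B hw2B
        refine ⟨SimpleGraph.Walk.cons hadjB1 (w.concat hadjB2.symm), ?_⟩
        intro v hv
        rw [SimpleGraph.Walk.support_cons, List.mem_cons] at hv
        rcases hv with rfl | hv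
        · exact Or.inl rfl
        · rw [SimpleGraph.Walk.support_concat, List.mem_append,
            List.mem_singleton] at hv
          rcases hv with hv | rfl
          · exact Or.inr (Or.inr (hw v hv))
          · exact Or.inr (Or.inl rfl)
    -- one side gives a simplicial vertex inside the component
    have side : ∀ (c : V) (C' : Finset V), c ∈ C' → C' ⊆ S \ T →
        (∀ v ∈ C', ∀ x, x ∈ S \ T → G.Adj v x → x ∈ C') → (C' ∪ T ⊂ S) →
        ∃ v ∈ C', Simp G S v := by
      intro c C' hc hCsub hclosed hproper
      have hlift : ∀ v ∈ C', Simp G (C' ∪ T) v → Simp G S v := by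
        intro v hv hsimp x hx y hy hvx hvy hxy
        have hmem : ∀ z, z ∈ S → G.Adj v z → z ∈ C' ∪ T := by
          intro z hz hadj
          by_cases hzT : z ∈ T
          · exact Finset.mem_union_right _ hzT
          · exact Finset.mem_union_left _
              (hclosed v hv z (Finset.mem_sdiff.2 ⟨hz, hzT⟩) hadj)
        exact hsimp x (hmem x hx hvx) y (hmem y hy hvy) hvx hvy hxy
      by_cases hcl : ∀ x ∈ C' ∪ T, ∀ y ∈ C' ∪ T, x ≠ y → G.Adj x y
      · refine ⟨c, hc, hlift c hc ?_⟩
        intro x hx y hy _ _ hxy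
        exact hcl x hx y hy hxy
      · push_neg at hcl
        obtain ⟨x, hx, y, hy, hxy, hnadjxy⟩ := hcl
        have hne' : (C' ∪ T).Nonempty := ⟨c, Finset.mem_union_left _ hc⟩
        obtain ⟨_, hsecond⟩ := IH (C' ∪ T) hproper hne'
        obtain ⟨v, hv, w, hw, hvw, hnadjvw, hsv, hsw⟩ := hsecond x hx y hy hxy hnadjxy
        have hget : v ∈ C' ∨ w ∈ C' := by
          by_contra hcon
          push_neg at hcon
          have hvT : v ∈ T := by
            rcases Finset.mem_union.1 hv with h | h
            · exact absurd h hcon.1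
            · exact h
          have hwT : w ∈ T := by
            rcases Finset.mem_union.1 hw with h | h
            · exact absurd h hcon.2
            · exact h
          exact hnadjvw (hTcl v hvT w hwT hvw)
        rcases hget with h | h
        · exact ⟨v, h, hlift v h hsv⟩
        · exact ⟨w, h, hlift w h hsw⟩
    have hApropersub : A ∪ T ⊂ S := by
      rw [Finset.ssubset_iff_of_subset]
      · refine ⟨b, hb, ?_⟩
        intro hmem
        rcases Finset.mem_union.1 hmem with h | h
        · exact (hAB b h b hbB).2 rfl
        · exact hbT h
      · intro v hv
        rcases Finset.mem_union.1 hv with h | h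
        · exact (Finset.mem_sdiff.1 (hAsub h)).1
        · exact (Finset.mem_sdiff.1 (hTsub h)).1
    have hBpropersub : B ∪ T ⊂ S := by
      rw [Finset.ssubset_iff_of_subset]
      · refine ⟨a, ha, ?_⟩
        intro hmem
        rcases Finset.mem_union.1 hmem with h | h
        · exact (hAB a haA a h).2 rfl
        · exact haT h
      · intro v hv
        rcases Finset.mem_union.1 hv with h | h
        · exact (Finset.mem_sdiff.1 (hBsub h)).1
        · exact (Finset.mem_sdiff.1 (hTsub h)).1
    have hclosedA : ∀ v ∈ A, ∀ x, x ∈ S \ T → G.Adj v x → x ∈ A := by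
      intro v hv x hx hadj
      rw [hAdef, Finset.mem_filter] at hv ⊢
      exact ⟨hx, hv.2.trans (RI.adj hadj hv.1 hx)⟩
    have hclosedB : ∀ v ∈ B, ∀ x, x ∈ S \ T → G.Adj v x → x ∈ B := by
      intro v hv x hx hadj
      rw [hBdef, Finset.mem_filter] at hv ⊢
      exact ⟨hx, hv.2.trans (RI.adj hadj hv.1 hx)⟩
    obtain ⟨vA, hvA, hsimpA⟩ := side a A haA hAsub hclosedA hApropersub
    obtain ⟨vB, hvB, hsimpB⟩ := side b B hbB hBsub hclosedB hBpropersub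
    refine ⟨vA, (Finset.mem_sdiff.1 (hAsub hvA)).1, vB, (Finset.mem_sdiff.1 (hBsub hvB)).1,
      (hAB vA hvA vB hvB).2, (hAB vA hvA vB hvB).1, hsimpA, hsimpB⟩
  constructor
  · by_cases hcl : ∀ x ∈ S, ∀ y ∈ S, x ≠ y → G.Adj x y
    · obtain ⟨v, hv⟩ := hS
      exact ⟨v, hv, fun x hx y hy _ _ hxy => hcl x hx y hy hxy⟩
    · push_neg at hcl
      obtain ⟨x, hx, y, hy, hxy, hnadj⟩ := hcl
      obtain ⟨v, hv, _, _, _, _, hsv, _⟩ := key x hx y hy hxy hnadj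
      exact ⟨v, hv, hsv⟩
  · exact key

section Counting

variable [Fintype V] {G : SimpleGraph V}

lemma count_zero (G : SimpleGraph V) {S : Finset V} (h : S.card ≤ 1) :
    inducedEdgeCount G S = 0 := by
  rw [inducedEdgeCount, Finset.card_eq_zero, Finset.eq_empty_iff_forall_notMem]
  intro e he
  rw [Finset.mem_filter] at he
  obtain ⟨he1, he2⟩ := he
  induction e with
  | _ u w =>
    have hadj : G.Adj u w := by rwa [SimpleGraph.mem_edgeFinset, SimpleGraph.mem_edgeSet] at he1
    have hu : u ∈ S := he2 u (Sym2.mem_mk_left u w)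
    have hw : w ∈ S := he2 w (Sym2.mem_mk_right u w)
    have : 1 < S.card := Finset.one_lt_card.2 ⟨u, hu, w, hw, hadj.ne⟩
    omega

lemma edge_split (G : SimpleGraph V) (S : Finset V) (v : V) (hv : v ∈ S) :
    inducedEdgeCount G S
      = inducedEdgeCount G (S.erase v) + (S.filter (fun w => G.Adj v w)).card := by
  rw [inducedEdgeCount, ← Finset.card_filter_add_card_filter_not (fun e => v ∈ e)]
  have h1 : ((G.edgeFinset.filter (fun e => ∀ u ∈ e, u ∈ S)).filter (fun e => ¬ v ∈ e))
      = G.edgeFinset.filter (fun e => ∀ u ∈ e, u ∈ S.erase v) := by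
    rw [Finset.filter_filter]
    apply Finset.filter_congr
    intro e he
    constructor
    · rintro ⟨hall, hnv⟩ u hu
      rw [Finset.mem_erase]
      exact ⟨fun hEq => hnv (hEq ▸ hu), hall u hu⟩
    · intro hall
      refine ⟨fun u hu => (Finset.mem_erase.1 (hall u hu)).2, fun hve => ?_⟩
      exact (Finset.mem_erase.1 (hall v hve)).1 rfl
  have h2 : ((G.edgeFinset.filter (fun e => ∀ u ∈ e, u ∈ S)).filter (fun e => v ∈ e)).card
      = (S.filter (fun w => G.Adj v w)).card := by
    symm
    refine Finset.card_bij (fun w _ => s(v, w)) ?_ ?_ ?_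
    · intro w hw
      rw [Finset.mem_filter] at hw ⊢
      refine ⟨?_, Sym2.mem_mk_left v w⟩
      rw [Finset.mem_filter]
      refine ⟨SimpleGraph.mem_edgeFinset.2 hw.2, ?_⟩
      intro u hu
      rcases Sym2.mem_iff.1 hu with rfl | rfl
      · exact hv
      · exact hw.1
    · intro w1 h1' w2 h2' hEq
      exact Sym2.congr_right.1 hEq
    · intro e he
      rw [Finset.mem_filter, Finset.mem_filter] at he
      obtain ⟨⟨heE, hall⟩, hve⟩ := he
      refine ⟨Sym2.Mem.other hve, ?_, Sym2.other_spec hve⟩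
      rw [Finset.mem_filter]
      constructor
      · exact hall _ (Sym2.other_mem hve)
      · have := Sym2.other_spec hve
        rw [SimpleGraph.mem_edgeFinset] at heE
        rw [← this, SimpleGraph.mem_edgeSet] at heE
        exact heE
  rw [h1, h2, Nat.add_comm]
  rfl

lemma deg_bound {s : ℕ} (hfree : G.CliqueFree (s + 1)) {S : Finset V} {v : V} (hv : v ∈ S)
    (hsimp : Simp G S v) : (S.filter (fun w => G.Adj v w)).card + 1 ≤ s := by
  set D := S.filter (fun w => G.Adj v w) with hDdef
  have hvD : v ∉ D := by
    rw [hDdef, Finset.mem_filter]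
    rintro ⟨_, h⟩
    exact G.irrefl h
  have hclique : G.IsClique (insert v D : Finset V) := by
    rw [SimpleGraph.isClique_iff]
    intro x hx y hy hxy
    simp only [Finset.coe_insert, Set.mem_insert_iff, Finset.mem_coe, hDdef,
      Finset.mem_filter] at hx hy
    rcases hx with rfl | ⟨hxS, hxadj⟩
    · rcases hy with rfl | ⟨hyS, hyadj⟩
      · exact absurd rfl hxy
      · exact hyadj
    · rcases hy with rfl | ⟨hyS, hyadj⟩
      · exact hxadj.symm
      · exact hsimp x hxS y hyS hxadj hyadj hxy
  by_contra hcon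
  push_neg at hcon
  have hcard : s + 1 ≤ (insert v D).card := by
    rw [Finset.card_insert_of_notMem hvD]
    omega
  obtain ⟨U, hUsub, hUcard⟩ := Finset.exists_subset_card_eq hcard
  exact hfree U ⟨hclique.subset (by exact_mod_cast hUsub), hUcard⟩

lemma edge_bound {s : ℕ} (hch : IsChordal G) (hfree : G.CliqueFree (s + 1)) (S : Finset V) :
    inducedEdgeCount G S ≤ (s - 1) * (S.card - 1) := by
  induction S using Finset.strongInduction with
  | _ S IH => ?_
  rcases Nat.lt_or_ge S.card 2 with h2 | h2
  · rw [count_zero G (S := S) (by omega)]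
    exact Nat.zero_le _
  · have hS : S.Nonempty := Finset.card_pos.1 (by omega)
    obtain ⟨⟨v, hv, hsimp⟩, -⟩ := dirac G hch S hS
    have hsplit := edge_split G S v hv
    have hdeg := deg_bound hfree hv hsimp
    have herase := IH (S.erase v) (Finset.erase_ssubset hv)
    rw [Finset.card_erase_of_mem hv] at herase
    have hcard : S.card - 1 - 1 + 1 = S.card - 1 := by omega
    calc inducedEdgeCount G S
        = inducedEdgeCount G (S.erase v) + (S.filter (fun w => G.Adj v w)).card := hsplit
      _ ≤ (s - 1) * (S.card - 1 - 1) + (s - 1) := by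
          have : (S.filter (fun w => G.Adj v w)).card ≤ s - 1 := by omega
          omega
      _ = (s - 1) * (S.card - 1 - 1 + 1) := by ring
      _ = (s - 1) * (S.card - 1) := by rw [hcard]

lemma count_pos (G : SimpleGraph V) {S : Finset V} (h2 : 2 ≤ S.card)
    (hconn : (G.induce (S : Set V)).Connected) : 1 ≤ inducedEdgeCount G S := by
  obtain ⟨x, hx, y, hy, hxy⟩ := Finset.one_lt_card.1 (show 1 < S.card by omega)
  have hr : (G.induce (S : Set V)).Reachable ⟨x, by simpa using hx⟩ ⟨y, by simpa using hy⟩ :=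
    hconn.preconnected _ _
  obtain ⟨w⟩ := hr
  have hlen : 0 < w.length := by
    by_contra h0
    push_neg at h0
    have hl0 : w.length = 0 := by omega
    have := w.getVert_length
    rw [hl0, w.getVert_zero] at this
    exact hxy (congrArg Subtype.val this)
  have hadj := w.adj_getVert_succ (i := 0) hlen
  rw [w.getVert_zero] at hadj
  set z := w.getVert 1 with hzdef
  have hadj' : G.Adj x z.val := hadj
  have hzS : z.val ∈ S := by
    have := z.2
    simpa using this
  rw [inducedEdgeCount]
  rw [Nat.succ_le_iff, Finset.card_pos]
  refine ⟨s(x, z.val), ?_⟩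
  rw [Finset.mem_filter]
  refine ⟨SimpleGraph.mem_edgeFinset.2 hadj', ?_⟩
  intro u hu
  rcases Sym2.mem_iff.1 hu with rfl | rfl
  · exact hx
  · exact hzS

lemma clique_conn {s : ℕ} (hs : 2 ≤ s) {K : Finset V} (hK : G.IsNClique s K) :
    (G.induce (K : Set V)).Connected := by
  have hKcard : K.card = s := hK.2
  have hne : (K : Set V).Nonempty := by
    have : K.Nonempty := Finset.card_pos.1 (by omega)
    exact Finset.coe_nonempty.2 this
  haveI : Nonempty ↥(K : Set V) := hne.to_subtype
  refine ⟨fun u v => ?_⟩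
  by_cases huv : u = v
  · rw [huv]
  · have hadj : G.Adj u.val v.val := by
      apply hK.1 u.2 v.2
      intro h
      exact huv (Subtype.ext h)
    exact SimpleGraph.Adj.reachable hadj

lemma clique_count {s : ℕ} {K : Finset V} (hK : G.IsNClique s K) :
    s * s - s ≤ 2 * inducedEdgeCount G K := by
  have himg : K.offDiag.image (fun p => s(p.1, p.2))
      ⊆ G.edgeFinset.filter (fun e => ∀ v ∈ e, v ∈ K) := by
    intro e he
    rw [Finset.mem_image] at he
    obtain ⟨p, hp, rfl⟩ := he
    rw [Finset.mem_offDiag] at hp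
    obtain ⟨hp1, hp2, hp3⟩ := hp
    rw [Finset.mem_filter]
    refine ⟨SimpleGraph.mem_edgeFinset.2 (hK.1 hp1 hp2 hp3), ?_⟩
    intro u hu
    rcases Sym2.mem_iff.1 hu with rfl | rfl
    · exact hp1
    · exact hp2
  have hfib : ∀ a ∈ K.offDiag.image (fun p => s(p.1, p.2)),
      (K.offDiag.filter (fun x => s(x.1, x.2) = a)).card ≤ 2 := by
    intro a ha
    induction a with
    | _ u w =>
      have hsub : K.offDiag.filter (fun x => s(x.1, x.2) = s(u, w))
          ⊆ {(u, w), (w, u)} := by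
        intro p hp
        rw [Finset.mem_filter] at hp
        rcases Sym2.eq_iff.1 hp.2 with ⟨rfl, rfl⟩ | ⟨rfl, rfl⟩
        · exact Finset.mem_insert_self _ _
        · exact Finset.mem_insert_of_mem (Finset.mem_singleton_self _)
      calc (K.offDiag.filter (fun x => s(x.1, x.2) = s(u, w))).card
          ≤ ({(u, w), (w, u)} : Finset (V × V)).card := Finset.card_le_card hsub
        _ ≤ 2 := Finset.card_le_two
  have h2 := Finset.card_le_mul_card_image (f := fun p : V × V => s(p.1, p.2)) K.offDiag 2 hfib
  rw [Finset.offDiag_card] at h2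
  have h3 : (K.offDiag.image (fun p => s(p.1, p.2))).card ≤ inducedEdgeCount G K :=
    Finset.card_le_card himg
  have hKs : K.card = s := hK.2
  calc s * s - s = K.card * K.card - K.card := by rw [hKs]
    _ ≤ 2 * (K.offDiag.image (fun p => s(p.1, p.2))).card := h2
    _ ≤ 2 * inducedEdgeCount G K := by omega

end Counting

end ChordalAux

/-- For a connected chordal graph `G` with at least two vertices and clique number `s`
(so `s ≥ 2`), the minimum over `S ∈ Co(G)` of `(|S| - 1)/e(G[S])` — which by the
0-1 Weighting Function Lemma is the infimum of the weighting ratio `t_w(G)` — lies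
between `1/(s - 1)` and `2/s`. -/
theorem chordal_ratio_bounds {V : Type*} [Fintype V] (G : SimpleGraph V)
    (hG : G.Connected) (hV : 2 ≤ Fintype.card V)
    (hch : IsChordal G) (s : ℕ) (hs : 2 ≤ s)
    (hclique : ∃ K : Finset V, G.IsNClique s K) (hfree : G.CliqueFree (s + 1)) :
    (∀ S : Finset V, 2 ≤ S.card → (G.induce (S : Set V)).Connected →
        1 / ((s : ℝ) - 1) ≤ ((S.card : ℝ) - 1) / (inducedEdgeCount G S : ℝ)) ∧
      (∃ S : Finset V, 2 ≤ S.card ∧ (G.induce (S : Set V)).Connected ∧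
        ((S.card : ℝ) - 1) / (inducedEdgeCount G S : ℝ) ≤ 2 / (s : ℝ)) := by
  constructor
  · intro S h2 hconn
    have he1 : 1 ≤ inducedEdgeCount G S := ChordalAux.count_pos G h2 hconn
    have he2 : inducedEdgeCount G S ≤ (s - 1) * (S.card - 1) :=
      ChordalAux.edge_bound hch hfree S
    have hsR : (2 : ℝ) ≤ (s : ℝ) := by exact_mod_cast hs
    have hcR : (2 : ℝ) ≤ (S.card : ℝ) := by exact_mod_cast h2
    have heR : (1 : ℝ) ≤ (inducedEdgeCount G S : ℝ) := by exact_mod_cast he1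
    rw [div_le_div_iff₀ (by linarith) (by linarith)]
    have hle : ((inducedEdgeCount G S : ℕ) : ℝ) ≤ ((s : ℝ) - 1) * ((S.card : ℝ) - 1) := by
      calc ((inducedEdgeCount G S : ℕ) : ℝ) ≤ (((s - 1) * (S.card - 1) : ℕ) : ℝ) := by
            exact_mod_cast he2
        _ = ((s : ℝ) - 1) * ((S.card : ℝ) - 1) := by
            rw [Nat.cast_mul, Nat.cast_sub (by omega), Nat.cast_sub (by omega), Nat.cast_one]
    nlinarith [hle]
  · obtain ⟨K, hK⟩ := hclique
    have hKcard : K.card = s := hK.2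
    have hcnt := ChordalAux.clique_count hK
    have hepos : 1 ≤ inducedEdgeCount G K := by
      obtain ⟨t, rfl⟩ : ∃ t, s = t + 2 := ⟨s - 2, by omega⟩
      have hexp : (t + 2) * (t + 2) = t * t + 4 * t + 4 := by ring
      omega
    refine ⟨K, by omega, ChordalAux.clique_conn hs hK, ?_⟩
    have hsR : (2 : ℝ) ≤ (s : ℝ) := by exact_mod_cast hs
    have heR : (1 : ℝ) ≤ (inducedEdgeCount G K : ℝ) := by exact_mod_cast hepos
    rw [div_le_div_iff₀ (by linarith) (by linarith)]
    have hss : s ≤ s * s := Nat.le_mul_of_pos_left s (by omega)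
    have hcast : ((s * s - s : ℕ) : ℝ) ≤ ((2 * inducedEdgeCount G K : ℕ) : ℝ) := by
      exact_mod_cast hcnt
    rw [Nat.cast_sub hss] at hcast
    push_cast at hcast
    rw [hKcard]
    nlinarith [hcast]
end
end

section
/- Let G be a finite simple connected chordal graph with at least two vertices and let s be the clique number of G. Then there exists S ∈ Co(G) attaining the minimum of (|S'| − 1)/e(G[S']) over all S' ∈ Co(G) such that every vertex of the induced subgraph G[S] has degree at least s/2 in G[S]. -/
open scoped Classical

noncomputable section

section Aux

variable {V : Type*}

/-- Adjacency restricted to a finset. -/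
def FRel (G : SimpleGraph V) (T : Finset V) : V → V → Prop :=
  fun a b => G.Adj a b ∧ a ∈ T ∧ b ∈ T

lemma frel_symm (G : SimpleGraph V) (T : Finset V) : Symmetric (FRel G T) :=
  fun _ _ h => ⟨h.1.symm, h.2.2, h.2.1⟩

/-- Connectivity predicate for the induced subgraph on a finset. -/
def FConn (G : SimpleGraph V) (T : Finset V) : Prop :=
  ∀ a ∈ T, ∀ b ∈ T, Relation.ReflTransGen (FRel G T) a b

lemma induce_connected_iff (G : SimpleGraph V) (T : Finset V) :
    (G.induce (T : Set V)).Connected ↔ T.Nonempty ∧ FConn G T := by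
  constructor
  · intro h
    have hne : T.Nonempty := by
      obtain ⟨⟨x, hx⟩⟩ := h.nonempty
      exact ⟨x, by simpa using hx⟩
    refine ⟨hne, ?_⟩
    intro a ha b hb
    have hr : (G.induce (T : Set V)).Reachable ⟨a, by simpa using ha⟩ ⟨b, by simpa using hb⟩ :=
      h.preconnected _ _
    obtain ⟨w⟩ := hr
    generalize hA : (⟨a, by simpa using ha⟩ : (T : Set V)) = A at w
    generalize hB : (⟨b, by simpa using hb⟩ : (T : Set V)) = B at w
    have : ∀ (x y : (T : Set V)), (G.induce (T : Set V)).Walk x y →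
        Relation.ReflTransGen (FRel G T) x.1 y.1 := by
      intro x y w
      induction w with
      | nil => exact .refl
      | @cons u z _ h p ih =>
        refine .head ⟨h, Finset.mem_coe.mp u.2, Finset.mem_coe.mp z.2⟩ ih
    have := this A B w
    rw [← hA, ← hB] at this
    exact this
  · rintro ⟨⟨x, hx⟩, h⟩
    have key : ∀ (a : V) (ha : a ∈ T) (b : V),
        Relation.ReflTransGen (FRel G T) a b → ∀ hb : b ∈ T,
        (G.induce (T : Set V)).Reachable ⟨a, by simpa using ha⟩ ⟨b, by simpa using hb⟩ := by
      intro a ha b hrel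
      induction hrel with
      | refl => intro hb; rfl
      | @tail c d hcd hstep ih =>
        intro hd
        have hr := ih hstep.2.1
        refine hr.trans (SimpleGraph.Adj.reachable ?_)
        exact hstep.1
    rw [SimpleGraph.connected_iff]
    constructor
    · intro ⟨u, hu⟩ ⟨v, hv⟩
      exact key u (by simpa using hu) v (h u (by simpa using hu) v (by simpa using hv))
        (by simpa using hv)
    · exact ⟨⟨x, by simpa using hx⟩⟩

variable [Fintype V] {G : SimpleGraph V}

lemma iec_singleton_le (S : Finset V) (h : S.card ≤ 1) : inducedEdgeCount G S = 0 := by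
  rw [inducedEdgeCount, Finset.card_eq_zero, Finset.filter_eq_empty_iff]
  intro e he
  induction e with
  | h x y =>
    intro hmem
    have hadj : G.Adj x y := by rwa [SimpleGraph.mem_edgeFinset, SimpleGraph.mem_edgeSet] at he
    have hx : x ∈ S := hmem x (by simp)
    have hy : y ∈ S := hmem y (by simp)
    exact hadj.ne (by
      have := Finset.card_le_one.mp h x hx y hy
      exact this)

lemma iec_pos (S : Finset V) (hcard : 2 ≤ S.card) (hconn : FConn G S) :
    1 ≤ inducedEdgeCount G S := by
  obtain ⟨a, ha, b, hb, hab⟩ := Finset.one_lt_card.mp hcard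
  have hrel := hconn a ha b hb
  have key : b = a ∨ ∃ x y, G.Adj x y ∧ x ∈ S ∧ y ∈ S := by
    induction hrel with
    | refl => exact Or.inl rfl
    | tail _ hstep _ => exact Or.inr ⟨_, _, hstep.1, hstep.2.1, hstep.2.2⟩
  obtain ⟨x, y, hadj, hx, hy⟩ := key.resolve_left (fun h => hab h.symm)
  rw [inducedEdgeCount, Nat.one_le_iff_ne_zero]
  refine Finset.card_ne_zero.mpr ⟨s(x, y), Finset.mem_filter.mpr
    ⟨SimpleGraph.mem_edgeFinset.mpr hadj, ?_⟩⟩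
  intro w hw
  rcases Sym2.mem_iff.mp hw with rfl | rfl <;> assumption

lemma iec_erase (S : Finset V) (v : V) (hv : v ∈ S) :
    inducedEdgeCount G S
      = inducedEdgeCount G (S.erase v) + (S.filter (fun u => G.Adj v u)).card := by
  rw [inducedEdgeCount, ← Finset.card_filter_add_card_filter_not (fun e => v ∉ e)]
  congr 1
  · rw [inducedEdgeCount, Finset.filter_filter]
    congr 1
    ext e
    simp only [Finset.mem_filter, SimpleGraph.mem_edgeFinset, and_congr_right_iff]
    intro he
    constructor
    · rintro ⟨h1, h2⟩ u hu
      exact Finset.mem_erase.mpr ⟨fun h => h2 (h ▸ hu), h1 u hu⟩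
    · intro h
      exact ⟨fun u hu => Finset.mem_of_mem_erase (h u hu),
        fun hve => (Finset.notMem_erase v S) (h v hve)⟩
  · rw [eq_comm]
    apply Finset.card_bij (fun u _ => s(v, u))
    · intro u hu
      simp only [Finset.mem_filter] at hu ⊢
      refine ⟨⟨SimpleGraph.mem_edgeFinset.mpr hu.2, ?_⟩, by simp⟩
      intro w hw
      rcases Sym2.mem_iff.mp hw with rfl | rfl
      · exact hv
      · exact hu.1
    · intro u hu u' hu' h
      exact Sym2.congr_right.mp h
    · intro e he
      simp only [Finset.mem_filter, not_not] at he
      obtain ⟨⟨hef, hesub⟩, hve⟩ := he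
      induction e with
      | h x y =>
        have hadj : G.Adj x y := by rwa [SimpleGraph.mem_edgeFinset, SimpleGraph.mem_edgeSet] at hef
        rcases Sym2.mem_iff.mp hve with rfl | rfl
        · exact ⟨y, Finset.mem_filter.mpr ⟨hesub y (by simp), hadj⟩, rfl⟩
        · exact ⟨x, Finset.mem_filter.mpr ⟨hesub x (by simp), hadj.symm⟩, Sym2.eq_swap⟩

lemma iec_clique {s : ℕ} (K : Finset V) (hK : G.IsNClique s K) :
    s * (s - 1) ≤ 2 * inducedEdgeCount G K := by
  have himg : K.offDiag.image (fun p => s(p.1, p.2))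
      ⊆ G.edgeFinset.filter (fun e => ∀ v ∈ e, v ∈ K) := by
    intro e he
    obtain ⟨⟨x, y⟩, hxy, rfl⟩ := Finset.mem_image.mp he
    obtain ⟨hx, hy, hne⟩ := Finset.mem_offDiag.mp hxy
    have hadj : G.Adj x y := hK.1 hx hy hne
    refine Finset.mem_filter.mpr ⟨SimpleGraph.mem_edgeFinset.mpr hadj, ?_⟩
    intro w hw
    rcases Sym2.mem_iff.mp hw with rfl | rfl <;> assumption
  have hcard : K.offDiag.card ≤ 2 * (K.offDiag.image (fun p => s(p.1, p.2))).card := by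
    apply Finset.card_le_mul_card_image
    intro b hb
    obtain ⟨⟨x, y⟩, hxy, rfl⟩ := Finset.mem_image.mp hb
    have hsub : (K.offDiag.filter (fun a => s(a.1, a.2) = s(x, y))) ⊆ {(x, y), (y, x)} := by
      intro ⟨u, w⟩ huw
      obtain ⟨-, heq⟩ := Finset.mem_filter.mp huw
      rcases Sym2.eq_iff.mp heq with ⟨rfl, rfl⟩ | ⟨rfl, rfl⟩ <;> simp
    calc (K.offDiag.filter (fun a => s(a.1, a.2) = s(x, y))).card
        ≤ ({(x, y), (y, x)} : Finset (V × V)).card := Finset.card_le_card hsub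
      _ ≤ 2 := Finset.card_insert_le _ _ |>.trans (by simp)
  calc s * (s - 1) = K.card * K.card - K.card := by
        rw [hK.2]; cases s with
        | zero => simp
        | succ n => simp [Nat.succ_sub_one]; ring_nf; omega
    _ = K.offDiag.card := (Finset.offDiag_card K).symm
    _ ≤ 2 * (K.offDiag.image (fun p => s(p.1, p.2))).card := hcard
    _ ≤ 2 * inducedEdgeCount G K := by
        exact Nat.mul_le_mul_left 2 (Finset.card_le_card himg)

lemma split_lemma (S : Finset V) (hconn : FConn G S) (v : V) (hv : v ∈ S)
    (hnc : ¬ FConn G (S.erase v)) :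
    ∃ S₁ S₂ : Finset V, 2 ≤ S₁.card ∧ 2 ≤ S₂.card ∧
      S₁.card < S.card ∧ S₂.card < S.card ∧
      FConn G S₁ ∧ FConn G S₂ ∧
      S₁.card + S₂.card = S.card + 1 ∧
      inducedEdgeCount G S₁ + inducedEdgeCount G S₂ = inducedEdgeCount G S := by
  set S' := S.erase v with hS'
  rw [FConn] at hnc
  push_neg at hnc
  obtain ⟨a, ha, b, hb, hnab⟩ := hnc
  set C := S'.filter (fun u => Relation.ReflTransGen (FRel G S') a u) with hC
  have haC : a ∈ C := Finset.mem_filter.mpr ⟨ha, .refl⟩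
  have hbC : b ∉ C := fun h => hnab (Finset.mem_filter.mp h).2
  have hCS' : C ⊆ S' := Finset.filter_subset _ _
  have hvS' : v ∉ S' := Finset.notMem_erase v S
  have hvC : v ∉ C := fun h => hvS' (hCS' h)
  have haS : a ∈ S := Finset.mem_of_mem_erase ha
  have hbS : b ∈ S := Finset.mem_of_mem_erase hb
  have hclose : ∀ u ∈ C, ∀ w ∈ S', G.Adj u w → w ∈ C := by
    intro u hu w hw hadj
    obtain ⟨huS', hrel⟩ := Finset.mem_filter.mp hu
    exact Finset.mem_filter.mpr ⟨hw, hrel.tail ⟨hadj, huS', hw⟩⟩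
  set S₁ := insert v C with hS₁
  set S₂ := S \ C with hS₂
  have hv2 : v ∈ S₂ := Finset.mem_sdiff.mpr ⟨hv, hvC⟩
  have hCS : C ⊆ S := hCS'.trans (Finset.erase_subset v S)
  have hS1S : S₁ ⊆ S := Finset.insert_subset hv hCS
  have hS2S : S₂ ⊆ S := Finset.sdiff_subset
  have hvadj : ∃ u ∈ C, G.Adj v u := by
    by_contra hno
    push_neg at hno
    have key : ∀ x, Relation.ReflTransGen (FRel G S) a x → x ∈ C := by
      intro x hx
      induction hx with
      | refl => exact haC
      | @tail c d _ hstep ih =>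
        by_cases hdv : d = v
        · exact absurd (hdv ▸ hstep.1.symm) (hno c ih)
        · exact hclose c ih d (Finset.mem_erase.mpr ⟨hdv, hstep.2.2⟩) hstep.1
    exact hbC (key b (hconn a haS b hbS))
  have hlift : ∀ x, Relation.ReflTransGen (FRel G S') a x →
      Relation.ReflTransGen (FRel G S₁) a x := by
    intro x hx
    induction hx with
    | refl => exact .refl
    | @tail c d hpre hstep ih =>
      have hcC : c ∈ C := Finset.mem_filter.mpr ⟨hstep.2.1, hpre⟩
      have hdC : d ∈ C := hclose c hcC d hstep.2.2 hstep.1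
      exact ih.tail ⟨hstep.1, Finset.mem_insert_of_mem hcC, Finset.mem_insert_of_mem hdC⟩
  have hconn1 : FConn G S₁ := by
    have hto : ∀ x ∈ S₁, Relation.ReflTransGen (FRel G S₁) a x := by
      intro x hx
      rcases Finset.mem_insert.mp hx with rfl | hxC
      · obtain ⟨u, huC, hadj⟩ := hvadj
        exact (hlift u (Finset.mem_filter.mp huC).2).tail
          ⟨hadj.symm, Finset.mem_insert_of_mem huC, Finset.mem_insert_self _ _⟩
      · exact hlift x (Finset.mem_filter.mp hxC).2
    intro x hx y hy
    haveI : Std.Symm (FRel G S₁) := ⟨fun _ _ h => frel_symm G S₁ h⟩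
    exact (symm (hto x hx)).trans (hto y hy)
  have hconn2 : FConn G S₂ := by
    have key : ∀ x, Relation.ReflTransGen (FRel G S) v x → x ∈ S₂ →
        Relation.ReflTransGen (FRel G S₂) v x := by
      intro x hx
      induction hx with
      | refl => exact fun _ => .refl
      | @tail c d _ hstep ih =>
        intro hd2
        by_cases hdv : d = v
        · subst hdv; exact .refl
        · have hdS' : d ∈ S' := Finset.mem_erase.mpr ⟨hdv, hstep.2.2⟩
          have hdC : d ∉ C := (Finset.mem_sdiff.mp hd2).2
          by_cases hcv : c = v
          · subst hcv; exact Relation.ReflTransGen.single ⟨hstep.1, hv2, hd2⟩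
          · have hcS' : c ∈ S' := Finset.mem_erase.mpr ⟨hcv, hstep.2.1⟩
            have hcC : c ∉ C := fun h => hdC (hclose c h d hdS' hstep.1)
            have hc2 : c ∈ S₂ := Finset.mem_sdiff.mpr ⟨hstep.2.1, hcC⟩
            exact (ih hc2).tail ⟨hstep.1, hc2, hd2⟩
    have hto : ∀ x ∈ S₂, Relation.ReflTransGen (FRel G S₂) v x := by
      intro x hx
      exact key x (hconn v hv x (hS2S hx)) hx
    intro x hx y hy
    haveI : Std.Symm (FRel G S₂) := ⟨fun _ _ h => frel_symm G S₂ h⟩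
    exact (symm (hto x hx)).trans (hto y hy)
  have hbv : b ≠ v := Finset.ne_of_mem_erase hb
  have hav : a ≠ v := Finset.ne_of_mem_erase ha
  have hb2 : b ∈ S₂ := Finset.mem_sdiff.mpr ⟨hbS, hbC⟩
  have hbS1 : b ∉ S₁ := by
    intro h
    rcases Finset.mem_insert.mp h with h | h
    · exact hbv h
    · exact hbC h
  have haS1 : a ∈ S₁ := Finset.mem_insert_of_mem haC
  have haS2 : a ∉ S₂ := fun h => (Finset.mem_sdiff.mp h).2 haC
  refine ⟨S₁, S₂, ?_, ?_, ?_, ?_, hconn1, hconn2, ?_, ?_⟩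
  · exact Finset.one_lt_card.mpr ⟨v, Finset.mem_insert_self _ _, a, haS1, fun h => hav h.symm⟩
  · exact Finset.one_lt_card.mpr ⟨v, hv2, b, hb2, fun h => hbv h.symm⟩
  · exact Finset.card_lt_card ((Finset.ssubset_iff_of_subset hS1S).mpr ⟨b, hbS, hbS1⟩)
  · exact Finset.card_lt_card ((Finset.ssubset_iff_of_subset hS2S).mpr ⟨a, haS, haS2⟩)
  · have h1 : S₁.card = C.card + 1 := Finset.card_insert_of_notMem hvC
    have h2 : S₂.card = S.card - C.card := Finset.card_sdiff_of_subset hCS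
    have h3 : C.card ≤ S.card := Finset.card_le_card hCS
    omega
  · have hdisj : Disjoint (G.edgeFinset.filter (fun e => ∀ u ∈ e, u ∈ S₁))
        (G.edgeFinset.filter (fun e => ∀ u ∈ e, u ∈ S₂)) := by
      rw [Finset.disjoint_left]
      intro e he1 he2
      obtain ⟨hef, hm1⟩ := Finset.mem_filter.mp he1
      obtain ⟨-, hm2⟩ := Finset.mem_filter.mp he2
      induction e with
      | h x y =>
        have hadj : G.Adj x y := by rwa [SimpleGraph.mem_edgeFinset, SimpleGraph.mem_edgeSet] at hef
        have hxv : x = v := by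
          rcases Finset.mem_insert.mp (hm1 x (by simp)) with h | h
          · exact h
          · exact absurd h (Finset.mem_sdiff.mp (hm2 x (by simp))).2
        have hyv : y = v := by
          rcases Finset.mem_insert.mp (hm1 y (by simp)) with h | h
          · exact h
          · exact absurd h (Finset.mem_sdiff.mp (hm2 y (by simp))).2
        exact hadj.ne (hxv.trans hyv.symm)
    have hunion : (G.edgeFinset.filter (fun e => ∀ u ∈ e, u ∈ S₁))
        ∪ (G.edgeFinset.filter (fun e => ∀ u ∈ e, u ∈ S₂))
        = G.edgeFinset.filter (fun e => ∀ u ∈ e, u ∈ S) := by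
      ext e
      simp only [Finset.mem_union, Finset.mem_filter]
      constructor
      · rintro (⟨hef, hm⟩ | ⟨hef, hm⟩)
        · exact ⟨hef, fun u hu => hS1S (hm u hu)⟩
        · exact ⟨hef, fun u hu => hS2S (hm u hu)⟩
      · rintro ⟨hef, hm⟩
        induction e with
        | h x y =>
          have hadj : G.Adj x y := by
            rwa [SimpleGraph.mem_edgeFinset, SimpleGraph.mem_edgeSet] at hef
          have hxS : x ∈ S := hm x (by simp)
          have hyS : y ∈ S := hm y (by simp)
          have main : ∀ x y : V, G.Adj x y → x ∈ S → y ∈ S →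
              (x ∈ S₁ ∧ y ∈ S₁) ∨ (x ∈ S₂ ∧ y ∈ S₂) := by
            intro x y hadj hxS hyS
            by_cases hxv : x = v
            · subst hxv
              by_cases hyC : y ∈ C
              · exact Or.inl ⟨Finset.mem_insert_self _ _, Finset.mem_insert_of_mem hyC⟩
              · exact Or.inr ⟨hv2, Finset.mem_sdiff.mpr ⟨hyS, hyC⟩⟩
            by_cases hyv : y = v
            · subst hyv
              by_cases hxC : x ∈ C
              · exact Or.inl ⟨Finset.mem_insert_of_mem hxC, Finset.mem_insert_self _ _⟩
              · exact Or.inr ⟨Finset.mem_sdiff.mpr ⟨hxS, hxC⟩, hv2⟩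
            have hxS' : x ∈ S' := Finset.mem_erase.mpr ⟨hxv, hxS⟩
            have hyS' : y ∈ S' := Finset.mem_erase.mpr ⟨hyv, hyS⟩
            by_cases hxC : x ∈ C
            · exact Or.inl ⟨Finset.mem_insert_of_mem hxC,
                Finset.mem_insert_of_mem (hclose x hxC y hyS' hadj)⟩
            · have hyC : y ∉ C := fun h => hxC (hclose y h x hxS' hadj.symm)
              exact Or.inr ⟨Finset.mem_sdiff.mpr ⟨hxS, hxC⟩, Finset.mem_sdiff.mpr ⟨hyS, hyC⟩⟩
          rcases main x y hadj hxS hyS with ⟨h1, h2⟩ | ⟨h1, h2⟩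
          · refine Or.inl ⟨hef, fun u hu => ?_⟩
            rcases Sym2.mem_iff.mp hu with rfl | rfl <;> assumption
          · refine Or.inr ⟨hef, fun u hu => ?_⟩
            rcases Sym2.mem_iff.mp hu with rfl | rfl <;> assumption
    show (G.edgeFinset.filter (fun e => ∀ u ∈ e, u ∈ S₁)).card
        + (G.edgeFinset.filter (fun e => ∀ u ∈ e, u ∈ S₂)).card
        = (G.edgeFinset.filter (fun e => ∀ u ∈ e, u ∈ S)).card
    rw [← hunion, Finset.card_union_of_disjoint hdisj]

lemma mediant {a b c d : ℝ} (hc : 0 < c) (hd : 0 < d) :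
    a / c ≤ (a + b) / (c + d) ∨ b / d ≤ (a + b) / (c + d) := by
  rcases le_total (a * d) (b * c) with h | h
  · left; rw [div_le_div_iff₀ hc (by linarith)]; nlinarith
  · right; rw [div_le_div_iff₀ hd (by linarith)]; nlinarith

end Aux

/-- For a connected chordal graph `G` with at least two vertices and clique number `s`,
some `S ∈ Co(G)` attaining the minimum of `(|S'| - 1)/e(G[S'])` over `S' ∈ Co(G)`
has all degrees in the induced subgraph `G[S]` at least `s/2`. -/
theorem chordal_min_degree {V : Type*} [Fintype V] (G : SimpleGraph V)
    (hG : G.Connected) (hV : 2 ≤ Fintype.card V)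
    (hch : IsChordal G) (s : ℕ)
    (hclique : ∃ K : Finset V, G.IsNClique s K) (hfree : G.CliqueFree (s + 1)) :
    ∃ S : Finset V, 2 ≤ S.card ∧ (G.induce (S : Set V)).Connected ∧
      (∀ S' : Finset V, 2 ≤ S'.card → (G.induce (S' : Set V)).Connected →
        ((S.card : ℝ) - 1) / (inducedEdgeCount G S : ℝ) ≤
          ((S'.card : ℝ) - 1) / (inducedEdgeCount G S' : ℝ)) ∧
      (∀ v ∈ S, (s : ℝ) / 2 ≤ ((S.filter (fun u => G.Adj v u)).card : ℝ)) := by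
  classical
  obtain ⟨K, hK⟩ := hclique
  -- G has an edge, hence 2 ≤ s
  obtain ⟨x, y, hxy⟩ := Fintype.exists_pair_of_one_lt_card (by omega : 1 < Fintype.card V)
  obtain ⟨w⟩ := hG.preconnected x y
  have hedge : ∃ x y : V, G.Adj x y := by
    cases w with
    | nil => exact absurd rfl hxy
    | cons h _ => exact ⟨_, _, h⟩
  obtain ⟨x₀, y₀, hadj₀⟩ := hedge
  have hs2 : 2 ≤ s := by
    by_contra hlt
    push_neg at hlt
    have hcf : G.CliqueFree 2 := hfree.mono (by omega)
    refine hcf {x₀, y₀} ?_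
    rw [SimpleGraph.isNClique_iff]
    constructor
    · intro u hu v hv hne
      simp only [Finset.coe_insert, Set.mem_insert_iff, Finset.coe_singleton,
        Set.mem_singleton_iff] at hu hv
      rcases hu with rfl | rfl <;> rcases hv with rfl | rfl
      · exact absurd rfl hne
      · exact hadj₀
      · exact hadj₀.symm
      · exact absurd rfl hne
    · rw [Finset.card_insert_of_notMem (by simp [hadj₀.ne]), Finset.card_singleton]
  have hs0 : 0 < s := by omega
  -- the clique is a candidate
  have hKcard : 2 ≤ K.card := hK.2 ▸ hs2
  have hKconn : FConn G K := by
    intro a ha b hb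
    by_cases hab : a = b
    · exact hab ▸ .refl
    · exact Relation.ReflTransGen.single ⟨hK.1 ha hb hab, ha, hb⟩
  set f : Finset V → ℝ := fun T => ((T.card : ℝ) - 1) / (inducedEdgeCount G T : ℝ) with hf
  set cand : Finset (Finset V) := Finset.univ.filter (fun T => 2 ≤ T.card ∧ FConn G T)
    with hcand
  have hKmem : K ∈ cand := Finset.mem_filter.mpr ⟨Finset.mem_univ _, hKcard, hKconn⟩
  obtain ⟨M, hM, hMmin⟩ := Finset.exists_min_image cand f ⟨K, hKmem⟩
  obtain ⟨S, hSmem, hSmincard⟩ :=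
    Finset.exists_min_image (cand.filter (fun T => f T ≤ f M)) Finset.card
      ⟨M, Finset.mem_filter.mpr ⟨hM, le_refl _⟩⟩
  obtain ⟨hScand, hSfM⟩ := Finset.mem_filter.mp hSmem
  obtain ⟨-, hScard, hSconn⟩ := Finset.mem_filter.mp hScand
  have hSmin : ∀ T ∈ cand, f S ≤ f T := fun T hT => hSfM.trans (hMmin T hT)
  -- basic quantities
  have heS : 1 ≤ inducedEdgeCount G S := iec_pos S hScard hSconn
  have heSpos : (0 : ℝ) < (inducedEdgeCount G S : ℝ) := by exact_mod_cast heS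
  have heK : 1 ≤ inducedEdgeCount G K := by
    have h1 := iec_clique K hK
    have h2 : 2 * 1 ≤ s * (s - 1) := Nat.mul_le_mul hs2 (by omega)
    omega
  have heKpos : (0 : ℝ) < (inducedEdgeCount G K : ℝ) := by exact_mod_cast heK
  -- ratio of the minimiser is at most 2/s
  have hratio : f S ≤ 2 / (s : ℝ) := by
    have h1 : f S ≤ f K := hSmin K hKmem
    have h2 : f K ≤ 2 / (s : ℝ) := by
      rw [hf]
      simp only [hK.2]
      rw [div_le_div_iff₀ heKpos (by exact_mod_cast hs0)]
      have := iec_clique K hK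
      have hcast : ((s * (s - 1) : ℕ) : ℝ) ≤ ((2 * inducedEdgeCount G K : ℕ) : ℝ) := by
        exact_mod_cast this
      push_cast [Nat.cast_sub (by omega : 1 ≤ s)] at hcast
      nlinarith [hcast]
    exact h1.trans h2
  have hkey : (s : ℝ) * ((S.card : ℝ) - 1) ≤ 2 * (inducedEdgeCount G S : ℝ) := by
    rw [hf, div_le_div_iff₀ heSpos (by exact_mod_cast hs0)] at hratio
    nlinarith [hratio]
  refine ⟨S, hScard, (induce_connected_iff G S).mpr
    ⟨Finset.card_pos.mp (by omega), hSconn⟩, ?_, ?_⟩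
  · intro S' h2 hconn'
    have : S' ∈ cand := Finset.mem_filter.mpr
      ⟨Finset.mem_univ _, h2, ((induce_connected_iff G S').mp hconn').2⟩
    exact hSmin S' this
  · intro v hv
    set d : ℕ := (S.filter (fun u => G.Adj v u)).card with hd
    have herase := iec_erase (G := G) S v hv
    rw [show (S.filter (fun u => G.Adj v u)).card = d from rfl] at herase
    -- it suffices to show s ≤ 2 * d
    suffices h : (s : ℝ) ≤ 2 * (d : ℝ) by linarith
    by_cases hn2 : S.card = 2
    · -- two-element case
      have hzero : inducedEdgeCount G (S.erase v) = 0 :=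
        iec_singleton_le _ (by rw [Finset.card_erase_of_mem hv]; omega)
      have hed : inducedEdgeCount G S = d := by omega
      have : ((S.card : ℝ) - 1) = 1 := by rw [hn2]; norm_num
      rw [this, hed] at hkey
      push_cast at hkey ⊢
      linarith
    · have hn3 : 3 ≤ S.card := by omega
      -- erased set remains connected, else split contradicts minimal cardinality
      have hS'conn : FConn G (S.erase v) := by
        by_contra hnc
        obtain ⟨S₁, S₂, h21, h22, hlt1, hlt2, hc1, hc2, hsum, hesum⟩ :=
          split_lemma S hSconn v hv hnc
        have he1 : 1 ≤ inducedEdgeCount G S₁ := iec_pos S₁ h21 hc1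
        have he2 : 1 ≤ inducedEdgeCount G S₂ := iec_pos S₂ h22 hc2
        have he1' : (0 : ℝ) < (inducedEdgeCount G S₁ : ℝ) := by exact_mod_cast he1
        have he2' : (0 : ℝ) < (inducedEdgeCount G S₂ : ℝ) := by exact_mod_cast he2
        have hnum : ((S.card : ℝ) - 1)
            = ((S₁.card : ℝ) - 1) + ((S₂.card : ℝ) - 1) := by
          have : (S₁.card : ℝ) + (S₂.card : ℝ) = (S.card : ℝ) + 1 := by exact_mod_cast hsum
          linarith
        have hden : (inducedEdgeCount G S : ℝ)
            = (inducedEdgeCount G S₁ : ℝ) + (inducedEdgeCount G S₂ : ℝ) := by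
          exact_mod_cast hesum.symm
        have hmed := mediant (a := (S₁.card : ℝ) - 1) (b := (S₂.card : ℝ) - 1) he1' he2'
        have hfS : f S = (((S₁.card : ℝ) - 1) + ((S₂.card : ℝ) - 1))
            / ((inducedEdgeCount G S₁ : ℝ) + (inducedEdgeCount G S₂ : ℝ)) := by
          simp only [hf]
          rw [hnum, hden]
        rcases hmed with h | h
        · have hmem1 : S₁ ∈ cand := Finset.mem_filter.mpr ⟨Finset.mem_univ _, h21, hc1⟩
          have : f S₁ ≤ f M := by
            have hh : f S₁ ≤ f S := by rw [hfS]; exact h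
            exact hh.trans hSfM
          have := hSmincard S₁ (Finset.mem_filter.mpr ⟨hmem1, this⟩)
          omega
        · have hmem2 : S₂ ∈ cand := Finset.mem_filter.mpr ⟨Finset.mem_univ _, h22, hc2⟩
          have : f S₂ ≤ f M := by
            have hh : f S₂ ≤ f S := by rw [hfS]; exact h
            exact hh.trans hSfM
          have := hSmincard S₂ (Finset.mem_filter.mpr ⟨hmem2, this⟩)
          omega
      -- compare with the erased set
      have hS'card : 2 ≤ (S.erase v).card := by
        rw [Finset.card_erase_of_mem hv]; omega
      have hS'mem : S.erase v ∈ cand :=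
        Finset.mem_filter.mpr ⟨Finset.mem_univ _, hS'card, hS'conn⟩
      have hcmp : f S ≤ f (S.erase v) := hSmin _ hS'mem
      have he' : 1 ≤ inducedEdgeCount G (S.erase v) := iec_pos _ hS'card hS'conn
      have he'pos : (0 : ℝ) < (inducedEdgeCount G (S.erase v) : ℝ) := by exact_mod_cast he'
      have hn3' : (3 : ℝ) ≤ (S.card : ℝ) := by exact_mod_cast hn3
      have hnum' : ((S.erase v).card : ℝ) - 1 = (S.card : ℝ) - 2 := by
        rw [Finset.card_erase_of_mem hv]
        push_cast [Nat.cast_sub (by omega : 1 ≤ S.card)]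
        ring
      simp only [hf] at hcmp
      rw [hnum', div_le_div_iff₀ heSpos he'pos] at hcmp
      -- hcmp : (n - 1) * e' ≤ (n - 2) * e
      have hesplit : (inducedEdgeCount G S : ℝ)
          = (inducedEdgeCount G (S.erase v) : ℝ) + (d : ℝ) := by exact_mod_cast herase
      have hed : (inducedEdgeCount G S : ℝ) ≤ ((S.card : ℝ) - 1) * (d : ℝ) := by
        nlinarith [hcmp, hesplit]
      have hn1 : (0 : ℝ) < (S.card : ℝ) - 1 := by linarith
      nlinarith [hkey, hed, hn1]
end
end
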